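/- arXiv:2505.05200 — 10 statements merged into one kernel-verified Lean document; each statement's English description precedes it below -/
import Mathlib

section
/- Let G be a weighted graph and let G̃ be any split graph of G. Then G is exact if and only if G̃ is exact. -/
open Matrix Finset

/-- The Laplacian matrix of a weighted graph given by a weight function `w`. -/
noncomputable def lapW {V : Type*} [Fintype V] [DecidableEq V] (w : V → V → ℝ) :
    Matrix V V ℝ :=
  Matrix.of fun i j => if i = j then ∑ k, w i k else -w i j

/-- `w` is a valid weight function: symmetric, zero diagonal, nonnegative. -/
def IsWeight {V : Type*} [Fintype V] (w : V → V → ℝ) : Prop :=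
  (∀ i j, w i j = w j i) ∧ (∀ i, w i i = 0) ∧ ∀ i j, 0 ≤ w i j

/-- The maximum-cut value `MC(G)`. -/
noncomputable def maxCutVal {V : Type*} [Fintype V] [DecidableEq V] (w : V → V → ℝ) : ℝ :=
  sSup {c | ∃ x : V → ℝ, (∀ i, x i = 1 ∨ x i = -1) ∧
    c = (1 / 4) * (x ⬝ᵥ (lapW w).mulVec x)}

/-- The Max-Cut SDP value `φ(G)`. -/
noncomputable def sdpVal {V : Type*} [Fintype V] [DecidableEq V] (w : V → V → ℝ) : ℝ :=
  sSup {c | ∃ X : Matrix V V ℝ, X.PosSemidef ∧ (∀ i, X i i = 1) ∧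
    c = (1 / 4) * (lapW w * X).trace}

/-- `X` is an optimal solution of the Max-Cut SDP for the weighted graph `w`. -/
def IsOptSol {V : Type*} [Fintype V] [DecidableEq V] (w : V → V → ℝ)
    (X : Matrix V V ℝ) : Prop :=
  X.PosSemidef ∧ (∀ i, X i i = 1) ∧ (1 / 4) * (lapW w * X).trace = sdpVal w

/-- The Max-Cut SDP relaxation is exact: `φ(G) = MC(G)`. -/
def IsExact {V : Type*} [Fintype V] [DecidableEq V] (w : V → V → ℝ) : Prop :=
  sdpVal w = maxCutVal w

/-- The split graph of a weighted graph `w` on `Fin n`, where vertex `i` is replaced by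
`p i` copies; copies of `i` and `j` (for `i ≠ j`) are joined by edges of weight
`w i j / (p i * p j)`, and copies of the same vertex are non-adjacent. -/
noncomputable def splitW {n : ℕ} (w : Fin n → Fin n → ℝ) (p : Fin n → ℕ) :
    (Σ i : Fin n, Fin (p i)) → (Σ i : Fin n, Fin (p i)) → ℝ :=
  fun a b => if a.1 = b.1 then 0 else w a.1 b.1 / ((p a.1 : ℝ) * (p b.1 : ℝ))

/-! ### Auxiliary definitions and lemmas -/

set_option linter.unusedSectionVars false

/-- Total weight of a weighted graph. -/
noncomputable def Wt {V : Type*} [Fintype V] (w : V → V → ℝ) : ℝ := ∑ i, ∑ j, w i j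

/-- The quadratic form `∑ᵢⱼ wᵢⱼ sᵢ sⱼ`. -/
noncomputable def Qf {V : Type*} [Fintype V] (w : V → V → ℝ) (s : V → ℝ) : ℝ :=
  ∑ i, ∑ j, w i j * s i * s j

lemma sigma_sum {ι : Type*} [Fintype ι] {κ : ι → Type*} [∀ i, Fintype (κ i)]
    (f : (Σ i, κ i) → ℝ) : ∑ a, f a = ∑ i, ∑ α, f ⟨i, α⟩ := by
  rw [← Finset.univ_sigma_univ, Finset.sum_sigma]

section Aux
variable {V : Type*} [Fintype V] [DecidableEq V]

lemma trace_expand (A B : Matrix V V ℝ) : (A * B).trace = ∑ i, ∑ j, A i j * B j i := by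
  simp [Matrix.trace, Matrix.diag, Matrix.mul_apply]

lemma trace_lapW (w : V → V → ℝ) (h0 : ∀ i, w i i = 0) (X : Matrix V V ℝ)
    (hd : ∀ i, X i i = 1) :
    (lapW w * X).trace = Wt w - ∑ i, ∑ j, w i j * X j i := by
  rw [trace_expand]
  have key : ∀ i, ∑ j, lapW w i j * X j i = (∑ j, w i j) - ∑ j, w i j * X j i := by
    intro i
    rw [← Finset.add_sum_erase _ (fun j => lapW w i j * X j i) (Finset.mem_univ i)]
    have h1 : lapW w i i * X i i = ∑ k, w i k := by simp [lapW, hd i]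
    have h2 : ∑ j ∈ univ.erase i, lapW w i j * X j i
        = -(∑ j ∈ univ.erase i, w i j * X j i) := by
      rw [← Finset.sum_neg_distrib]
      refine Finset.sum_congr rfl fun j hj => ?_
      have hji : i ≠ j := fun h => (Finset.mem_erase.mp hj).1 h.symm
      simp [lapW, hji]
    have h3 : ∑ j ∈ univ.erase i, w i j * X j i = ∑ j, w i j * X j i :=
      Finset.sum_erase _ (by simp [h0 i])
    rw [h1, h2, h3]; ring
  rw [Finset.sum_congr rfl fun i _ => key i, Finset.sum_sub_distrib, Wt]

lemma dot_lapW (w : V → V → ℝ) (h0 : ∀ i, w i i = 0) (x : V → ℝ)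
    (hx : ∀ i, x i = 1 ∨ x i = -1) :
    x ⬝ᵥ (lapW w).mulVec x = Wt w - Qf w x := by
  have hd : ∀ i, (Matrix.vecMulVec x x) i i = 1 := by
    intro i; rcases hx i with h | h <;> simp [Matrix.vecMulVec, h]
  have h := trace_lapW w h0 (Matrix.vecMulVec x x) hd
  rw [trace_expand] at h
  have e1 : x ⬝ᵥ (lapW w).mulVec x = ∑ i, ∑ j, lapW w i j * (Matrix.vecMulVec x x) j i := by
    simp only [dotProduct, Matrix.mulVec, dotProduct, Finset.mul_sum, Matrix.vecMulVec_apply]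
    exact Finset.sum_congr rfl fun i _ => Finset.sum_congr rfl fun j _ => by ring
  have e2 : ∑ i, ∑ j, w i j * (Matrix.vecMulVec x x) j i = Qf w x := by
    refine Finset.sum_congr rfl fun i _ => Finset.sum_congr rfl fun j _ => ?_
    simp [Matrix.vecMulVec_apply]; ring
  rw [e1, h, e2]

lemma psd_entry (X : Matrix V V ℝ) (hX : X.PosSemidef) (hd : ∀ i, X i i = 1)
    (a b : V) : |X a b| ≤ 1 := by
  rcases eq_or_ne a b with rfl | hab
  · simp [hd a]
  have hsymm : X b a = X a b := by
    have := hX.1.apply a b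
    simpa using this
  have key : ∀ c : ℝ, 0 ≤ 1 + c ^ 2 + 2 * c * X a b := by
    intro c
    have h := hX.dotProduct_mulVec_nonneg ((Pi.single a 1 : V → ℝ) + c • (Pi.single b 1 : V → ℝ))
    simp only [star_trivial, Matrix.mulVec_add, Matrix.mulVec_smul, Matrix.mulVec_single,
      add_dotProduct, smul_dotProduct, single_dotProduct, Pi.add_apply, Pi.smul_apply,
      smul_eq_mul, mul_one] at h
    have h2 : (0:ℝ) ≤ X a a + c * X a b + c * (X b a + c * X b b) := by
      convert h using 1
      · rfl
      · simp [Matrix.col]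
    rw [hd a, hd b, hsymm] at h2
    nlinarith [h2]
  have k1 := key 1
  have k2 := key (-1)
  rw [abs_le]; constructor <;> nlinarith

lemma pair_lower (w : V → V → ℝ) (hnn : ∀ i j, 0 ≤ w i j) (t : V → V → ℝ)
    (ht : ∀ i j, |t i j| ≤ 1) :
    -(Wt w) ≤ ∑ i, ∑ j, w i j * t i j := by
  have h : -(Wt w) = ∑ i, ∑ j, -(w i j) := by simp [Wt]
  rw [h]
  refine Finset.sum_le_sum fun i _ => Finset.sum_le_sum fun j _ => ?_
  have h2 := abs_le.mp (ht i j)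
  nlinarith [hnn i j, h2.1, h2.2]

lemma mc_bdd (w : V → V → ℝ) (h0 : ∀ i, w i i = 0) (hnn : ∀ i j, 0 ≤ w i j) :
    BddAbove {c | ∃ x : V → ℝ, (∀ i, x i = 1 ∨ x i = -1) ∧
      c = (1 / 4) * (x ⬝ᵥ (lapW w).mulVec x)} := by
  refine ⟨Wt w / 2, ?_⟩
  rintro c ⟨x, hx, rfl⟩
  rw [dot_lapW w h0 x hx]
  have habs : ∀ i j, |x i * x j| ≤ 1 := by
    intro i j
    rcases hx i with h | h <;> rcases hx j with h' | h' <;> simp [h, h']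
  have h := pair_lower w hnn (fun i j => x i * x j) habs
  have hQ : Qf w x = ∑ i, ∑ j, w i j * (x i * x j) := by
    simp [Qf, mul_assoc]
  linarith [hQ.ge, hQ.le]

lemma sdp_bdd (w : V → V → ℝ) (h0 : ∀ i, w i i = 0) (hnn : ∀ i j, 0 ≤ w i j) :
    BddAbove {c | ∃ X : Matrix V V ℝ, X.PosSemidef ∧ (∀ i, X i i = 1) ∧
      c = (1 / 4) * (lapW w * X).trace} := by
  refine ⟨Wt w / 2, ?_⟩
  rintro c ⟨X, hX, hd, rfl⟩
  rw [trace_lapW w h0 X hd]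
  have h := pair_lower w hnn (fun i j => X j i) (fun i j => psd_entry X hX hd j i)
  linarith

lemma Q_update (w : V → V → ℝ) (hsym : ∀ i j, w i j = w j i) (h0 : ∀ i, w i i = 0)
    (s : V → ℝ) (k : V) (c : ℝ) :
    Qf w (Function.update s k c) =
      Qf w s + 2 * (c - s k) * ∑ j ∈ univ.erase k, w k j * s j := by
  have hQ : ∀ t : V → ℝ, (∀ i, i ≠ k → t i = s i) →
      Qf w t = 2 * t k * (∑ j ∈ univ.erase k, w k j * s j)
        + ∑ i ∈ univ.erase k, ∑ j ∈ univ.erase k, w i j * s i * s j := by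
    intro t ht
    rw [Qf, ← Finset.add_sum_erase _ _ (Finset.mem_univ k)]
    have h1 : ∑ j, w k j * t k * t j
        = w k k * t k * t k + ∑ j ∈ univ.erase k, w k j * t k * t j :=
      (Finset.add_sum_erase _ _ (Finset.mem_univ k)).symm
    have h2 : ∀ i ∈ univ.erase k, ∑ j, w i j * t i * t j
        = w i k * t i * t k + ∑ j ∈ univ.erase k, w i j * t i * t j :=
      fun i _ => (Finset.add_sum_erase _ _ (Finset.mem_univ k)).symm
    rw [h1, Finset.sum_congr rfl h2, Finset.sum_add_distrib]
    have e1 : ∑ j ∈ univ.erase k, w k j * t k * t j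
        = t k * ∑ j ∈ univ.erase k, w k j * s j := by
      rw [Finset.mul_sum]
      refine Finset.sum_congr rfl fun j hj => ?_
      rw [ht j (Finset.ne_of_mem_erase hj)]; ring
    have e2 : ∑ i ∈ univ.erase k, w i k * t i * t k
        = t k * ∑ j ∈ univ.erase k, w k j * s j := by
      rw [Finset.mul_sum]
      refine Finset.sum_congr rfl fun j hj => ?_
      rw [ht j (Finset.ne_of_mem_erase hj), hsym j k]; ring
    have e3 : ∑ i ∈ univ.erase k, ∑ j ∈ univ.erase k, w i j * t i * t j
        = ∑ i ∈ univ.erase k, ∑ j ∈ univ.erase k, w i j * s i * s j := by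
      refine Finset.sum_congr rfl fun i hi => Finset.sum_congr rfl fun j hj => ?_
      rw [ht i (Finset.ne_of_mem_erase hi), ht j (Finset.ne_of_mem_erase hj)]
    rw [e1, e2, e3, h0 k]; ring
  rw [hQ (Function.update s k c) (fun i hi => Function.update_of_ne hi _ _),
    hQ s (fun _ _ => rfl), Function.update_self]
  ring

lemma box_max (w : V → V → ℝ) (hsym : ∀ i j, w i j = w j i) (h0 : ∀ i, w i i = 0) :
    ∀ t : Finset V, ∀ s : V → ℝ, (∀ i, |s i| ≤ 1) → (∀ i, i ∉ t → s i = 1 ∨ s i = -1) →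
    ∃ x : V → ℝ, (∀ i, x i = 1 ∨ x i = -1) ∧ Qf w x ≤ Qf w s := by
  intro t
  induction t using Finset.induction_on with
  | empty =>
    intro s hs h1
    exact ⟨s, fun i => h1 i (by simp), le_refl _⟩
  | @insert k t' hk IH =>
    intro s hs h1
    set E := ∑ j ∈ univ.erase k, w k j * s j with hE
    set c : ℝ := if 0 ≤ E then -1 else 1 with hc
    have hc1 : c = 1 ∨ c = -1 := by
      rw [hc]; split <;> simp
    have hsk := abs_le.mp (hs k)
    have hle : Qf w (Function.update s k c) ≤ Qf w s := by
      rw [Q_update w hsym h0 s k c, ← hE]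
      rcases le_or_gt 0 E with h | h
      · have hcv : c = -1 := by rw [hc, if_pos h]
        rw [hcv]; nlinarith [hsk.1, hsk.2]
      · have hcv : c = 1 := by rw [hc, if_neg (not_le.mpr h)]
        rw [hcv]; nlinarith [hsk.1, hsk.2]
    obtain ⟨x, hx, hxle⟩ := IH (Function.update s k c)
      (fun i => by
        rcases eq_or_ne i k with rfl | hik
        · rw [Function.update_self]
          rcases hc1 with h | h <;> rw [h] <;> norm_num
        · rw [Function.update_of_ne hik]; exact hs i)
      (fun i hi => by
        rcases eq_or_ne i k with rfl | hik
        · rw [Function.update_self]; exact hc1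
        · rw [Function.update_of_ne hik]
          exact h1 i (by simp [hik, hi]))
    exact ⟨x, hx, hxle.trans hle⟩

end Aux

section Split
variable {n : ℕ} (w : Fin n → Fin n → ℝ) (p : Fin n → ℕ)

/-- The "lifting" matrix. -/
noncomputable def liftMat : Matrix (Σ i : Fin n, Fin (p i)) (Fin n) ℝ :=
  Matrix.of fun a j => if a.1 = j then 1 else 0

/-- The "averaging" matrix. -/
noncomputable def avgM : Matrix (Fin n) (Σ i : Fin n, Fin (p i)) ℝ :=
  Matrix.of fun i a => if i = a.1 then ((p i : ℝ))⁻¹ else 0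

lemma liftMat_ent (X : Matrix (Fin n) (Fin n) ℝ) (a b : Σ i : Fin n, Fin (p i)) :
    (liftMat p * X * (liftMat p)ᴴ) a b = X a.1 b.1 := by
  simp [Matrix.mul_apply, Matrix.conjTranspose_apply, liftMat, ite_mul, mul_ite,
    Finset.sum_ite_eq, Finset.sum_ite_eq']

lemma avgM_ent (Y : Matrix (Σ i : Fin n, Fin (p i)) (Σ i : Fin n, Fin (p i)) ℝ)
    (i j : Fin n) :
    (avgM p * Y * (avgM p)ᴴ) i j
      = (∑ α, ∑ β, Y ⟨i, α⟩ ⟨j, β⟩) / ((p i : ℝ) * (p j : ℝ)) := by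
  have inner : ∀ b, (avgM p * Y) i b = ((p i : ℝ))⁻¹ * ∑ α, Y ⟨i, α⟩ b := by
    intro b
    rw [Matrix.mul_apply, sigma_sum (f := fun a => avgM p i a * Y a b)]
    have h1 : ∀ k, ∑ α : Fin (p k), avgM p i ⟨k, α⟩ * Y ⟨k, α⟩ b
        = if i = k then ∑ α : Fin (p k), ((p i : ℝ))⁻¹ * Y ⟨k, α⟩ b else 0 := by
      intro k
      rcases eq_or_ne i k with rfl | h
      · simp [avgM]
      · simp [avgM, h]
    rw [Finset.sum_congr rfl fun k _ => h1 k, Finset.sum_ite_eq]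
    simp [Finset.mul_sum]
  rw [Matrix.mul_apply, sigma_sum (f := fun b => (avgM p * Y) i b * (avgM p)ᴴ b j)]
  have h2 : ∀ k, ∑ β : Fin (p k), (avgM p * Y) i ⟨k, β⟩ * (avgM p)ᴴ ⟨k, β⟩ j
      = if j = k then ∑ β : Fin (p k), (avgM p * Y) i ⟨k, β⟩ * ((p j : ℝ))⁻¹ else 0 := by
    intro k
    rcases eq_or_ne j k with rfl | h
    · simp [avgM, Matrix.conjTranspose_apply]
    · simp [avgM, Matrix.conjTranspose_apply, h]
  rw [Finset.sum_congr rfl fun k _ => h2 k, Finset.sum_ite_eq]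
  simp only [Finset.mem_univ, if_true]
  rw [Finset.sum_congr rfl fun β _ => by rw [inner ⟨j, β⟩]]
  rw [div_eq_mul_inv, mul_inv]
  rw [Finset.sum_comm]
  rw [← Finset.sum_mul, ← Finset.mul_sum]
  ring

lemma split_pair (g : (Σ i : Fin n, Fin (p i)) → (Σ i : Fin n, Fin (p i)) → ℝ) :
    ∑ a, ∑ b, splitW w p a b * g a b
      = ∑ i, ∑ j, (if i = j then 0 else w i j / ((p i : ℝ) * (p j : ℝ)))
          * ∑ α, ∑ β, g ⟨i, α⟩ ⟨j, β⟩ := by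
  rw [sigma_sum (f := fun a => ∑ b, splitW w p a b * g a b)]
  refine Finset.sum_congr rfl fun i _ => ?_
  have step : ∀ α : Fin (p i), ∑ b, splitW w p ⟨i, α⟩ b * g ⟨i, α⟩ b
      = ∑ j, ∑ β, splitW w p ⟨i, α⟩ ⟨j, β⟩ * g ⟨i, α⟩ ⟨j, β⟩ :=
    fun α => sigma_sum _
  rw [Finset.sum_congr rfl fun α _ => step α, Finset.sum_comm]
  refine Finset.sum_congr rfl fun j _ => ?_
  rw [Finset.mul_sum]
  refine Finset.sum_congr rfl fun α _ => ?_
  rw [Finset.mul_sum]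
  rfl

lemma split_Wt (h0 : ∀ i, w i i = 0) (hp : ∀ i, 0 < p i) :
    Wt (splitW w p) = Wt w := by
  have h : Wt (splitW w p) = ∑ a, ∑ b, splitW w p a b * (fun _ _ => (1:ℝ)) a b := by
    simp [Wt]
  rw [h, split_pair]
  refine Finset.sum_congr rfl fun i _ => Finset.sum_congr rfl fun j _ => ?_
  rcases eq_or_ne i j with rfl | hij
  · simp [h0 i]
  · rw [if_neg hij]
    simp only [Finset.sum_const, Finset.card_univ, Fintype.card_fin, nsmul_eq_mul, mul_one]
    have hpi : ((p i : ℝ)) ≠ 0 := by exact_mod_cast (hp i).ne'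
    have hpj : ((p j : ℝ)) ≠ 0 := by exact_mod_cast (hp j).ne'
    field_simp

lemma split_pair_lift (h0 : ∀ i, w i i = 0) (hp : ∀ i, 0 < p i)
    (M : Matrix (Fin n) (Fin n) ℝ) :
    ∑ a, ∑ b, splitW w p a b * M b.1 a.1 = ∑ i, ∑ j, w i j * M j i := by
  rw [split_pair w p (fun a b => M b.1 a.1)]
  refine Finset.sum_congr rfl fun i _ => Finset.sum_congr rfl fun j _ => ?_
  rcases eq_or_ne i j with rfl | hij
  · simp [h0 i]
  · rw [if_neg hij]
    simp only [Finset.sum_const, Finset.card_univ, Fintype.card_fin, nsmul_eq_mul]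
    have hpi : ((p i : ℝ)) ≠ 0 := by exact_mod_cast (hp i).ne'
    have hpj : ((p j : ℝ)) ≠ 0 := by exact_mod_cast (hp j).ne'
    field_simp

lemma split_pair_avg (h0 : ∀ i, w i i = 0)
    (Y : Matrix (Σ i : Fin n, Fin (p i)) (Σ i : Fin n, Fin (p i)) ℝ) :
    ∑ a, ∑ b, splitW w p a b * Y b a
      = ∑ i, ∑ j, w i j * ((avgM p * Y * (avgM p)ᴴ) j i) := by
  rw [split_pair w p (fun a b => Y b a)]
  refine Finset.sum_congr rfl fun i _ => Finset.sum_congr rfl fun j _ => ?_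
  rw [avgM_ent]
  rcases eq_or_ne i j with rfl | hij
  · simp [h0 i]
  · rw [if_neg hij, Finset.sum_comm]
    rw [div_eq_mul_inv, div_eq_mul_inv, mul_inv, mul_inv]
    ring

lemma split_Qf (h0 : ∀ i, w i i = 0) (y : (Σ i : Fin n, Fin (p i)) → ℝ) :
    Qf (splitW w p) y = Qf w (fun i => (∑ α, y ⟨i, α⟩) / (p i : ℝ)) := by
  have h : Qf (splitW w p) y = ∑ a, ∑ b, splitW w p a b * (y a * y b) := by
    simp [Qf, mul_assoc]
  rw [h, split_pair w p (fun a b => y a * y b), Qf]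
  refine Finset.sum_congr rfl fun i _ => Finset.sum_congr rfl fun j _ => ?_
  rcases eq_or_ne i j with rfl | hij
  · simp [h0 i]
  · rw [if_neg hij, ← Finset.sum_mul_sum]
    rw [div_eq_mul_inv, div_eq_mul_inv, div_eq_mul_inv, mul_inv]
    ring

end Split

/-- **Exactness is invariant under graph splitting.**
A weighted graph `G` is exact if and only if any split graph `G̃` of `G` is exact. -/
theorem isExact_iff_isExact_splitW {n : ℕ} (w : Fin n → Fin n → ℝ) (hw : IsWeight w)
    (p : Fin n → ℕ) (hp : ∀ i, 0 < p i) :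
    IsExact w ↔ IsExact (splitW w p) := by
  obtain ⟨hsym, h0, hnn⟩ := hw
  have hs0 : ∀ a, splitW w p a a = 0 := fun a => by simp [splitW]
  have hssym : ∀ a b, splitW w p a b = splitW w p b a := by
    intro a b
    unfold splitW
    rcases eq_or_ne a.1 b.1 with h | h
    · rw [if_pos h, if_pos h.symm]
    · rw [if_neg h, if_neg (Ne.symm h), hsym a.1 b.1, mul_comm]
  have hsnn : ∀ a b, 0 ≤ splitW w p a b := by
    intro a b
    unfold splitW
    split
    · exact le_refl 0
    · exact div_nonneg (hnn _ _) (by positivity)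
  have hpR : ∀ i, ((p i : ℝ)) ≠ 0 := fun i => by exact_mod_cast (hp i).ne'
  -- SDP values agree
  have hSDP : sdpVal w = sdpVal (splitW w p) := by
    rw [sdpVal, sdpVal]
    apply le_antisymm
    · refine csSup_le ⟨_, 1, Matrix.PosSemidef.one, fun i => Matrix.one_apply_eq i, rfl⟩ ?_
      rintro c ⟨X, hX, hd, rfl⟩
      refine le_csSup (sdp_bdd (splitW w p) hs0 hsnn) ?_
      refine ⟨liftMat p * X * (liftMat p)ᴴ, hX.mul_mul_conjTranspose_same _,
        fun a => by rw [liftMat_ent]; exact hd a.1, ?_⟩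
      rw [trace_lapW w h0 X hd,
        trace_lapW (splitW w p) hs0 _ (fun a => by rw [liftMat_ent]; exact hd a.1),
        split_Wt w p h0 hp]
      have he : ∑ a, ∑ b, splitW w p a b * (liftMat p * X * (liftMat p)ᴴ) b a
          = ∑ i, ∑ j, w i j * X j i := by
        rw [Finset.sum_congr rfl fun a _ =>
          Finset.sum_congr rfl fun b _ => by rw [liftMat_ent]]
        exact split_pair_lift w p h0 hp X
      rw [he]
    · refine csSup_le ⟨_, 1, Matrix.PosSemidef.one, fun i => Matrix.one_apply_eq i, rfl⟩ ?_
      rintro c ⟨Y, hY, hYd, rfl⟩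
      refine le_csSup (sdp_bdd w h0 hnn) ?_
      set X := avgM p * Y * (avgM p)ᴴ with hXdef
      have hXpsd : X.PosSemidef := hY.mul_mul_conjTranspose_same _
      have hXle : ∀ i, X i i ≤ 1 := by
        intro i
        rw [hXdef, avgM_ent]
        have hb : ∑ α, ∑ β, Y ⟨i, α⟩ ⟨i, β⟩ ≤ (p i : ℝ) * (p i : ℝ) := by
          calc ∑ α, ∑ β, Y ⟨i, α⟩ ⟨i, β⟩
              ≤ ∑ _α : Fin (p i), ∑ _β : Fin (p i), (1:ℝ) :=
                Finset.sum_le_sum fun α _ => Finset.sum_le_sum fun β _ =>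
                  (abs_le.mp (psd_entry Y hY hYd _ _)).2
            _ = (p i : ℝ) * (p i : ℝ) := by
                simp [Finset.sum_const, Finset.card_univ, mul_comm]
        have hpi : (0:ℝ) < (p i : ℝ) := by exact_mod_cast hp i
        rw [div_le_one (mul_pos hpi hpi)]
        exact hb
      set X' := X + Matrix.diagonal (fun i => 1 - X i i) with hX'def
      have hX'psd : X'.PosSemidef :=
        hXpsd.add ((Matrix.posSemidef_diagonal_iff).2 fun i => by linarith [hXle i])
      have hX'd : ∀ i, X' i i = 1 := by
        intro i
        rw [hX'def]
        simp [Matrix.add_apply, Matrix.diagonal_apply_eq]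
      refine ⟨X', hX'psd, hX'd, ?_⟩
      rw [trace_lapW (splitW w p) hs0 Y hYd, trace_lapW w h0 X' hX'd,
        split_Wt w p h0 hp, split_pair_avg w p h0 Y]
      have he : ∑ i, ∑ j, w i j * X' j i = ∑ i, ∑ j, w i j * X j i := by
        refine Finset.sum_congr rfl fun i _ => ?_
        have hterm : ∀ j, w i j * X' j i
            = w i j * X j i + (if j = i then w i j * (1 - X j j) else 0) := by
          intro j
          rw [hX'def]
          rcases eq_or_ne j i with rfl | h
          · simp [Matrix.add_apply, Matrix.diagonal_apply_eq]; ring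
          · rw [Matrix.add_apply, Matrix.diagonal_apply_ne _ h, if_neg h]; ring
        rw [Finset.sum_congr rfl fun j _ => hterm j, Finset.sum_add_distrib]
        simp [Finset.sum_ite_eq', h0 i]
      rw [he]
  -- Max-cut values agree
  have hMC : maxCutVal w = maxCutVal (splitW w p) := by
    rw [maxCutVal, maxCutVal]
    apply le_antisymm
    · refine csSup_le ⟨_, (fun _ => (1:ℝ)), fun i => Or.inl rfl, rfl⟩ ?_
      rintro c ⟨x, hx, rfl⟩
      refine le_csSup (mc_bdd (splitW w p) hs0 hsnn) ?_
      refine ⟨fun a => x a.1, fun a => hx a.1, ?_⟩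
      rw [dot_lapW w h0 x hx,
        dot_lapW (splitW w p) hs0 _ (fun a => hx a.1),
        split_Wt w p h0 hp, split_Qf w p h0 (fun a => x a.1)]
      have he : (fun i => (∑ _α : Fin (p i), x i) / (p i : ℝ)) = x := by
        funext i
        rw [Finset.sum_const, Finset.card_univ, Fintype.card_fin, nsmul_eq_mul]
        exact mul_div_cancel_left₀ (x i) (by exact_mod_cast (hp i).ne')
      rw [he]
    · refine csSup_le ⟨_, (fun _ => (1:ℝ)), fun i => Or.inl rfl, rfl⟩ ?_
      rintro c ⟨y, hy, rfl⟩
      set s : Fin n → ℝ := fun i => (∑ α, y ⟨i, α⟩) / (p i : ℝ) with hs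
      have hs1 : ∀ i, |s i| ≤ 1 := by
        intro i
        rw [hs]
        have h1 : |∑ α, y ⟨i, α⟩| ≤ (p i : ℝ) := by
          refine (Finset.abs_sum_le_sum_abs _ _).trans ?_
          have : ∀ α : Fin (p i), |y ⟨i, α⟩| = 1 := by
            intro α; rcases hy ⟨i, α⟩ with h | h <;> simp [h]
          rw [Finset.sum_congr rfl fun α _ => this α]
          simp
        rw [abs_div, abs_of_nonneg (by positivity : (0:ℝ) ≤ (p i : ℝ)),
          div_le_one (by exact_mod_cast hp i)]
        exact h1
      obtain ⟨x, hx, hxle⟩ := box_max w hsym h0 Finset.univ s hs1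
        (fun i hi => absurd (Finset.mem_univ i) hi)
      have hcle : (1 / 4) * (y ⬝ᵥ (lapW (splitW w p)).mulVec y)
          ≤ (1 / 4) * (x ⬝ᵥ (lapW w).mulVec x) := by
        rw [dot_lapW (splitW w p) hs0 y hy, dot_lapW w h0 x hx,
          split_Wt w p h0 hp, split_Qf w p h0 y, ← hs]
        linarith
      exact hcle.trans (le_csSup (mc_bdd w h0 hnn) ⟨x, hx, rfl⟩)
  rw [IsExact, IsExact, hSDP, hMC]
end

section
/- Let V_A and V_B be disjoint finite sets with |V_A| = |V_B| = n, let G_A and G_B be arbitrary simple graphs on V_A and V_B respectively, and let G' be the unweighted graph on V_A ∪ V_B whose edges are those of G_A, those of G_B, and all pairs {a,b} with a ∈ V_A, b ∈ V_B. Then G' is exact with φ(G') = MC(G') = n², and the rank-1 matrix X* = x xᵀ, where x takes value +1 on V_A and −1 on V_B, is an optimal SDP solution. -/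
open Matrix Finset

/-- The join graph `G' = G_A ∪ G_B ∪ K(V_A, V_B)`: the unweighted graph on `V_A ⊕ V_B`
whose edges are those of `A`, those of `B`, and all pairs between the two sides. -/
def joinW {m n : ℕ} (A : SimpleGraph (Fin m)) (B : SimpleGraph (Fin n))
    [DecidableRel A.Adj] [DecidableRel B.Adj] :
    (Fin m ⊕ Fin n) → (Fin m ⊕ Fin n) → ℝ
  | Sum.inl i, Sum.inl j => if A.Adj i j then 1 else 0
  | Sum.inr i, Sum.inr j => if B.Adj i j then 1 else 0
  | _, _ => 1

/-- The vector taking value `+1` on `V_A` and `-1` on `V_B`. -/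
def xJoin (m n : ℕ) : (Fin m ⊕ Fin n) → ℝ := Sum.elim (fun _ => 1) fun _ => -1

/-! ### Auxiliary lemmas -/

lemma lapW_eq {V : Type*} [Fintype V] [DecidableEq V] (w : V → V → ℝ)
    (hdiag : ∀ i, w i i = 0) :
    lapW w = Matrix.diagonal (fun i => ∑ k, w i k) - Matrix.of w := by
  ext i j
  by_cases h : i = j
  · subst h; simp [lapW, hdiag]
  · simp [lapW, h, Matrix.diagonal_apply_ne _ h]

lemma lapW_quadForm {V : Type*} [Fintype V] [DecidableEq V] (w : V → V → ℝ)
    (hsym : ∀ i j, w i j = w j i) (hdiag : ∀ i, w i i = 0) (x : V → ℝ) :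
    x ⬝ᵥ (lapW w) *ᵥ x = (1/2) * ∑ i, ∑ j, w i j * (x i - x j)^2 := by
  rw [lapW_eq w hdiag, sub_mulVec, dotProduct_sub]
  have h1 : x ⬝ᵥ (Matrix.diagonal (fun i => ∑ k, w i k)) *ᵥ x
      = ∑ i, ∑ j, w i j * x i ^ 2 := by
    simp only [dotProduct, mulVec_diagonal]
    refine Finset.sum_congr rfl fun i _ => ?_
    rw [Finset.sum_mul, Finset.mul_sum]
    exact Finset.sum_congr rfl fun j _ => by ring
  have h2 : x ⬝ᵥ (Matrix.of w) *ᵥ x = ∑ i, ∑ j, w i j * (x i * x j) := by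
    simp only [mulVec, dotProduct, of_apply, Finset.mul_sum]
    refine Finset.sum_congr rfl fun i _ => Finset.sum_congr rfl fun j _ => by ring
  have hswap : ∑ i, ∑ j, w i j * x j ^ 2 = ∑ i, ∑ j, w i j * x i ^ 2 := by
    rw [Finset.sum_comm]
    exact Finset.sum_congr rfl fun i _ => Finset.sum_congr rfl fun j _ => by rw [hsym]
  have h3 : ∑ i, ∑ j, w i j * (x i - x j)^2
      = (∑ i, ∑ j, w i j * x i ^ 2) + (∑ i, ∑ j, w i j * x j ^ 2)
        - 2 * ∑ i, ∑ j, w i j * (x i * x j) := by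
    rw [Finset.mul_sum, ← Finset.sum_add_distrib, ← Finset.sum_sub_distrib]
    refine Finset.sum_congr rfl fun i _ => ?_
    rw [Finset.mul_sum, ← Finset.sum_add_distrib, ← Finset.sum_sub_distrib]
    exact Finset.sum_congr rfl fun j _ => by ring
  rw [h1, h2, h3, hswap]
  ring

lemma lapW_posSemidef {V : Type*} [Fintype V] [DecidableEq V] {w : V → V → ℝ}
    (hw : IsWeight w) : (lapW w).PosSemidef := by
  obtain ⟨hsym, hdiag, hnn⟩ := hw
  refine posSemidef_iff_dotProduct_mulVec.mpr ⟨?_, ?_⟩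
  · ext i j
    by_cases h : i = j
    · subst h; simp [lapW]
    · simp [lapW, h, Ne.symm h, hsym i j]
  · intro x
    rw [star_trivial, lapW_quadForm w hsym hdiag x]
    have : (0:ℝ) ≤ ∑ i, ∑ j, w i j * (x i - x j)^2 :=
      Finset.sum_nonneg fun i _ => Finset.sum_nonneg fun j _ =>
        mul_nonneg (hnn i j) (sq_nonneg _)
    linarith

lemma posSemidef_vecMulVec' {V : Type*} [Fintype V] [DecidableEq V] (x : V → ℝ) :
    (vecMulVec x x).PosSemidef := by
  refine posSemidef_iff_dotProduct_mulVec.mpr ⟨?_, ?_⟩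
  · ext i j; simp [vecMulVec, mul_comm]
  · intro y
    have h : y ⬝ᵥ (vecMulVec x x) *ᵥ y = (x ⬝ᵥ y) * (x ⬝ᵥ y) := by
      simp only [vecMulVec, mulVec, dotProduct, of_apply, Finset.mul_sum,
        Finset.sum_mul]
      rw [Finset.sum_comm]
      exact Finset.sum_congr rfl fun i _ => Finset.sum_congr rfl fun j _ => by ring
    rw [star_trivial, h]
    exact mul_self_nonneg _

lemma trace_mul_vecMulVec' {V : Type*} [Fintype V] [DecidableEq V]
    (M : Matrix V V ℝ) (x : V → ℝ) :
    (M * vecMulVec x x).trace = x ⬝ᵥ M *ᵥ x := by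
  simp only [Matrix.trace, Matrix.diag_apply, Matrix.mul_apply, vecMulVec,
    Matrix.of_apply, dotProduct, mulVec, Finset.mul_sum]
  exact Finset.sum_congr rfl fun i _ => Finset.sum_congr rfl fun j _ => by ring

lemma psd_diag_nonneg {V : Type*} [Fintype V] [DecidableEq V]
    {M : Matrix V V ℝ} (hM : M.PosSemidef) (i : V) : 0 ≤ M i i := by
  have := hM.dotProduct_mulVec_nonneg (Pi.single i 1)
  simpa [dotProduct, mulVec, Pi.single_apply] using this

lemma trace_mul_psd_nonneg {V : Type*} [Fintype V] [DecidableEq V]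
    {A B : Matrix V V ℝ} (hA : A.PosSemidef) (hB : B.PosSemidef) :
    0 ≤ (A * B).trace := by
  obtain ⟨S, hS⟩ : ∃ S : Matrix V V ℝ, A = Sᴴ * S := by
    open scoped MatrixOrder in
    exact CStarAlgebra.nonneg_iff_eq_star_mul_self.mp hA.nonneg
  have h1 : A * B = Sᴴ * (S * B) := by
    rw [← mul_assoc, hS]
  rw [h1, trace_mul_comm, mul_assoc]
  have hP : (S * (B * Sᴴ)).PosSemidef := by
    have := hB.mul_mul_conjTranspose_same S
    rwa [mul_assoc] at this
  calc (0:ℝ) ≤ ∑ i, (S * (B * Sᴴ)) i i :=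
        Finset.sum_nonneg fun i _ => psd_diag_nonneg hP i
    _ = _ := rfl

/-! ### The join graph -/

/-- complement weights: disjoint union of the complements, no cross edges. -/
def wcW {n : ℕ} (A B : SimpleGraph (Fin n)) [DecidableRel A.Adj] [DecidableRel B.Adj] :
    (Fin n ⊕ Fin n) → (Fin n ⊕ Fin n) → ℝ
  | Sum.inl i, Sum.inl j => if i ≠ j ∧ ¬A.Adj i j then 1 else 0
  | Sum.inr i, Sum.inr j => if i ≠ j ∧ ¬B.Adj i j then 1 else 0
  | _, _ => 0

lemma wcW_isWeight {n : ℕ} (A B : SimpleGraph (Fin n))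
    [DecidableRel A.Adj] [DecidableRel B.Adj] : IsWeight (wcW A B) := by
  refine ⟨?_, ?_, ?_⟩
  · have hiff : ∀ (G : SimpleGraph (Fin n)) (i j : Fin n),
        (i ≠ j ∧ ¬G.Adj i j) ↔ (j ≠ i ∧ ¬G.Adj j i) := by
      intro G i j
      constructor <;> rintro ⟨h1, h2⟩ <;> exact ⟨Ne.symm h1, fun h => h2 h.symm⟩
    rintro (i | i) (j | j)
    · simp only [wcW]; exact if_congr (hiff A i j) rfl rfl
    · rfl
    · rfl
    · simp only [wcW]; exact if_congr (hiff B i j) rfl rfl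
  · rintro (i | i) <;> simp [wcW]
  · rintro (i | i) (j | j) <;> simp only [wcW] <;> positivity


lemma join_decomp {n : ℕ} (A B : SimpleGraph (Fin n))
    [DecidableRel A.Adj] [DecidableRel B.Adj] :
    lapW (joinW A B) = (2*(n:ℝ)) • (1 : Matrix (Fin n ⊕ Fin n) (Fin n ⊕ Fin n) ℝ)
      - (lapW (wcW A B) + vecMulVec (fun _ => (1:ℝ)) (fun _ => 1)) := by
  have diagsum : ∀ (G : SimpleGraph (Fin n)) (_ : DecidableRel G.Adj) (a : Fin n),
      (∑ b, (if G.Adj a b then (1:ℝ) else 0))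
      + (∑ b, (if a ≠ b ∧ ¬G.Adj a b then (1:ℝ) else 0)) + 1 = n + 0 := by
    intro G inst a
    have h1 : ∑ b, ((if G.Adj a b then (1:ℝ) else 0)
        + ((if a ≠ b ∧ ¬G.Adj a b then (1:ℝ) else 0)
          + (if a = b then (1:ℝ) else 0))) = ∑ _b : Fin n, (1:ℝ) := by
      refine Finset.sum_congr rfl fun b _ => ?_
      by_cases hab : a = b
      · subst hab; simp [G.irrefl]
      · by_cases hadj : G.Adj a b <;> simp [hab, hadj]
    rw [Finset.sum_add_distrib, Finset.sum_add_distrib] at h1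
    have h2 : ∑ b, (if a = b then (1:ℝ) else 0) = 1 := by simp
    rw [h2] at h1
    simp only [Finset.sum_const, Finset.card_univ, Fintype.card_fin, nsmul_eq_mul,
      mul_one] at h1
    linarith
  ext i j
  simp only [Matrix.sub_apply, Matrix.smul_apply, Matrix.one_apply, Matrix.add_apply,
    vecMulVec, Matrix.of_apply, smul_eq_mul, mul_one, lapW]
  by_cases h : i = j
  · subst h
    simp only [if_pos rfl]
    obtain (a | a) := i
    · rw [Fintype.sum_sum_type, Fintype.sum_sum_type]
      have hj1 : ∑ b, joinW A B (Sum.inl a) (Sum.inl b)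
          = ∑ b, (if A.Adj a b then (1:ℝ) else 0) := rfl
      have hj2 : ∑ b : Fin n, joinW A B (Sum.inl a) (Sum.inr b) = n := by
        simp [joinW]
      have hc1 : ∑ b, wcW A B (Sum.inl a) (Sum.inl b)
          = ∑ b, (if a ≠ b ∧ ¬A.Adj a b then (1:ℝ) else 0) := rfl
      have hc2 : ∑ b : Fin n, wcW A B (Sum.inl a) (Sum.inr b) = 0 := by
        simp [wcW]
      rw [hj1, hj2, hc1, hc2]
      have := diagsum A ‹_› a
      push_cast
      linarith
    · rw [Fintype.sum_sum_type, Fintype.sum_sum_type]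
      have hj1 : ∑ b : Fin n, joinW A B (Sum.inr a) (Sum.inl b) = n := by
        simp [joinW]
      have hj2 : ∑ b, joinW A B (Sum.inr a) (Sum.inr b)
          = ∑ b, (if B.Adj a b then (1:ℝ) else 0) := rfl
      have hc1 : ∑ b : Fin n, wcW A B (Sum.inr a) (Sum.inl b) = 0 := by
        simp [wcW]
      have hc2 : ∑ b, wcW A B (Sum.inr a) (Sum.inr b)
          = ∑ b, (if a ≠ b ∧ ¬B.Adj a b then (1:ℝ) else 0) := rfl
      rw [hj1, hj2, hc1, hc2]
      have := diagsum B ‹_› a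
      push_cast
      linarith
  · simp only [if_neg h]
    obtain (a | a) := i <;> obtain (b | b) := j
    · have hab : a ≠ b := fun hab => h (by rw [hab])
      by_cases hadj : A.Adj a b <;> simp [joinW, wcW, hab, hadj]
    · simp [joinW, wcW]
    · simp [joinW, wcW]
    · have hab : a ≠ b := fun hab => h (by rw [hab])
      by_cases hadj : B.Adj a b <;> simp [joinW, wcW, hab, hadj]

lemma join_bound {n : ℕ} (A B : SimpleGraph (Fin n))
    [DecidableRel A.Adj] [DecidableRel B.Adj] (X : Matrix (Fin n ⊕ Fin n) (Fin n ⊕ Fin n) ℝ)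
    (hX : X.PosSemidef) (hd : ∀ i, X i i = 1) :
    (1/4) * (lapW (joinW A B) * X).trace ≤ (n:ℝ)^2 := by
  set N : Matrix (Fin n ⊕ Fin n) (Fin n ⊕ Fin n) ℝ :=
    lapW (wcW A B) + vecMulVec (fun _ => (1:ℝ)) (fun _ => 1) with hN
  have hNpsd : N.PosSemidef :=
    (lapW_posSemidef (wcW_isWeight A B)).add (posSemidef_vecMulVec' _)
  have hmul : lapW (joinW A B) * X = (2*(n:ℝ)) • X - N * X := by
    rw [join_decomp A B, sub_mul, smul_mul_assoc, one_mul]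
  have htrX : X.trace = 2*(n:ℝ) := by
    simp only [Matrix.trace, Matrix.diag_apply, hd]
    simp [Fintype.card_sum]
    ring
  have htrN : 0 ≤ (N * X).trace := trace_mul_psd_nonneg hNpsd hX
  rw [hmul, trace_sub, trace_smul, smul_eq_mul, htrX]
  nlinarith [htrN]

lemma xJoin_sum {n : ℕ} : ∑ k, xJoin n n k = 0 := by
  rw [Fintype.sum_sum_type]
  simp [xJoin]

lemma join_eq_val {n : ℕ} (A B : SimpleGraph (Fin n))
    [DecidableRel A.Adj] [DecidableRel B.Adj] :
    (1/4) * (lapW (joinW A B) * vecMulVec (xJoin n n) (xJoin n n)).trace = (n:ℝ)^2 := by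
  set x := xJoin n n with hx
  rw [trace_mul_vecMulVec', join_decomp A B, sub_mulVec, add_mulVec,
    dotProduct_sub, dotProduct_add]
  have h1 : x ⬝ᵥ ((2*(n:ℝ)) • (1 : Matrix (Fin n ⊕ Fin n) (Fin n ⊕ Fin n) ℝ)) *ᵥ x
      = 2*(n:ℝ) * (x ⬝ᵥ x) := by
    rw [smul_mulVec, one_mulVec, dotProduct_smul, smul_eq_mul]
  have hxx : x ⬝ᵥ x = 2*(n:ℝ) := by
    simp only [dotProduct]
    rw [Fintype.sum_sum_type]
    simp [hx, xJoin]
    ring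
  have h2 : x ⬝ᵥ (lapW (wcW A B)) *ᵥ x = 0 := by
    obtain ⟨hsym, hdiag, _⟩ := wcW_isWeight A B
    rw [lapW_quadForm _ hsym hdiag]
    have : ∀ i j, wcW A B i j * (x i - x j)^2 = 0 := by
      rintro (a | a) (b | b)
      · simp [hx, xJoin]
      · simp [wcW]
      · simp [wcW]
      · simp [hx, xJoin]
    simp [this]
  have h3 : x ⬝ᵥ (vecMulVec (fun _ : Fin n ⊕ Fin n => (1:ℝ)) (fun _ => 1)) *ᵥ x = 0 := by
    have : ∀ i : Fin n ⊕ Fin n,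
        ((vecMulVec (fun _ : Fin n ⊕ Fin n => (1:ℝ)) (fun _ => 1)) *ᵥ x) i = ∑ k, x k := by
      intro i; simp [vecMulVec, mulVec, dotProduct]
    simp only [dotProduct, this, ← hx]
    rw [← Finset.sum_mul, xJoin_sum]
    simp
  rw [h1, hxx, h2, h3]
  ring

/-- **Join of two graphs on equally sized vertex sets is exact.**
If `|V_A| = |V_B| = n`, then `G'` is exact with `φ(G') = MC(G') = n²`, and the rank-1
matrix `X* = x xᵀ`, where `x` is `+1` on `V_A` and `-1` on `V_B`, is an optimal SDP
solution. -/
theorem joinW_isExact_of_card_eq {n : ℕ} (A B : SimpleGraph (Fin n))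
    [DecidableRel A.Adj] [DecidableRel B.Adj] :
    IsExact (joinW A B) ∧
    sdpVal (joinW A B) = (n : ℝ) ^ 2 ∧
    maxCutVal (joinW A B) = (n : ℝ) ^ 2 ∧
    IsOptSol (joinW A B) (Matrix.vecMulVec (xJoin n n) (xJoin n n)) := by
  have hXpsd : (Matrix.vecMulVec (xJoin n n) (xJoin n n)).PosSemidef :=
    posSemidef_vecMulVec' _
  have hXdiag : ∀ i, (Matrix.vecMulVec (xJoin n n) (xJoin n n)) i i = 1 := by
    rintro (a | a) <;> simp [vecMulVec, xJoin]
  have hx1 : ∀ i, xJoin n n i = 1 ∨ xJoin n n i = -1 := by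
    rintro (a | a) <;> simp [xJoin]
  have hsdp : sdpVal (joinW A B) = (n : ℝ) ^ 2 := by
    refine IsGreatest.csSup_eq ⟨⟨_, hXpsd, hXdiag, (join_eq_val A B).symm⟩, ?_⟩
    rintro c ⟨X, hX, hd, rfl⟩
    exact join_bound A B X hX hd
  have hmc : maxCutVal (joinW A B) = (n : ℝ) ^ 2 := by
    refine IsGreatest.csSup_eq ⟨⟨xJoin n n, hx1, ?_⟩, ?_⟩
    · rw [← trace_mul_vecMulVec', join_eq_val A B]
    · rintro c ⟨x, hx, rfl⟩
      have hdiag : ∀ i, (vecMulVec x x) i i = 1 := by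
        intro i; rcases hx i with h | h <;> simp [vecMulVec, h]
      have := join_bound A B (vecMulVec x x) (posSemidef_vecMulVec' x) hdiag
      rwa [trace_mul_vecMulVec'] at this
  exact ⟨hsdp.trans hmc.symm, hsdp, hmc,
    hXpsd, hXdiag, (join_eq_val A B).trans hsdp.symm⟩
end

section
/- Let V_A and V_B be disjoint finite sets with |V_A| = |V_B| = n, let G_A and G_B be arbitrary simple graphs on V_A and V_B respectively, and let G' be the unweighted graph on V_A ∪ V_B whose edges are those of G_A, those of G_B, and all pairs {a,b} with a ∈ V_A, b ∈ V_B. If at least one of the complement graphs G_A^c (on V_A) and G_B^c (on V_B) is connected, then the Max-Cut SDP for G' has a unique optimal solution, namely the rank-1 matrix X* = x xᵀ where x is +1 on V_A and −1 on V_B. -/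
open Matrix Finset

/-! ### Auxiliary lemmas -/

section AuxGeneral
variable {V : Type*} [Fintype V] [DecidableEq V]

lemma MCaux.mulVec_two (X : Matrix V V ℝ) (i j : V) (a b : ℝ) (k : V) :
    (X *ᵥ (Pi.single i a + Pi.single j b)) k = a * X k i + b * X k j := by
  simp [Matrix.mulVec_add, Matrix.mulVec_single, mul_comm]

lemma MCaux.quad_two (X : Matrix V V ℝ) (i j : V) (a b : ℝ) :
    star (Pi.single i a + Pi.single j b : V → ℝ) ⬝ᵥ X *ᵥ (Pi.single i a + Pi.single j b)
      = a * (a * X i i + b * X i j) + b * (a * X j i + b * X j j) := by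
  have hs : star (Pi.single i a + Pi.single j b : V → ℝ)
      = Pi.single i a + Pi.single j b := by ext k; simp
  rw [hs, add_dotProduct, single_dotProduct, single_dotProduct,
    MCaux.mulVec_two, MCaux.mulVec_two]

lemma MCaux.sym (X : Matrix V V ℝ) (hX : X.PosSemidef) (i j : V) : X j i = X i j := by
  conv_lhs => rw [← hX.1]
  simp [Matrix.conjTranspose_apply]

lemma MCaux.entry_le_one (X : Matrix V V ℝ) (hX : X.PosSemidef) (hd : ∀ i, X i i = 1)
    (i j : V) : X i j ≤ 1 := by
  rcases eq_or_ne i j with h | h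
  · subst h; rw [hd]
  have h0 := hX.dotProduct_mulVec_nonneg (Pi.single i 1 + Pi.single j (-1))
  rw [MCaux.quad_two] at h0
  rw [hd, hd, MCaux.sym X hX i j] at h0
  linarith

lemma MCaux.neg_one_le_entry (X : Matrix V V ℝ) (hX : X.PosSemidef) (hd : ∀ i, X i i = 1)
    (i j : V) : -1 ≤ X i j := by
  rcases eq_or_ne i j with h | h
  · subst h; rw [hd]; norm_num
  have h0 := hX.dotProduct_mulVec_nonneg (Pi.single i 1 + Pi.single j 1)
  rw [MCaux.quad_two] at h0
  rw [hd, hd, MCaux.sym X hX i j] at h0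
  linarith

lemma MCaux.cols_eq_of_entry_one (X : Matrix V V ℝ) (hX : X.PosSemidef) (hd : ∀ i, X i i = 1)
    (i j : V) (h1 : X i j = 1) : ∀ k, X k i = X k j := by
  have hq : star (Pi.single i 1 + Pi.single j (-1) : V → ℝ) ⬝ᵥ
      X *ᵥ (Pi.single i 1 + Pi.single j (-1)) = 0 := by
    rw [MCaux.quad_two, hd, hd, MCaux.sym X hX i j, h1]; ring
  have h0 := (hX.dotProduct_mulVec_zero_iff _).mp hq
  intro k
  have hk := congrFun h0 k
  rw [MCaux.mulVec_two] at hk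
  simp only [Pi.zero_apply] at hk
  linarith

lemma MCaux.cols_neg_of_entry_neg_one (X : Matrix V V ℝ) (hX : X.PosSemidef)
    (hd : ∀ i, X i i = 1) (i j : V) (h1 : X i j = -1) : ∀ k, X k i = - X k j := by
  have hq : star (Pi.single i 1 + Pi.single j 1 : V → ℝ) ⬝ᵥ
      X *ᵥ (Pi.single i 1 + Pi.single j 1) = 0 := by
    rw [MCaux.quad_two, hd, hd, MCaux.sym X hX i j, h1]; ring
  have h0 := (hX.dotProduct_mulVec_zero_iff _).mp hq
  intro k
  have hk := congrFun h0 k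
  rw [MCaux.mulVec_two] at hk
  simp only [Pi.zero_apply] at hk
  linarith

lemma MCaux.all_eq_neg_one {n : ℕ} {f : Fin n → ℝ} (h1 : ∀ i, -1 ≤ f i)
    (hs : ∑ i, f i = -(n : ℝ)) : ∀ i, f i = -1 := by
  have h : ∑ i, (f i + 1) = 0 := by
    rw [Finset.sum_add_distrib]
    simp [hs]
  have h2 := (Finset.sum_eq_zero_iff_of_nonneg (fun i _ => by linarith [h1 i])).mp h
  intro i
  have := h2 i (Finset.mem_univ i)
  linarith

lemma MCaux.ones_of_connected {n : ℕ} {G : SimpleGraph (Fin n)} (hc : G.Preconnected)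
    (X : Matrix V V ℝ) (hX : X.PosSemidef) (hd : ∀ i, X i i = 1)
    (f : Fin n → V)
    (hedge : ∀ i j, G.Adj i j → X (f i) (f j) = 1) :
    ∀ i j, X (f i) (f j) = 1 := by
  have key : ∀ i j : Fin n, G.Reachable i j → ∀ k, X k (f i) = X k (f j) := by
    intro i j hr
    obtain ⟨p⟩ := hr
    induction p with
    | nil => intro k; rfl
    | cons h p ih =>
      intro k
      rw [MCaux.cols_eq_of_entry_one X hX hd _ _ (hedge _ _ h) k]
      exact ih k
  intro i j
  rw [← key i j (hc i j) (f i)]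
  exact hd (f i)

end AuxGeneral

/-- Indicator of the complement edges within each side. -/
def MCaux.compW {n : ℕ} (A B : SimpleGraph (Fin n)) [DecidableRel A.Adj] [DecidableRel B.Adj] :
    (Fin n ⊕ Fin n) → (Fin n ⊕ Fin n) → ℝ
  | Sum.inl i, Sum.inl j => if i = j then 0 else if A.Adj i j then 0 else 1
  | Sum.inr i, Sum.inr j => if i = j then 0 else if B.Adj i j then 0 else 1
  | _, _ => 0

namespace MCaux

variable {n : ℕ} (A B : SimpleGraph (Fin n)) [DecidableRel A.Adj] [DecidableRel B.Adj]

lemma joinW_diag (i : Fin n ⊕ Fin n) : joinW A B i i = 0 := by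
  rcases i with i | i <;> simp [joinW]

lemma compW_nonneg (i j : Fin n ⊕ Fin n) : 0 ≤ compW A B i j := by
  rcases i with i | i <;> rcases j with j | j <;> simp only [compW] <;>
    (try split_ifs) <;> norm_num

lemma join_term (X : Matrix (Fin n ⊕ Fin n) (Fin n ⊕ Fin n) ℝ) (hd : ∀ i, X i i = 1)
    (i j : Fin n ⊕ Fin n) :
    joinW A B i j * (1 - X i j) = (1 - X i j) - compW A B i j * (1 - X i j) := by
  rcases i with i | i <;> rcases j with j | j
  · rcases eq_or_ne i j with h | h
    · subst h; rw [hd]; simp [joinW, compW]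
    · simp only [joinW, compW, if_neg h]
      by_cases hA : A.Adj i j <;> simp [hA]
  · simp [joinW, compW]
  · simp [joinW, compW]
  · rcases eq_or_ne i j with h | h
    · subst h; rw [hd]; simp [joinW, compW]
    · simp only [joinW, compW, if_neg h]
      by_cases hB : B.Adj i j <;> simp [hB]

lemma trace_join_eq (X : Matrix (Fin n ⊕ Fin n) (Fin n ⊕ Fin n) ℝ)
    (hX : X.PosSemidef) (hd : ∀ i, X i i = 1) :
    (lapW (joinW A B) * X).trace
      = 4 * (n : ℝ) ^ 2 - (∑ i, ∑ j, X i j) - (∑ i, ∑ j, compW A B i j * (1 - X i j)) := by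
  have h0 : (lapW (joinW A B) * X).trace = ∑ i, ∑ j, joinW A B i j * (X i i - X j i) := by
    rw [Matrix.trace]
    refine Finset.sum_congr rfl fun i _ => ?_
    rw [Matrix.diag_apply, Matrix.mul_apply]
    have h1 : ∀ j, lapW (joinW A B) i j * X j i
        = (if i = j then (∑ k, joinW A B i k) * X i i else 0) + (-(joinW A B i j * X j i)) := by
      intro j
      by_cases h : i = j
      · subst h; simp [lapW, joinW_diag]
      · simp [lapW, h]
    rw [Finset.sum_congr rfl fun j _ => h1 j, Finset.sum_add_distrib, Finset.sum_ite_eq]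
    simp only [Finset.mem_univ, if_true, mul_sub, Finset.sum_sub_distrib, Finset.sum_mul,
      Finset.sum_neg_distrib]
    ring
  rw [h0]
  have h2 : ∀ i j : Fin n ⊕ Fin n, joinW A B i j * (X i i - X j i)
      = (1 - X i j) - compW A B i j * (1 - X i j) := by
    intro i j
    rw [hd i, MCaux.sym X hX i j, join_term A B X hd i j]
  simp only [h2]
  rw [Finset.sum_congr rfl fun i _ => Finset.sum_sub_distrib _ _, Finset.sum_sub_distrib]
  congr 1
  rw [Finset.sum_congr rfl fun i _ => Finset.sum_sub_distrib (fun _ => (1 : ℝ)) (fun j => X i j),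
    Finset.sum_sub_distrib]
  simp only [Finset.sum_const, Finset.card_univ, Fintype.card_sum, Fintype.card_fin,
    nsmul_eq_mul]
  push_cast
  ring

lemma half_determined (X : Matrix (Fin n ⊕ Fin n) (Fin n ⊕ Fin n) ℝ)
    (hX : X.PosSemidef) (hd : ∀ i, X i i = 1)
    (hrow : ∀ k, ∑ j, X k j = 0)
    (f g : Fin n → Fin n ⊕ Fin n)
    (hsplit : ∀ h : (Fin n ⊕ Fin n) → ℝ, ∑ j, h j = (∑ i, h (f i)) + ∑ i, h (g i))
    (hones : ∀ i j, X (f i) (f j) = 1)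
    (i0 : Fin n) :
    (∀ i j, X (f i) (g j) = -1) ∧ (∀ i j, X (g i) (g j) = 1) := by
  have hcross : ∀ i j, X (f i) (g j) = -1 := by
    intro i
    have hsum := hrow (f i)
    rw [hsplit (fun j => X (f i) j)] at hsum
    have h1 : ∑ k, X (f i) (f k) = (n : ℝ) := by
      rw [Finset.sum_congr rfl fun k _ => hones i k]
      simp
    have h2 : ∑ k, X (f i) (g k) = -(n : ℝ) := by linarith
    exact MCaux.all_eq_neg_one (fun k => MCaux.neg_one_le_entry X hX hd _ _) h2
  refine ⟨hcross, fun i j => ?_⟩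
  have hc := MCaux.cols_neg_of_entry_neg_one X hX hd (f i0) (g j) (hcross i0 j) (g i)
  have h4 : X (g i) (f i0) = -1 := by rw [MCaux.sym X hX]; exact hcross i0 i
  linarith

lemma xstar_psd : (Matrix.vecMulVec (xJoin n n) (xJoin n n)).PosSemidef := by
  refine Matrix.PosSemidef.of_dotProduct_mulVec_nonneg ?_ ?_
  · ext i j
    simp [Matrix.vecMulVec_apply, Matrix.conjTranspose_apply, mul_comm]
  · intro v
    have hstar : star v = v := by ext k; simp
    have h : star v ⬝ᵥ (Matrix.vecMulVec (xJoin n n) (xJoin n n)) *ᵥ v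
        = (∑ i, v i * xJoin n n i) * (∑ j, xJoin n n j * v j) := by
      rw [hstar]
      simp only [dotProduct, Matrix.mulVec, Matrix.vecMulVec_apply]
      rw [Finset.sum_mul]
      refine Finset.sum_congr rfl fun i _ => ?_
      rw [Finset.mul_sum, Finset.mul_sum]
      refine Finset.sum_congr rfl fun j _ => ?_
      ring
    rw [h]
    have h2 : (∑ j, xJoin n n j * v j) = (∑ i, v i * xJoin n n i) :=
      Finset.sum_congr rfl fun i _ => mul_comm _ _
    rw [h2]
    exact mul_self_nonneg _

lemma xstar_diag (i : Fin n ⊕ Fin n) :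
    Matrix.vecMulVec (xJoin n n) (xJoin n n) i i = 1 := by
  rcases i with i | i <;> simp [Matrix.vecMulVec_apply, xJoin]

end MCaux

/-- **Uniqueness of the optimal SDP solution for balanced joins.**
If `|V_A| = |V_B| = n` and at least one of the complement graphs `G_Aᶜ`, `G_Bᶜ` is
connected, then the Max-Cut SDP for `G'` has a unique optimal solution, namely the rank-1
matrix `X* = x xᵀ` where `x` is `+1` on `V_A` and `-1` on `V_B`. -/
theorem joinW_unique_optSol_of_compl_connected {n : ℕ} (A B : SimpleGraph (Fin n))
    [DecidableRel A.Adj] [DecidableRel B.Adj]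
    (hconn : Aᶜ.Connected ∨ Bᶜ.Connected) :
    IsOptSol (joinW A B) (Matrix.vecMulVec (xJoin n n) (xJoin n n)) ∧
    ∀ X : Matrix (Fin n ⊕ Fin n) (Fin n ⊕ Fin n) ℝ,
      IsOptSol (joinW A B) X → X = Matrix.vecMulVec (xJoin n n) (xJoin n n) := by
  classical
  set Xs := Matrix.vecMulVec (xJoin n n) (xJoin n n) with hXs
  have hpsd : Xs.PosSemidef := MCaux.xstar_psd
  have hdiag : ∀ i, Xs i i = 1 := MCaux.xstar_diag
  -- the trace at Xs
  have hT0 : (∑ i, ∑ j, Xs i j) = 0 := by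
    have h1 : (∑ i : Fin n ⊕ Fin n, xJoin n n i) = 0 := by
      rw [Fintype.sum_sum_type]
      simp [xJoin]
    calc (∑ i, ∑ j, Xs i j) = (∑ i : Fin n ⊕ Fin n, xJoin n n i)
          * (∑ j : Fin n ⊕ Fin n, xJoin n n j) := by
          rw [Finset.sum_mul]
          refine Finset.sum_congr rfl fun i _ => ?_
          rw [Finset.mul_sum]
          exact Finset.sum_congr rfl fun j _ => by rw [hXs]; simp [Matrix.vecMulVec_apply]
      _ = 0 := by rw [h1]; ring
  have hC0 : (∑ i, ∑ j, MCaux.compW A B i j * (1 - Xs i j)) = 0 := by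
    refine Finset.sum_eq_zero fun i _ => Finset.sum_eq_zero fun j _ => ?_
    rcases i with i | i <;> rcases j with j | j
    · have : Xs (Sum.inl i) (Sum.inl j) = 1 := by rw [hXs]; simp [Matrix.vecMulVec_apply, xJoin]
      rw [this]; ring
    · simp [MCaux.compW]
    · simp [MCaux.compW]
    · have : Xs (Sum.inr i) (Sum.inr j) = 1 := by rw [hXs]; simp [Matrix.vecMulVec_apply, xJoin]
      rw [this]; ring
  have htraceXs : (lapW (joinW A B) * Xs).trace = 4 * (n : ℝ) ^ 2 := by
    rw [MCaux.trace_join_eq A B Xs hpsd hdiag, hT0, hC0]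
    ring
  -- every feasible value is at most n^2
  have hub : ∀ c ∈ {c | ∃ X : Matrix (Fin n ⊕ Fin n) (Fin n ⊕ Fin n) ℝ, X.PosSemidef ∧
      (∀ i, X i i = 1) ∧ c = (1 / 4) * (lapW (joinW A B) * X).trace}, c ≤ (n : ℝ) ^ 2 := by
    rintro c ⟨X, hX, hd, rfl⟩
    have hT : 0 ≤ ∑ i, ∑ j, X i j := by
      have h := hX.dotProduct_mulVec_nonneg (fun _ => 1)
      have hs : star (fun _ => (1 : ℝ) : (Fin n ⊕ Fin n) → ℝ) = fun _ => 1 := by ext k; simp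
      rw [hs] at h
      simpa [dotProduct, Matrix.mulVec] using h
    have hC : 0 ≤ ∑ i, ∑ j, MCaux.compW A B i j * (1 - X i j) := by
      refine Finset.sum_nonneg fun i _ => Finset.sum_nonneg fun j _ => mul_nonneg
        (MCaux.compW_nonneg A B i j) ?_
      have := MCaux.entry_le_one X hX hd i j
      linarith
    rw [MCaux.trace_join_eq A B X hX hd]
    linarith
  have hmem : (n : ℝ) ^ 2 ∈ {c | ∃ X : Matrix (Fin n ⊕ Fin n) (Fin n ⊕ Fin n) ℝ, X.PosSemidef ∧
      (∀ i, X i i = 1) ∧ c = (1 / 4) * (lapW (joinW A B) * X).trace} :=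
    ⟨Xs, hpsd, hdiag, by rw [htraceXs]; ring⟩
  have hsdp : sdpVal (joinW A B) = (n : ℝ) ^ 2 := by
    rw [sdpVal]
    exact le_antisymm (csSup_le ⟨_, hmem⟩ hub) (le_csSup ⟨(n : ℝ) ^ 2, hub⟩ hmem)
  refine ⟨⟨hpsd, hdiag, by rw [htraceXs, hsdp]; ring⟩, ?_⟩
  rintro X ⟨hX, hd, hval⟩
  rw [hsdp, MCaux.trace_join_eq A B X hX hd] at hval
  have hT : 0 ≤ ∑ i, ∑ j, X i j := by
    have h := hX.dotProduct_mulVec_nonneg (fun _ => 1)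
    have hs : star (fun _ => (1 : ℝ) : (Fin n ⊕ Fin n) → ℝ) = fun _ => 1 := by ext k; simp
    rw [hs] at h
    simpa [dotProduct, Matrix.mulVec] using h
  have hCnn : ∀ i j, 0 ≤ MCaux.compW A B i j * (1 - X i j) := by
    intro i j
    refine mul_nonneg (MCaux.compW_nonneg A B i j) ?_
    have := MCaux.entry_le_one X hX hd i j
    linarith
  have hC : 0 ≤ ∑ i, ∑ j, MCaux.compW A B i j * (1 - X i j) :=
    Finset.sum_nonneg fun i _ => Finset.sum_nonneg fun j _ => hCnn i j
  have hTz : (∑ i, ∑ j, X i j) = 0 := by linarith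
  have hCz : (∑ i, ∑ j, MCaux.compW A B i j * (1 - X i j)) = 0 := by linarith
  -- each complement-edge term vanishes
  have hterm : ∀ i j, MCaux.compW A B i j * (1 - X i j) = 0 := by
    have ho := (Finset.sum_eq_zero_iff_of_nonneg
        (fun i _ => Finset.sum_nonneg fun j _ => hCnn i j)).mp hCz
    intro i j
    exact (Finset.sum_eq_zero_iff_of_nonneg (fun j _ => hCnn i j)).mp
      (ho i (Finset.mem_univ i)) j (Finset.mem_univ j)
  have hedgeA : ∀ i j : Fin n, Aᶜ.Adj i j → X (Sum.inl i) (Sum.inl j) = 1 := by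
    intro i j hadj
    obtain ⟨hne, hnadj⟩ := hadj
    have hcw : MCaux.compW A B (Sum.inl i) (Sum.inl j) = 1 := by
      simp [MCaux.compW, hne, hnadj]
    have := hterm (Sum.inl i) (Sum.inl j)
    rw [hcw, one_mul] at this
    linarith
  have hedgeB : ∀ i j : Fin n, Bᶜ.Adj i j → X (Sum.inr i) (Sum.inr j) = 1 := by
    intro i j hadj
    obtain ⟨hne, hnadj⟩ := hadj
    have hcw : MCaux.compW A B (Sum.inr i) (Sum.inr j) = 1 := by
      simp [MCaux.compW, hne, hnadj]
    have := hterm (Sum.inr i) (Sum.inr j)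
    rw [hcw, one_mul] at this
    linarith
  -- rows sum to zero
  have hrow : ∀ k, ∑ j, X k j = 0 := by
    have hq : star (fun _ => (1 : ℝ) : (Fin n ⊕ Fin n) → ℝ) ⬝ᵥ X *ᵥ (fun _ => 1) = 0 := by
      have hs : star (fun _ => (1 : ℝ) : (Fin n ⊕ Fin n) → ℝ) = fun _ => 1 := by ext k; simp
      rw [hs]
      simpa [dotProduct, Matrix.mulVec] using hTz
    have hmv := (hX.dotProduct_mulVec_zero_iff _).mp hq
    intro k
    have hk := congrFun hmv k
    simpa [Matrix.mulVec, dotProduct] using hk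
  rcases hconn with h | h
  · obtain ⟨i0⟩ := h.nonempty
    have hones : ∀ i j, X (Sum.inl i) (Sum.inl j) = 1 :=
      MCaux.ones_of_connected h.preconnected X hX hd Sum.inl hedgeA
    obtain ⟨hcr, hBB⟩ := MCaux.half_determined X hX hd hrow Sum.inl Sum.inr
      (fun h => by rw [Fintype.sum_sum_type]) hones i0
    ext k l
    rcases k with k | k <;> rcases l with l | l
    · rw [hones k l, hXs]; simp [Matrix.vecMulVec_apply, xJoin]
    · rw [hcr k l, hXs]; simp [Matrix.vecMulVec_apply, xJoin]
    · rw [MCaux.sym X hX, hcr l k, hXs]; simp [Matrix.vecMulVec_apply, xJoin]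
    · rw [hBB k l, hXs]; simp [Matrix.vecMulVec_apply, xJoin]
  · obtain ⟨i0⟩ := h.nonempty
    have hones : ∀ i j, X (Sum.inr i) (Sum.inr j) = 1 :=
      MCaux.ones_of_connected h.preconnected X hX hd Sum.inr hedgeB
    obtain ⟨hcr, hAA⟩ := MCaux.half_determined X hX hd hrow Sum.inr Sum.inl
      (fun h => by rw [Fintype.sum_sum_type, add_comm]) hones i0
    ext k l
    rcases k with k | k <;> rcases l with l | l
    · rw [hAA k l, hXs]; simp [Matrix.vecMulVec_apply, xJoin]
    · rw [MCaux.sym X hX, hcr l k, hXs]; simp [Matrix.vecMulVec_apply, xJoin]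
    · rw [hcr k l, hXs]; simp [Matrix.vecMulVec_apply, xJoin]
    · rw [hones k l, hXs]; simp [Matrix.vecMulVec_apply, xJoin]
end

section
/- Let a₁ ≤ a₂ ≤ … ≤ aₙ be positive integers with aₙ < Σ_{i<n} aᵢ. Then the unweighted complete n-partite graph K(a₁,…,aₙ) is exact if and only if there exists a subset S ⊆ {1,…,n} with Σ_{i∈S} aᵢ = Σ_{i∉S} aᵢ. -/
open Matrix Finset

/-- The unweighted complete `n`-partite graph `K(a 0, …, a (n-1))`: vertices are pairs
`⟨i, v⟩` with `v` in a part of size `a i`, adjacent iff they lie in different parts. -/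
noncomputable def multiW {n : ℕ} (a : Fin n → ℕ) :
    (Σ i : Fin n, Fin (a i)) → (Σ i : Fin n, Fin (a i)) → ℝ :=
  fun u v => if u.1 = v.1 then 0 else 1


set_option linter.unusedSectionVars false

section General
variable {V : Type*} [Fintype V] [DecidableEq V]

lemma trace_lapW_mul (w : V → V → ℝ)
    (hw0 : ∀ i, w i i = 0) (X : Matrix V V ℝ) (hX1 : ∀ i, X i i = 1) :
    (lapW w * X).trace = ∑ u, ∑ v, w u v * (1 - X v u) := by
  have hL : ∀ u v, lapW w u v = (if u = v then ∑ k, w u k else 0) - w u v := by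
    intro u v
    by_cases h : u = v
    · subst h; simp [lapW, hw0]
    · simp [lapW, h]
  unfold Matrix.trace
  simp only [Matrix.diag_apply, Matrix.mul_apply, hL, sub_mul, Finset.sum_sub_distrib]
  rw [← Finset.sum_sub_distrib]
  congr 1
  ext u
  rw [Finset.sum_congr rfl (fun v _ => by rw [ite_mul, zero_mul]), Finset.sum_ite_eq]
  simp [hX1, mul_sub, Finset.sum_sub_distrib]

lemma hermit_symm {X : Matrix V V ℝ}
    (hX : X.IsHermitian) (u v : V) : X v u = X u v := by
  conv_lhs => rw [← hX]
  simp [Matrix.conjTranspose_apply]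

lemma psd_entry_le_one {X : Matrix V V ℝ}
    (hX : X.PosSemidef) (h1 : ∀ i, X i i = 1) (u v : V) : X u v ≤ 1 := by
  rcases eq_or_ne u v with rfl | huv
  · exact (h1 u).le
  have h := hX.dotProduct_mulVec_nonneg (Pi.single u 1 - Pi.single v 1)
  have e1 : X *ᵥ (Pi.single u 1 - Pi.single v 1) = fun i => X i u - X i v := by
    rw [Matrix.mulVec_sub]; funext i; simp [Matrix.mulVec_single]
  rw [e1] at h
  simp only [star_trivial, sub_dotProduct, single_dotProduct, one_mul] at h
  have := hermit_symm hX.isHermitian u v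
  simp only [h1] at h
  linarith [h]

lemma psd_sum_nonneg {X : Matrix V V ℝ} (hX : X.PosSemidef) :
    0 ≤ ∑ u, ∑ v, X v u := by
  have h := hX.dotProduct_mulVec_nonneg (fun _ => (1:ℝ))
  simp only [star_trivial, dotProduct, Matrix.mulVec, one_mul, mul_one] at h
  rw [Finset.sum_comm]
  exact h

lemma quad_eq_trace (w : V → V → ℝ) (x : V → ℝ) :
    x ⬝ᵥ (lapW w).mulVec x = (lapW w * Matrix.of (fun u v => x u * x v)).trace := by
  unfold Matrix.trace
  simp only [Matrix.diag_apply, Matrix.mul_apply, dotProduct, Matrix.mulVec, Finset.mul_sum]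
  refine Finset.sum_congr rfl fun u _ => Finset.sum_congr rfl fun v _ => ?_
  simp [Matrix.of_apply]; ring

end General

lemma split_exists {ι : Type*} [DecidableEq ι] (s : Finset ι) (f : ι → ℕ) (c : ℕ)
    (h : ∀ i ∈ s, f i ≤ c) :
    ∃ t ⊆ s, (2*((∑ i ∈ t, f i : ℕ) : ℤ) - ((∑ i ∈ s, f i : ℕ) : ℤ)) ≤ (c : ℤ) ∧
      (((∑ i ∈ s, f i : ℕ) : ℤ) - 2*((∑ i ∈ t, f i : ℕ) : ℤ)) ≤ (c : ℤ) := by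
  classical
  induction s using Finset.cons_induction with
  | empty => exact ⟨∅, by simp⟩
  | cons x s hx ih =>
    obtain ⟨t, hts, h1, h2⟩ := ih (fun i hi => h i (Finset.mem_cons_of_mem hi))
    have hfx : f x ≤ c := h x (Finset.mem_cons_self x s)
    by_cases hc : 2*((∑ i ∈ t, f i : ℕ) : ℤ) ≤ ((∑ i ∈ s, f i : ℕ) : ℤ)
    · refine ⟨Finset.cons x t (fun hxt => hx (hts hxt)),
        (Finset.cons_subset_cons).mpr hts, ?_, ?_⟩ <;>
      · rw [Finset.sum_cons, Finset.sum_cons]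
        omega
    · refine ⟨t, hts.trans (Finset.subset_cons _), ?_, ?_⟩ <;>
      · rw [Finset.sum_cons]
        omega

lemma triangle_vectors (p q c : ℝ) (hc : 0 < c) (h1 : c < p + q) (h2 : p ≤ q + c)
    (h3 : q ≤ p + c) :
    ∃ u v w : Fin 2 → ℝ,
      (u 0)^2 + (u 1)^2 = 1 ∧ (v 0)^2 + (v 1)^2 = 1 ∧ (w 0)^2 + (w 1)^2 = 1 ∧
      ∀ k, p * u k + q * v k + c * w k = 0 := by
  have hp : 0 < p := by by_contra h; push_neg at h; linarith
  have hq : 0 < q := by by_contra h; push_neg at h; linarith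
  set cu := (c^2 + p^2 - q^2)/(2*c*p) with hcu_def
  set cv := (c^2 + q^2 - p^2)/(2*c*q) with hcv_def
  have hprod : 0 ≤ (p+q+c)*(p+q-c)*(c+p-q)*(c+q-p) := by
    have h4 : 0 ≤ (p+q+c)*(p+q-c) := mul_nonneg (by linarith) (by linarith)
    have h5 : 0 ≤ (p+q+c)*(p+q-c)*(c+p-q) := mul_nonneg h4 (by linarith)
    exact mul_nonneg h5 (by linarith)
  have hcu2 : cu^2 ≤ 1 := by
    rw [hcu_def, div_pow, div_le_one (by positivity)]
    nlinarith
  have hcv2 : cv^2 ≤ 1 := by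
    rw [hcv_def, div_pow, div_le_one (by positivity)]
    nlinarith
  set su := Real.sqrt (1 - cu^2) with hsu_def
  set sv := Real.sqrt (1 - cv^2) with hsv_def
  have hsu2 : su^2 = 1 - cu^2 := Real.sq_sqrt (by linarith)
  have hsv2 : sv^2 = 1 - cv^2 := Real.sq_sqrt (by linarith)
  have e3 : p^2 * (1 - cu^2) = q^2 * (1 - cv^2) := by
    rw [hcu_def, hcv_def]
    field_simp
    ring
  have key : p * su = q * sv := by
    calc p * su = Real.sqrt (p^2 * (1 - cu^2)) := by
          rw [Real.sqrt_mul (sq_nonneg p), Real.sqrt_sq hp.le]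
      _ = Real.sqrt (q^2 * (1 - cv^2)) := by rw [e3]
      _ = q * sv := by rw [Real.sqrt_mul (sq_nonneg q), Real.sqrt_sq hq.le]
  refine ⟨![cu, su], ![cv, -sv], ![-1, 0], by simp [hsu2], by simp [hsv2], by norm_num, ?_⟩
  intro k
  fin_cases k
  · show p * cu + q * cv + c * (-1) = 0
    rw [hcu_def, hcv_def]
    field_simp
    ring
  · show p * su + q * (-sv) + c * 0 = 0
    linarith [key]


section Multi

variable {n : ℕ} {a : Fin (n+1) → ℕ}

local notation "Vt" => (Σ i : Fin (n+1), Fin (a i))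

lemma sumV (F : Vt → ℝ) :
    ∑ u, F u = ∑ i, ∑ j, F ⟨i, j⟩ := by
  rw [← Finset.univ_sigma_univ, Finset.sum_sigma]

lemma multiW_sum (g : Vt → Vt → ℝ) :
    ∑ u, ∑ v, multiW a u v * g u v =
      (∑ u, ∑ v, g u v) - ∑ i, ∑ j, ∑ j', g ⟨i, j⟩ ⟨i, j'⟩ := by
  have h : ∀ u v, multiW a u v * g u v = g u v - (if u.1 = v.1 then g u v else 0) := by
    intro u v
    by_cases h : u.1 = v.1 <;> simp [multiW, h]
  simp only [h, Finset.sum_sub_distrib]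
  congr 1
  rw [sumV (fun u => ∑ v, if u.1 = v.1 then g u v else 0)]
  refine Finset.sum_congr rfl fun i _ => Finset.sum_congr rfl fun j _ => ?_
  rw [sumV (fun v => if i = v.1 then g ⟨i,j⟩ v else 0)]
  have : ∀ i' : Fin (n+1), (∑ j' : Fin (a i'), if i = i' then g ⟨i,j⟩ ⟨i',j'⟩ else 0)
      = if i = i' then ∑ j' : Fin (a i'), g ⟨i,j⟩ ⟨i',j'⟩ else 0 := by
    intro i'; split <;> simp
  simp only [this, Finset.sum_ite_eq, Finset.mem_univ, if_true]

lemma card_sq : ∑ _u : Vt, ∑ _v : Vt, (1:ℝ) = ((∑ i, a i : ℕ) : ℝ)^2 := by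
  simp [Finset.card_univ, Fintype.card_sigma]
  push_cast
  ring

lemma trace_multiW (X : Matrix Vt Vt ℝ) (hX1 : ∀ u, X u u = 1) :
    (lapW (multiW a) * X).trace
      = (((∑ i, a i : ℕ) : ℝ)^2 - ∑ u, ∑ v, X v u)
        - ((∑ i, (a i:ℝ)^2) - ∑ i, ∑ j : Fin (a i), ∑ j' : Fin (a i), X ⟨i,j'⟩ ⟨i,j⟩) := by
  rw [trace_lapW_mul _ (fun u => by simp [multiW]) X hX1, multiW_sum]
  congr 1
  · rw [← card_sq]
    simp [mul_sub, Finset.sum_sub_distrib]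
  · simp only [mul_sub, Finset.sum_sub_distrib]
    congr 1
    refine Finset.sum_congr rfl fun i _ => ?_
    simp
    ring

lemma sdp_le (X : Matrix Vt Vt ℝ) (hX : X.PosSemidef) (h1 : ∀ i, X i i = 1) :
    (lapW (multiW a) * X).trace ≤ (((∑ i, a i : ℕ) : ℝ))^2 := by
  rw [trace_multiW X h1]
  have hS := psd_sum_nonneg hX
  have hB : ∑ i, ∑ j : Fin (a i), ∑ j' : Fin (a i), X ⟨i,j'⟩ ⟨i,j⟩ ≤ ∑ i, (a i:ℝ)^2 := by
    refine Finset.sum_le_sum fun i _ => ?_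
    calc ∑ j : Fin (a i), ∑ j' : Fin (a i), X ⟨i,j'⟩ ⟨i,j⟩
        ≤ ∑ _j : Fin (a i), ∑ _j' : Fin (a i), (1:ℝ) :=
          Finset.sum_le_sum fun j _ => Finset.sum_le_sum fun j' _ =>
            psd_entry_le_one hX h1 _ _
      _ = (a i:ℝ)^2 := by simp; ring
  linarith

lemma exists_opt_X (hpos : ∀ i, 0 < a i) (hmono : Monotone a)
    (hnd : a (Fin.last n) < ∑ i : Fin n, a i.castSucc) :
    ∃ X : Matrix Vt Vt ℝ, X.PosSemidef ∧ (∀ u, X u u = 1) ∧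
      (lapW (multiW a) * X).trace = (((∑ i, a i : ℕ)) : ℝ)^2 := by
  classical
  obtain ⟨t, hts, hb1, hb2⟩ := split_exists (Finset.univ.erase (Fin.last n)) a
    (a (Fin.last n)) (fun i _ => hmono (Fin.le_last i))
  have h1 := Finset.add_sum_erase Finset.univ a (Finset.mem_univ (Fin.last n))
  have h2 := Fin.sum_univ_castSucc a
  have hs_sum : ∑ i ∈ Finset.univ.erase (Fin.last n), a i = ∑ i : Fin n, a i.castSucc := by
    omega
  have hsplit : ∑ i ∈ Finset.univ.erase (Fin.last n) \ t, a i + ∑ i ∈ t, a i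
      = ∑ i ∈ Finset.univ.erase (Fin.last n), a i := Finset.sum_sdiff hts
  have hz2 : (∑ i ∈ t, a i) ≤ (∑ i ∈ Finset.univ.erase (Fin.last n) \ t, a i)
      + a (Fin.last n) := by omega
  have hz3 : (∑ i ∈ Finset.univ.erase (Fin.last n) \ t, a i) ≤ (∑ i ∈ t, a i)
      + a (Fin.last n) := by omega
  obtain ⟨u, v, w, hu, hv, hw, hsum⟩ := triangle_vectors
    ((∑ i ∈ t, a i : ℕ) : ℝ) ((∑ i ∈ Finset.univ.erase (Fin.last n) \ t, a i : ℕ) : ℝ)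
    ((a (Fin.last n) : ℕ) : ℝ)
    (by exact_mod_cast hpos _)
    (by exact_mod_cast (by omega : a (Fin.last n) < ∑ i ∈ t, a i
          + ∑ i ∈ Finset.univ.erase (Fin.last n) \ t, a i))
    (by exact_mod_cast hz2)
    (by exact_mod_cast hz3)
  set vec : Fin (n+1) → Fin 2 → ℝ :=
    fun i => if i = Fin.last n then w else if i ∈ t then u else v with hvec_def
  have hunit : ∀ i, (vec i 0)^2 + (vec i 1)^2 = 1 := by
    intro i
    rw [hvec_def]
    dsimp only
    split
    · exact hw
    · split
      · exact hu
      · exact hv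
  have hsame : ∀ i, ∑ k, vec i k * vec i k = 1 := by
    intro i
    rw [Fin.sum_univ_two]
    nlinarith [hunit i]
  have hzero : ∀ k, ∑ i, (a i:ℝ) * vec i k = 0 := by
    intro k
    rw [← Finset.add_sum_erase Finset.univ _ (Finset.mem_univ (Fin.last n)),
      ← Finset.sum_sdiff hts]
    have et : ∀ i ∈ t, (a i:ℝ) * vec i k = (a i:ℝ) * u k := by
      intro i hi
      rw [hvec_def]
      simp [Finset.ne_of_mem_erase (hts hi), hi]
    have est : ∀ i ∈ Finset.univ.erase (Fin.last n) \ t, (a i:ℝ) * vec i k = (a i:ℝ) * v k := by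
      intro i hi
      rw [Finset.mem_sdiff] at hi
      rw [hvec_def]
      simp [Finset.ne_of_mem_erase hi.1, hi.2]
    rw [Finset.sum_congr rfl et, Finset.sum_congr rfl est, ← Finset.sum_mul, ← Finset.sum_mul]
    have hlast : vec (Fin.last n) = w := by rw [hvec_def]; simp
    rw [hlast]
    have hs := hsum k
    push_cast at hs ⊢
    linarith
  have hVsum : ∀ k, ∑ v' : Vt, vec v'.1 k = 0 := by
    intro k
    rw [sumV (fun v' => vec v'.1 k)]
    rw [← hzero k]
    refine Finset.sum_congr rfl fun i _ => ?_
    simp [Finset.sum_const, Finset.card_univ, nsmul_eq_mul]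
  refine ⟨Matrix.of fun u' v' => ∑ k, vec u'.1 k * vec v'.1 k, ?_, ?_, ?_⟩
  · have : (Matrix.of fun u' v' : Vt => ∑ k, vec u'.1 k * vec v'.1 k)
        = (Matrix.of fun (k : Fin 2) (u' : Vt) => vec u'.1 k)ᴴ
          * (Matrix.of fun (k : Fin 2) (u' : Vt) => vec u'.1 k) := by
      ext u' v'
      simp [Matrix.mul_apply, Matrix.conjTranspose_apply]
    rw [this]
    exact Matrix.posSemidef_conjTranspose_mul_self _
  · intro u'
    exact hsame u'.1
  · rw [trace_multiW _ (fun u' => hsame u'.1)]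
    have hS : ∑ u' : Vt, ∑ v' : Vt, (Matrix.of fun u' v' : Vt =>
        ∑ k, vec u'.1 k * vec v'.1 k) v' u' = 0 := by
      refine Finset.sum_eq_zero fun u' _ => ?_
      show ∑ v' : Vt, ∑ k, vec v'.1 k * vec u'.1 k = 0
      rw [Finset.sum_comm]
      refine Finset.sum_eq_zero fun k _ => ?_
      rw [← Finset.sum_mul, hVsum k, zero_mul]
    have hBt : ∑ i, ∑ j : Fin (a i), ∑ j' : Fin (a i), (Matrix.of fun u' v' : Vt =>
        ∑ k, vec u'.1 k * vec v'.1 k) ⟨i,j'⟩ ⟨i,j⟩ = ∑ i, (a i:ℝ)^2 := by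
      refine Finset.sum_congr rfl fun i _ => ?_
      have : ∀ (j j' : Fin (a i)), (Matrix.of fun u' v' : Vt =>
          ∑ k, vec u'.1 k * vec v'.1 k) ⟨i,j'⟩ ⟨i,j⟩ = 1 := fun j j' => hsame i
      simp only [this]
      simp [Finset.sum_const, Finset.card_univ, nsmul_eq_mul]
      ring
    rw [hS, hBt]
    ring
lemma cut_val (x : Vt → ℝ) (hx : ∀ u, x u = 1 ∨ x u = -1) :
    x ⬝ᵥ (lapW (multiW a)).mulVec x
      = (((∑ i, a i : ℕ) : ℝ)^2 - (∑ i, ∑ j, x ⟨i,j⟩)^2)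
        - ((∑ i, (a i:ℝ)^2) - ∑ i, (∑ j, x ⟨i,j⟩)^2) := by
  rw [quad_eq_trace]
  rw [trace_multiW (Matrix.of (fun u v => x u * x v))
    (fun u => by rcases hx u with h | h <;> simp [h])]
  have hS : ∑ u : Vt, ∑ v : Vt, (Matrix.of (fun u v : Vt => x u * x v)) v u
      = (∑ i, ∑ j, x ⟨i,j⟩)^2 := by
    have : ∀ u : Vt, ∑ v : Vt, x v * x u = (∑ v : Vt, x v) * x u := by
      intro u; rw [Finset.sum_mul]
    show ∑ u : Vt, ∑ v : Vt, x v * x u = _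
    simp only [this]
    rw [← Finset.mul_sum, ← sumV x, sq]
  have hB : ∀ i : Fin (n+1), ∑ j : Fin (a i), ∑ j' : Fin (a i),
      (Matrix.of (fun u v : Vt => x u * x v)) ⟨i,j'⟩ ⟨i,j⟩ = (∑ j, x ⟨i,j⟩)^2 := by
    intro i
    show ∑ j : Fin (a i), ∑ j' : Fin (a i), x ⟨i,j'⟩ * x ⟨i,j⟩ = _
    have : ∀ j : Fin (a i), ∑ j' : Fin (a i), x ⟨i,j'⟩ * x ⟨i,j⟩
        = (∑ j' : Fin (a i), x ⟨i,j'⟩) * x ⟨i,j⟩ := by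
      intro j; rw [Finset.sum_mul]
    simp only [this]
    rw [← Finset.mul_sum, sq]
  rw [hS]
  congr 1
  congr 1
  exact Finset.sum_congr rfl fun i _ => hB i

lemma sigma_int (x : Vt → ℝ) (hx : ∀ u, x u = 1 ∨ x u = -1) (i : Fin (n+1)) :
    ∃ m : ℤ, ((m:ℝ) = ∑ j, x ⟨i,j⟩) ∧ |m| ≤ (a i : ℤ) := by
  classical
  refine ⟨∑ j : Fin (a i), (if x ⟨i,j⟩ = 1 then 1 else -1 : ℤ), ?_, ?_⟩
  · push_cast
    refine Finset.sum_congr rfl fun j _ => ?_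
    rcases hx ⟨i,j⟩ with h | h <;> rw [h] <;> norm_num
  · calc |∑ j : Fin (a i), (if x ⟨i,j⟩ = 1 then 1 else -1 : ℤ)|
        ≤ ∑ j : Fin (a i), |(if x ⟨i,j⟩ = 1 then 1 else -1 : ℤ)| :=
          Finset.abs_sum_le_sum_abs _ _
      _ = ∑ _j : Fin (a i), 1 := Finset.sum_congr rfl fun j _ => by split <;> norm_num
      _ = (a i : ℤ) := by simp

lemma sq_sigma_le (x : Vt → ℝ) (hx : ∀ u, x u = 1 ∨ x u = -1) (i : Fin (n+1)) :
    (∑ j, x ⟨i,j⟩)^2 ≤ (a i:ℝ)^2 := by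
  obtain ⟨m, hm, habs⟩ := sigma_int x hx i
  rw [← hm]
  have h := abs_le.mp habs
  have : m^2 ≤ (a i:ℤ)^2 := by nlinarith [h.1, h.2]
  exact_mod_cast this

lemma cut_le (x : Vt → ℝ) (hx : ∀ u, x u = 1 ∨ x u = -1) :
    x ⬝ᵥ (lapW (multiW a)).mulVec x ≤ ((∑ i, a i : ℕ) : ℝ)^2 := by
  rw [cut_val x hx]
  have h1 : ∑ i, (∑ j, x ⟨i,j⟩)^2 ≤ ∑ i, (a i:ℝ)^2 :=
    Finset.sum_le_sum fun i _ => sq_sigma_le x hx i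
  nlinarith [sq_nonneg (∑ i, ∑ j, x (⟨i,j⟩ : Vt))]

lemma cut_balanced (S : Finset (Fin (n+1))) (hbal : ∑ i ∈ S, a i = ∑ i ∈ Sᶜ, a i) :
    ∃ x : Vt → ℝ, (∀ u, x u = 1 ∨ x u = -1) ∧
      x ⬝ᵥ (lapW (multiW a)).mulVec x = ((∑ i, a i : ℕ) : ℝ)^2 := by
  classical
  set x : Vt → ℝ := fun u => if u.1 ∈ S then 1 else -1 with hx_def
  have hx : ∀ u, x u = 1 ∨ x u = -1 := by
    intro u; rw [hx_def]; dsimp only; split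
    · exact Or.inl rfl
    · exact Or.inr rfl
  have hsig : ∀ i, ∑ j : Fin (a i), x ⟨i,j⟩ = if i ∈ S then (a i:ℝ) else -(a i:ℝ) := by
    intro i
    have : ∀ j : Fin (a i), x ⟨i,j⟩ = if i ∈ S then (1:ℝ) else -1 := by
      intro j; rw [hx_def]
    rw [Finset.sum_congr rfl fun j _ => this j, Finset.sum_const, Finset.card_univ]
    split <;> simp [nsmul_eq_mul]
  refine ⟨x, hx, ?_⟩
  rw [cut_val x hx]
  have hsum0 : ∑ i, ∑ j : Fin (a i), x ⟨i,j⟩ = 0 := by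
    simp only [hsig]
    rw [Finset.sum_ite, Finset.filter_univ_mem, ← Finset.compl_filter,
      Finset.filter_univ_mem, Finset.sum_neg_distrib]
    have hb : ((∑ i ∈ S, a i : ℕ) : ℝ) = ((∑ i ∈ Sᶜ, a i : ℕ) : ℝ) := by exact_mod_cast hbal
    push_cast at hb
    linarith
  have hsq : ∑ i, (∑ j : Fin (a i), x ⟨i,j⟩)^2 = ∑ i, (a i:ℝ)^2 := by
    refine Finset.sum_congr rfl fun i _ => ?_
    rw [hsig]; split <;> ring
  rw [hsum0, hsq]
  ring

lemma cut_unbalanced (hpos : ∀ i, 0 < a i)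
    (hnb : ∀ S : Finset (Fin (n+1)), ∑ i ∈ S, a i ≠ ∑ i ∈ Sᶜ, a i)
    (x : Vt → ℝ) (hx : ∀ u, x u = 1 ∨ x u = -1) :
    x ⬝ᵥ (lapW (multiW a)).mulVec x ≤ ((∑ i, a i : ℕ) : ℝ)^2 - 1 := by
  classical
  rw [cut_val x hx]
  choose m hm habs using fun i => sigma_int x hx i
  by_cases hall : ∀ i, m i = a i ∨ m i = -(a i : ℤ)
  · set S : Finset (Fin (n+1)) := Finset.univ.filter (fun i => m i = a i) with hS_def
    have hd : ∑ i, m i = ((∑ i ∈ S, a i : ℕ) : ℤ) - ((∑ i ∈ Sᶜ, a i : ℕ) : ℤ) := by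
      rw [← Finset.sum_filter_add_sum_filter_not Finset.univ (fun i => m i = (a i : ℤ))]
      have e1 : ∑ i ∈ Finset.univ.filter (fun i => m i = (a i:ℤ)), m i
          = ((∑ i ∈ S, a i : ℕ) : ℤ) := by
        push_cast
        exact Finset.sum_congr rfl fun i hi => (Finset.mem_filter.mp hi).2
      have e2 : ∑ i ∈ Finset.univ.filter (fun i => ¬ m i = (a i:ℤ)), m i
          = -((∑ i ∈ Sᶜ, a i : ℕ) : ℤ) := by
        have hset : Finset.univ.filter (fun i => ¬ m i = (a i:ℤ)) = Sᶜ := by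
          rw [hS_def, Finset.compl_filter]
        rw [hset]
        push_cast
        rw [← Finset.sum_neg_distrib]
        refine Finset.sum_congr rfl fun i hi => ?_
        have hns : i ∉ S := Finset.mem_compl.mp hi
        have hne : ¬ (m i = (a i:ℤ)) := by
          intro hc
          exact hns (by rw [hS_def]; exact Finset.mem_filter.mpr ⟨Finset.mem_univ i, hc⟩)
        rcases hall i with h | h
        · exact absurd h hne
        · rw [h]
      rw [e1, e2]
      ring
    have hne : (∑ i, m i) ≠ 0 := by
      rw [hd]
      intro hc
      exact hnb S (by omega)
    have h1 : (1:ℝ) ≤ (∑ i, ∑ j, x ⟨i,j⟩)^2 := by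
      have : ((∑ i, m i : ℤ) : ℝ) = ∑ i, ∑ j, x ⟨i,j⟩ := by
        push_cast
        exact Finset.sum_congr rfl fun i _ => hm i
      rw [← this]
      have : 1 ≤ (∑ i, m i)^2 := by
        rcases hne.lt_or_gt with h | h <;> nlinarith
      exact_mod_cast this
    have h2 : ∑ i, (∑ j, x ⟨i,j⟩)^2 ≤ ∑ i, (a i:ℝ)^2 :=
      Finset.sum_le_sum fun i _ => sq_sigma_le x hx i
    linarith
  · push_neg at hall
    obtain ⟨i₀, h1, h2⟩ := hall
    have hsq : (∑ j, x ⟨i₀,j⟩)^2 ≤ (a i₀:ℝ)^2 - 1 := by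
      rw [← hm i₀]
      have hb := abs_le.mp (habs i₀)
      have hp := hpos i₀
      have : m i₀ ^2 ≤ (a i₀:ℤ)^2 - 1 := by
        have hle : m i₀ ≤ (a i₀ : ℤ) - 1 := by omega
        have hge : -((a i₀:ℤ) - 1) ≤ m i₀ := by omega
        nlinarith
      exact_mod_cast this
    have h3 : ∑ i, (∑ j, x ⟨i,j⟩)^2 ≤ (∑ i, (a i:ℝ)^2) - 1 := by
      have e1 := Finset.add_sum_erase Finset.univ (fun i => (∑ j, x (⟨i,j⟩:Vt))^2)
        (Finset.mem_univ i₀)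
      have e2 := Finset.add_sum_erase Finset.univ (fun i => (a i:ℝ)^2)
        (Finset.mem_univ i₀)
      have e3 : ∑ i ∈ Finset.univ.erase i₀, (∑ j, x (⟨i,j⟩:Vt))^2
          ≤ ∑ i ∈ Finset.univ.erase i₀, (a i:ℝ)^2 :=
        Finset.sum_le_sum fun i _ => sq_sigma_le x hx i
      linarith [e1, e2, e3, hsq]
    nlinarith [sq_nonneg (∑ i, ∑ j, x (⟨i,j⟩:Vt))]
lemma sdpVal_eq (hpos : ∀ i, 0 < a i) (hmono : Monotone a)
    (hnd : a (Fin.last n) < ∑ i : Fin n, a i.castSucc) :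
    sdpVal (multiW a) = ((∑ i, a i : ℕ) : ℝ)^2 / 4 := by
  obtain ⟨X, hX, h1, htr⟩ := exists_opt_X hpos hmono hnd
  apply le_antisymm
  · apply csSup_le
    · exact ⟨_, ⟨X, hX, h1, rfl⟩⟩
    rintro c ⟨Y, hY, hY1, rfl⟩
    have := sdp_le Y hY hY1
    linarith
  · apply le_csSup
    · refine ⟨((∑ i, a i : ℕ) : ℝ)^2 / 4, ?_⟩
      rintro c ⟨Y, hY, hY1, rfl⟩
      have := sdp_le Y hY hY1
      linarith
    · exact ⟨X, hX, h1, by rw [htr]; ring⟩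

lemma maxCut_bdd : BddAbove {c | ∃ x : (Σ i : Fin (n+1), Fin (a i)) → ℝ,
    (∀ i, x i = 1 ∨ x i = -1) ∧ c = (1 / 4) * (x ⬝ᵥ (lapW (multiW a)).mulVec x)} := by
  refine ⟨((∑ i, a i : ℕ) : ℝ)^2 / 4, ?_⟩
  rintro c ⟨x, hx, rfl⟩
  have := cut_le x hx
  linarith

lemma maxCut_nonempty : {c | ∃ x : (Σ i : Fin (n+1), Fin (a i)) → ℝ,
    (∀ i, x i = 1 ∨ x i = -1) ∧ c = (1 / 4) * (x ⬝ᵥ (lapW (multiW a)).mulVec x)}.Nonempty :=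
  ⟨_, fun _ => (1:ℝ), fun _ => Or.inl rfl, rfl⟩

theorem multiW_isExact_iff_exists_balanced' (hpos : ∀ i, 0 < a i) (hmono : Monotone a)
    (hnd : a (Fin.last n) < ∑ i : Fin n, a i.castSucc) :
    IsExact (multiW a) ↔
      ∃ S : Finset (Fin (n + 1)), ∑ i ∈ S, a i = ∑ i ∈ Sᶜ, a i := by
  constructor
  · intro hex
    by_contra hno
    push_neg at hno
    have h1 : maxCutVal (multiW a) ≤ (((∑ i, a i : ℕ) : ℝ)^2 - 1) / 4 := by
      apply csSup_le maxCut_nonempty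
      rintro c ⟨x, hx, rfl⟩
      have := cut_unbalanced hpos hno x hx
      linarith
    rw [IsExact, sdpVal_eq hpos hmono hnd] at hex
    rw [← hex] at h1
    linarith
  · rintro ⟨S, hS⟩
    obtain ⟨x, hx, hquad⟩ := cut_balanced S hS
    rw [IsExact, sdpVal_eq hpos hmono hnd]
    apply le_antisymm
    · apply le_csSup maxCut_bdd
      exact ⟨x, hx, by rw [hquad]; ring⟩
    · apply csSup_le maxCut_nonempty
      rintro c ⟨y, hy, rfl⟩
      have := cut_le y hy
      linarith
end Multi

/-- **NP-hardness gadget: exactness of complete multipartite graphs.**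
Let `a 0 ≤ a 1 ≤ … ≤ a n` be positive integers with the largest, `a (Fin.last n)`, smaller
than the sum of the others. Then `K(a 0, …, a n)` is exact iff there is a subset `S` of the
indices with `∑_{i ∈ S} a i = ∑_{i ∉ S} a i`. -/
theorem multiW_isExact_iff_exists_balanced {n : ℕ} (a : Fin (n + 1) → ℕ)
    (hpos : ∀ i, 0 < a i) (hmono : Monotone a)
    (hnd : a (Fin.last n) < ∑ i : Fin n, a i.castSucc) :
    IsExact (multiW a) ↔
      ∃ S : Finset (Fin (n + 1)), ∑ i ∈ S, a i = ∑ i ∈ Sᶜ, a i := by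
  exact multiW_isExact_iff_exists_balanced' hpos hmono hnd
end

section
/- Let n ≥ 3 and let m ∈ ℝⁿ with all entries positive be non-dominating, i.e. mⱼ < Σ_{k≠j} m_k for every j. Let G be the complete graph on n vertices weighted by m, i.e. with edge weights w_{ij} = mᵢmⱼ for i ≠ j, and set M = Σᵢ mᵢ. Then the Max-Cut SDP for G admits an optimal solution X_G with rank(X_G) = n − 1 and (1/4)·tr(L_G X_G) = M²/4; in particular φ(G) = M²/4. -/
open Matrix Finset

/-- The complete graph on `n` vertices weighted by `m`: edge `ij` has weight `mᵢ mⱼ`. -/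
noncomputable def completeW {n : ℕ} (m : Fin n → ℝ) : Fin n → Fin n → ℝ :=
  fun i j => if i = j then 0 else m i * m j

lemma triangle_exists (a b c : ℝ) (ha : 0 < a) (hb : 0 < b) (hc : 0 < c)
    (h1 : a < b + c) (h2 : b < a + c) (h3 : c < a + b) :
    ∃ α β γ δ : ℝ, α^2 + β^2 = 1 ∧ γ^2 + δ^2 = 1 ∧ b*α + c*γ = a ∧ b*β = c*δ ∧ 0 < β ∧ 0 < δ := by
  set α : ℝ := (a^2+b^2-c^2)/(2*a*b) with hα
  set γ : ℝ := (a^2+c^2-b^2)/(2*a*c) with hγ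
  have hα2 : α^2 < 1 := by
    rw [hα, div_pow, div_lt_one (by positivity)]
    nlinarith [mul_pos (sub_pos.2 h1) (sub_pos.2 h2), mul_pos (sub_pos.2 h3) (add_pos (add_pos ha hb) hc)]
  set β : ℝ := Real.sqrt (1 - α^2) with hβ
  have hβ0 : 0 < β := Real.sqrt_pos.2 (by linarith)
  have hβ2 : β^2 = 1 - α^2 := Real.sq_sqrt (by linarith)
  refine ⟨α, β, γ, b*β/c, by linarith, ?_, ?_, by field_simp, hβ0, by positivity⟩
  · have : (b*β/c)^2 = b^2*(1-α^2)/c^2 := by rw [div_pow, mul_pow, hβ2]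
    rw [this, hγ, hα]
    field_simp
    ring
  · rw [hα, hγ]; field_simp; ring

lemma base_case (m : Fin 3 → ℝ) (hpos : ∀ i, 0 < m i) (hnd : ∀ j, 2 * m j < ∑ i, m i) :
    ∃ v : Fin 3 → Fin 3 → ℝ,
      (∀ i, ∑ k, v i k * v i k = 1) ∧
      (∀ k, ∑ i, m i * v i k = 0) ∧
      (∀ x : Fin 3 → ℝ, (∀ k, ∑ i, x i * v i k = 0) → ∃ c : ℝ, x = c • m) := by
  have hsum : ∑ i, m i = m 0 + m 1 + m 2 := by rw [Fin.sum_univ_three]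
  have h0 := hnd 0; have h1 := hnd 1; have h2 := hnd 2
  rw [hsum] at h0 h1 h2
  obtain ⟨α, β, γ, δ, hαβ, hγδ, hclose, hβδ, hβ0, hδ0⟩ :=
    triangle_exists (m 0) (m 1) (m 2) (hpos 0) (hpos 1) (hpos 2)
      (by linarith) (by linarith) (by linarith)
  refine ⟨![![1,0,0], ![-α, β, 0], ![-γ, -δ, 0]], ?_, ?_, ?_⟩
  · intro i
    fin_cases i
    · simp [Fin.sum_univ_three]
    · simp [Fin.sum_univ_three]; linear_combination hαβ
    · simp [Fin.sum_univ_three]; linear_combination hγδ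
  · intro k
    fin_cases k
    · simp [Fin.sum_univ_three]; linear_combination -hclose
    · simp [Fin.sum_univ_three]; linear_combination hβδ
    · simp [Fin.sum_univ_three]
  · intro x hx
    have e0 := hx 0; have e1 := hx 1
    rw [Fin.sum_univ_three] at e0 e1
    simp only [Matrix.cons_val_zero, Matrix.cons_val_one, Matrix.head_cons,
      Matrix.cons_val_two, Matrix.tail_cons] at e0 e1
    -- e0 : x 0 * 1 + x 1 * (-α) + x 2 * (-γ) = 0
    -- e1 : x 0 * 0 + x 1 * β + x 2 * (-δ) = 0
    have key : β * (x 1 * m 2 - x 2 * m 1) = 0 := by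
      linear_combination m 2 * e1 - x 2 * hβδ
    have h12 : x 1 * m 2 = x 2 * m 1 := by
      have := mul_eq_zero.1 key
      rcases this with h | h
      · exact absurd h (ne_of_gt hβ0)
      · linarith
    refine ⟨x 1 / m 1, funext fun i => ?_⟩
    have hm1 : m 1 ≠ 0 := ne_of_gt (hpos 1)
    fin_cases i
    · -- x 0 = (x 1 / m 1) * m 0
      have hx0 : x 0 * m 1 = x 1 * m 0 := by
        linear_combination m 1 * e0 + x 1 * hclose - γ * h12
      show x 0 = x 1 / m 1 * m 0
      field_simp
      linarith [hx0]
    · show x 1 = x 1 / m 1 * m 1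
      field_simp
    · show x 2 = x 1 / m 1 * m 2
      field_simp
      linarith [h12]

lemma exists_good_v : ∀ (n : ℕ), 3 ≤ n → ∀ m : Fin n → ℝ, (∀ i, 0 < m i) →
    (∀ j, 2 * m j < ∑ i, m i) →
    ∃ v : Fin n → Fin n → ℝ,
      (∀ i, ∑ k, v i k * v i k = 1) ∧
      (∀ k, ∑ i, m i * v i k = 0) ∧
      (∀ x : Fin n → ℝ, (∀ k, ∑ i, x i * v i k = 0) → ∃ c : ℝ, x = c • m) := by
  intro n hn
  induction n, hn using Nat.le_induction with
  | base => exact base_case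
  | succ n hn IH =>
    obtain ⟨p, rfl⟩ : ∃ p, n = p + 2 := ⟨n - 2, by omega⟩
    intro m hpos hnd
    set R := ∑ j : Fin (p+1), m j.succ.succ with hRdef
    have hM : ∑ i, m i = m 0 + m 1 + R := by
      rw [Fin.sum_univ_succ, Fin.sum_univ_succ, Fin.succ_zero_eq_one]; ring
    have hR0 : 0 < R := Finset.sum_pos (fun j _ => hpos _) Finset.univ_nonempty
    have hRj : ∀ j : Fin (p+1), m j.succ.succ < R := by
      intro j
      have hsplit := Finset.sum_erase_add Finset.univ (fun j : Fin (p+1) => m j.succ.succ)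
        (Finset.mem_univ j)
      have hne : (Finset.univ.erase j).Nonempty := by
        rw [← Finset.card_pos, Finset.card_erase_of_mem (Finset.mem_univ j)]
        simp
        omega
      have hposs : 0 < ∑ j' ∈ Finset.univ.erase j, m j'.succ.succ :=
        Finset.sum_pos (fun _ _ => hpos _) hne
      rw [hRdef]
      linarith [hsplit]
    obtain ⟨μ, hμ0, hμR, hμ01, h0μ1, h1μ0, hμj⟩ :
        ∃ μ : ℝ, 0 < μ ∧ μ < R ∧ μ < m 0 + m 1 ∧ m 0 < μ + m 1 ∧ m 1 < μ + m 0 ∧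
          ∀ j : Fin (p+1), 2 * m j.succ.succ - R < μ := by
      set T : Finset ℝ :=
        insert |m 0 - m 1| (Finset.image (fun j : Fin (p+1) => 2 * m j.succ.succ - R) Finset.univ)
        with hT
      have hTne : T.Nonempty := Finset.insert_nonempty _ _
      set L := T.max' hTne with hL
      set U := min (m 0 + m 1) R with hU
      have hLU : L < U := by
        rw [hL, Finset.max'_lt_iff]
        intro x hx
        rw [hT, Finset.mem_insert] at hx
        rcases hx with rfl | hx
        · rw [hU, lt_min_iff]
          have h0 := hnd 0; have h1 := hnd 1
          rw [hM] at h0 h1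
          constructor <;> rw [abs_sub_lt_iff] <;>
            exact ⟨by linarith [hpos 0, hpos 1], by linarith [hpos 0, hpos 1]⟩
        · obtain ⟨j, -, rfl⟩ := Finset.mem_image.1 hx
          rw [hU, lt_min_iff]
          have h2 := hnd j.succ.succ
          rw [hM] at h2
          exact ⟨by linarith, by linarith [hRj j]⟩
      have habsL : |m 0 - m 1| ≤ L := by
        refine Finset.le_max' T _ ?_
        rw [hT]
        exact Finset.mem_insert_self _ _
      have hjL : ∀ j : Fin (p+1), 2 * m j.succ.succ - R ≤ L := by
        intro j
        refine Finset.le_max' T _ ?_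
        rw [hT]
        exact Finset.mem_insert_of_mem (Finset.mem_image_of_mem _ (Finset.mem_univ j))
      refine ⟨(L + U)/2, ?_, ?_, ?_, ?_, ?_, ?_⟩
      · have := le_trans (abs_nonneg _) habsL; linarith
      · have := min_le_right (m 0 + m 1) R; rw [← hU] at this; linarith
      · have := min_le_left (m 0 + m 1) R; rw [← hU] at this; linarith
      · have : m 0 - m 1 ≤ L := le_trans (le_abs_self _) habsL; linarith
      · have h' : m 1 - m 0 ≤ |m 0 - m 1| := by rw [abs_sub_comm]; exact le_abs_self _
        have : m 1 - m 0 ≤ L := le_trans h' habsL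
        linarith
      · intro j; have := hjL j; linarith
    set m' : Fin (p+2) → ℝ := fun j => if j = 0 then μ else m j.succ with hm'def
    have hm'pos : ∀ j, 0 < m' j := by
      intro j; rw [hm'def]; dsimp only; split
      · exact hμ0
      · exact hpos _
    have hm'sum : ∑ j, m' j = μ + R := by
      rw [Fin.sum_univ_succ, hm'def]
      simp [Fin.succ_ne_zero, hRdef]
    have hm'nd : ∀ j, 2 * m' j < ∑ j', m' j' := by
      intro j
      rw [hm'sum]
      refine Fin.cases ?_ (fun j' => ?_) j
      · rw [hm'def]; simp only []; norm_num; linarith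
      · rw [hm'def]; simp only [Fin.succ_ne_zero, if_false]
        linarith [hμj j']
    obtain ⟨v', hu', hc', hr'⟩ := IH m' hm'pos hm'nd
    obtain ⟨α, β, γ, δ, hαβ, hγδ, hclose, hβδ, hβ0, hδ0⟩ :=
      triangle_exists μ (m 0) (m 1) hμ0 (hpos 0) (hpos 1) hμ01 h0μ1 h1μ0
    refine ⟨Fin.cases (Fin.snoc (fun k => α * v' 0 k) β)
      (Fin.cases (Fin.snoc (fun k => γ * v' 0 k) (-δ))
        (fun j => Fin.snoc (v' j.succ) 0)), ?_, ?_, ?_⟩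
    · -- unit norms
      intro i
      refine Fin.cases ?_ (fun i' => ?_) i
      · simp only [Fin.cases_zero]
        rw [Fin.sum_univ_castSucc]
        simp only [Fin.snoc_castSucc, Fin.snoc_last]
        have hs : ∑ k : Fin (p+2), (α * v' 0 k) * (α * v' 0 k)
            = α^2 * ∑ k, v' 0 k * v' 0 k := by
          rw [Finset.mul_sum]; exact Finset.sum_congr rfl fun k _ => by ring
        rw [hs, hu' 0]
        linear_combination hαβ
      · refine Fin.cases ?_ (fun j => ?_) i'
        · simp only [Fin.cases_succ, Fin.cases_zero]
          rw [Fin.sum_univ_castSucc]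
          simp only [Fin.snoc_castSucc, Fin.snoc_last]
          have hs : ∑ k : Fin (p+2), (γ * v' 0 k) * (γ * v' 0 k)
              = γ^2 * ∑ k, v' 0 k * v' 0 k := by
            rw [Finset.mul_sum]; exact Finset.sum_congr rfl fun k _ => by ring
          rw [hs, hu' 0]
          linear_combination hγδ
        · simp only [Fin.cases_succ]
          rw [Fin.sum_univ_castSucc]
          simp only [Fin.snoc_castSucc, Fin.snoc_last]
          simpa using hu' j.succ
    · -- closure
      intro k
      refine Fin.lastCases ?_ (fun k' => ?_) k
      · rw [Fin.sum_univ_succ, Fin.sum_univ_succ]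
        simp only [Fin.cases_zero, Fin.cases_succ]
        simp only [Fin.snoc_last, Fin.succ_zero_eq_one, mul_zero,
          Finset.sum_const_zero, add_zero]
        linear_combination hβδ
      · have h' := hc' k'
        rw [Fin.sum_univ_succ, hm'def] at h'
        simp only [Fin.succ_ne_zero, if_false, if_true, eq_self_iff_true, Fin.isValue] at h'
        rw [Fin.sum_univ_succ, Fin.sum_univ_succ]
        simp only [Fin.cases_zero, Fin.cases_succ]
        simp only [Fin.snoc_castSucc, Fin.succ_zero_eq_one]
        linear_combination h' + v' 0 k' * hclose
    · -- relations
      intro x hx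
      have hlast : x 0 * β = x 1 * δ := by
        have h' := hx (Fin.last (p+2))
        rw [Fin.sum_univ_succ, Fin.sum_univ_succ] at h'
        simp only [Fin.cases_zero, Fin.cases_succ] at h'
        simp only [Fin.snoc_last, Fin.succ_zero_eq_one, mul_zero,
          Finset.sum_const_zero, add_zero] at h'
        linarith
      set y : Fin (p+2) → ℝ := Fin.cases (x 0 * α + x 1 * γ) (fun j => x j.succ.succ) with hy
      have hyrel : ∀ k', ∑ j, y j * v' j k' = 0 := by
        intro k'
        have hxk := hx (Fin.castSucc k')
        rw [Fin.sum_univ_succ, Fin.sum_univ_succ] at hxk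
        simp only [Fin.cases_zero, Fin.cases_succ] at hxk
        simp only [Fin.snoc_castSucc, Fin.succ_zero_eq_one] at hxk
        rw [Fin.sum_univ_succ, hy]
        simp only [Fin.cases_zero, Fin.cases_succ]
        linear_combination hxk
      obtain ⟨c, hc⟩ := hr' y hyrel
      have hcj : ∀ j : Fin (p+1), x j.succ.succ = c * m j.succ.succ := by
        intro j
        have h' := congrFun hc j.succ
        rw [hy, hm'def] at h'
        simpa [Fin.succ_ne_zero] using h'
      have hy0 : x 0 * α + x 1 * γ = c * μ := by
        have h' := congrFun hc 0
        rw [hy, hm'def] at h'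
        simpa using h'
      have h01 : x 0 * m 1 = x 1 * m 0 := by
        have key : β * (x 0 * m 1 - x 1 * m 0) = 0 := by
          linear_combination m 1 * hlast - x 1 * hβδ
        rcases mul_eq_zero.1 key with h | h
        · exact absurd h (ne_of_gt hβ0)
        · linarith
      have hx0 : x 0 = c * m 0 := by
        refine mul_right_cancel₀ (ne_of_gt hμ0) ?_
        linear_combination m 0 * hy0 - x 0 * hclose + γ * h01
      have hx1 : x 1 = c * m 1 := by
        refine mul_right_cancel₀ (ne_of_gt (hpos 0)) ?_
        linear_combination m 1 * hx0 - h01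
      refine ⟨c, funext fun i => ?_⟩
      refine Fin.cases ?_ (fun i' => ?_) i
      · simpa using hx0
      · refine Fin.cases ?_ (fun j => ?_) i'
        · rw [Fin.succ_zero_eq_one]
          simpa using hx1
        · simpa using hcj j

lemma lapW_completeW {n : ℕ} (m : Fin n → ℝ) :
    lapW (completeW m) =
      Matrix.diagonal (fun i => (∑ i, m i) * m i) - Matrix.vecMulVec m m := by
  ext i j
  by_cases h : i = j
  · subst h
    simp only [lapW, completeW, Matrix.of_apply, if_pos rfl, Matrix.sub_apply,
      Matrix.diagonal_apply_eq, Matrix.vecMulVec_apply]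
    have h1 : ∀ k, (if i = k then (0:ℝ) else m i * m k)
        = m i * m k - (if i = k then m i * m k else 0) := by
      intro k; split <;> simp
    rw [Finset.sum_congr rfl (fun k _ => h1 k), Finset.sum_sub_distrib,
      Finset.sum_ite_eq, if_pos (Finset.mem_univ i), ← Finset.mul_sum]
    simp
    ring
  · simp only [lapW, completeW, Matrix.of_apply, if_neg h, Matrix.sub_apply,
      Matrix.diagonal_apply_ne _ h, Matrix.vecMulVec_apply]
    ring

lemma trace_lap {n : ℕ} (m : Fin n → ℝ) (Y : Matrix (Fin n) (Fin n) ℝ)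
    (hd : ∀ i, Y i i = 1) :
    (lapW (completeW m) * Y).trace = (∑ i, m i)^2 - ∑ j, m j * (Y.mulVec m j) := by
  rw [lapW_completeW, Matrix.sub_mul, Matrix.trace_sub]
  have h1 : (Matrix.diagonal (fun i => (∑ i, m i) * m i) * Y).trace = (∑ i, m i)^2 := by
    rw [Matrix.trace]
    have : ∀ i, (Matrix.diagonal (fun i => (∑ i, m i) * m i) * Y).diag i
        = (∑ i, m i) * m i := by
      intro i
      rw [Matrix.diag, Matrix.diagonal_mul, hd i, mul_one]
    rw [Finset.sum_congr rfl (fun i _ => this i), ← Finset.mul_sum]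
    ring
  have h2 : (Matrix.vecMulVec m m * Y).trace = ∑ j, m j * (Y.mulVec m j) := by
    rw [Matrix.trace]
    simp only [Matrix.diag, Matrix.mul_apply, Matrix.vecMulVec_apply]
    rw [Finset.sum_comm]
    refine Finset.sum_congr rfl fun j _ => ?_
    rw [Matrix.mulVec, dotProduct, Finset.mul_sum]
    refine Finset.sum_congr rfl fun i _ => ?_
    ring
  rw [h1, h2]

/-- **Maximum-rank optimal solutions for non-dominated weighted complete graphs.**
Let `n ≥ 3` and let `m ∈ ℝⁿ` be positive and non-dominating (`mⱼ < ∑_{k ≠ j} m_k` for all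
`j`). For the complete graph weighted by `m`, the Max-Cut SDP admits an optimal solution
`X_G` with `rank X_G = n - 1` and `(1/4)·tr(L_G X_G) = M²/4` where `M = ∑ mᵢ`; in
particular `φ(G) = M²/4`. -/
theorem completeW_exists_optSol_rank_sub_one {n : ℕ} (hn : 3 ≤ n) (m : Fin n → ℝ)
    (hpos : ∀ i, 0 < m i)
    (hnd : ∀ j, m j < ∑ k ∈ Finset.univ.erase j, m k) :
    ∃ X : Matrix (Fin n) (Fin n) ℝ,
      IsOptSol (completeW m) X ∧
      X.rank = n - 1 ∧
      (1 / 4) * (lapW (completeW m) * X).trace = (∑ i, m i) ^ 2 / 4 ∧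
      sdpVal (completeW m) = (∑ i, m i) ^ 2 / 4 := by
  have hnd2 : ∀ j, 2 * m j < ∑ i, m i := by
    intro j
    have h1 := hnd j
    have h2 := Finset.sum_erase_add Finset.univ m (Finset.mem_univ j)
    linarith
  obtain ⟨v, hu, hcl, hrel⟩ := exists_good_v n hn m hpos hnd2
  set B : Matrix (Fin n) (Fin n) ℝ := Matrix.of v with hB
  have hpsd : (B * Bᵀ).PosSemidef := by
    simpa using Matrix.posSemidef_self_mul_conjTranspose B
  have hdiag : ∀ i, (B * Bᵀ) i i = 1 := by
    intro i
    rw [Matrix.mul_apply]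
    simpa [Matrix.transpose_apply, hB] using hu i
  have hBtm : Bᵀ.mulVec m = 0 := by
    funext k
    rw [Matrix.mulVec, dotProduct]
    simp only [Matrix.transpose_apply, hB, Matrix.of_apply, Pi.zero_apply]
    rw [Finset.sum_congr rfl (fun i _ => mul_comm (v i k) (m i))]
    exact hcl k
  have hXm : (B * Bᵀ).mulVec m = 0 := by
    rw [← Matrix.mulVec_mulVec, hBtm, Matrix.mulVec_zero]
  have htr : (lapW (completeW m) * (B * Bᵀ)).trace = (∑ i, m i)^2 := by
    rw [trace_lap m _ hdiag, hXm]
    simp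
  have hub : ∀ c ∈ {c | ∃ Y : Matrix (Fin n) (Fin n) ℝ, Y.PosSemidef ∧ (∀ i, Y i i = 1) ∧
      c = (1 / 4) * (lapW (completeW m) * Y).trace}, c ≤ (∑ i, m i)^2/4 := by
    rintro c ⟨Y, hY, hYd, rfl⟩
    rw [trace_lap m Y hYd]
    have h0 : 0 ≤ ∑ j, m j * Y.mulVec m j := by
      have := hY.dotProduct_mulVec_nonneg m
      simpa [dotProduct] using this
    linarith
  have hmem : (∑ i, m i)^2/4 ∈ {c | ∃ Y : Matrix (Fin n) (Fin n) ℝ, Y.PosSemidef ∧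
      (∀ i, Y i i = 1) ∧ c = (1 / 4) * (lapW (completeW m) * Y).trace} :=
    ⟨B * Bᵀ, hpsd, hdiag, by rw [htr]; ring⟩
  have hsdp : sdpVal (completeW m) = (∑ i, m i)^2/4 := by
    rw [sdpVal]
    exact IsGreatest.csSup_eq ⟨hmem, hub⟩
  have hm0 : m ≠ 0 := by
    intro h
    have hi : (0:ℝ) < m ⟨0, by omega⟩ := hpos _
    rw [h] at hi
    exact lt_irrefl _ hi
  have hker : LinearMap.ker (B * Bᵀ).mulVecLin = Submodule.span ℝ {m} := by
    apply le_antisymm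
    · intro x hx
      rw [LinearMap.mem_ker, Matrix.mulVecLin_apply] at hx
      have hq : (Bᵀ.mulVec x) ⬝ᵥ (Bᵀ.mulVec x) = 0 := by
        have h1 : x ⬝ᵥ (B * Bᵀ).mulVec x = 0 := by rw [hx, dotProduct_zero]
        calc Bᵀ.mulVec x ⬝ᵥ Bᵀ.mulVec x
            = (x ᵥ* B) ⬝ᵥ (Bᵀ.mulVec x) := by rw [Matrix.mulVec_transpose]
          _ = x ⬝ᵥ (B.mulVec (Bᵀ.mulVec x)) := (Matrix.dotProduct_mulVec x B _).symm
          _ = x ⬝ᵥ (B * Bᵀ).mulVec x := by rw [Matrix.mulVec_mulVec]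
          _ = 0 := h1
      have hzero : Bᵀ.mulVec x = 0 := dotProduct_self_eq_zero.mp hq
      obtain ⟨c, hc⟩ := hrel x (fun k => by
        have h2 := congrFun hzero k
        rw [Matrix.mulVec, dotProduct] at h2
        simp only [Matrix.transpose_apply, hB, Matrix.of_apply, Pi.zero_apply] at h2
        rw [Finset.sum_congr rfl (fun i _ => mul_comm (x i) (v i k))]
        exact h2)
      rw [hc]
      exact Submodule.smul_mem _ c (Submodule.mem_span_singleton_self m)
    · rw [Submodule.span_le, Set.singleton_subset_iff]
      exact LinearMap.mem_ker.2 (by rw [Matrix.mulVecLin_apply, hXm])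
  have hrank : (B * Bᵀ).rank = n - 1 := by
    have h1 := LinearMap.finrank_range_add_finrank_ker (B * Bᵀ).mulVecLin
    rw [hker, finrank_span_singleton hm0] at h1
    have h2 : Module.finrank ℝ (Fin n → ℝ) = n := by simp
    rw [h2] at h1
    rw [Matrix.rank]
    omega
  exact ⟨B * Bᵀ, ⟨hpsd, hdiag, by rw [hsdp, htr]; ring⟩, hrank, by rw [htr]; ring, hsdp⟩
end

section
/- Let n ≥ 3 and let m ∈ ℝⁿ with all entries positive be non-dominating, and let G be the complete graph on n vertices with edge weights w_{ij} = mᵢmⱼ. Suppose there exist at most n − 2 distinct unordered partitions (S, Sᶜ) of {1,…,n} with Σ_{j∈S} mⱼ = Σ_{j∉S} mⱼ. Then the Max-Cut SDP for G admits an optimal solution that does not lie in the convex hull of the set of rank-1 optimal SDP solutions. -/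
open Matrix Finset

section AuxLemmas
variable {n : ℕ}

lemma sum_ite_ne (f : Fin n → ℝ) (i : Fin n) :
    (∑ k, if i = k then 0 else f k) = (∑ k, f k) - f i := by
  have h1 : (∑ k, if i = k then f k else 0) = f i := by
    rw [Finset.sum_ite_eq]; simp
  have h2 : (∑ k, ((if i = k then 0 else f k) + if i = k then f k else 0)) = ∑ k, f k := by
    apply Finset.sum_congr rfl; intro k _; split <;> simp
  rw [Finset.sum_add_distrib, h1] at h2; linarith

lemma lapW_completeW_eq (m : Fin n → ℝ) :
    lapW (completeW m) =
      Matrix.diagonal (fun i => m i * ∑ k, m k) - Matrix.of (fun i j => m i * m j) := by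
  ext i j
  by_cases h : i = j
  · subst h
    simp only [lapW, completeW, Matrix.of_apply, Matrix.sub_apply, Matrix.diagonal_apply_eq,
      eq_self_iff_true, if_true]
    rw [sum_ite_ne (fun k => m i * m k) i, ← Finset.mul_sum]
  · simp only [lapW, completeW, Matrix.of_apply, Matrix.sub_apply, Matrix.diagonal_apply_ne _ h,
      if_neg h]
    ring

lemma trace_lapW_mul_s11 (m : Fin n → ℝ) (X : Matrix (Fin n) (Fin n) ℝ) (hdiag : ∀ i, X i i = 1) :
    (lapW (completeW m) * X).trace = (∑ i, m i)^2 - m ⬝ᵥ X *ᵥ m := by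
  rw [lapW_completeW_eq, Matrix.sub_mul, Matrix.trace_sub]
  have h1 : (Matrix.diagonal (fun i => m i * ∑ k, m k) * X).trace = (∑ i, m i)^2 := by
    rw [Matrix.trace]
    simp only [Matrix.diag, Matrix.diagonal_mul, hdiag, mul_one]
    rw [← Finset.sum_mul]; ring
  have h2 : (Matrix.of (fun i j => m i * m j) * X).trace = m ⬝ᵥ X *ᵥ m := by
    rw [Matrix.trace]
    simp only [Matrix.diag, Matrix.mul_apply, Matrix.of_apply, dotProduct, Matrix.mulVec,
      Finset.mul_sum]
    rw [Finset.sum_comm]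
    apply Finset.sum_congr rfl; intro i _
    apply Finset.sum_congr rfl; intro j _
    ring
  rw [h1, h2]

lemma psd_quad_nonneg {X : Matrix (Fin n) (Fin n) ℝ} (hX : X.PosSemidef) (v : Fin n → ℝ) :
    0 ≤ v ⬝ᵥ X *ᵥ v := by
  have := hX.dotProduct_mulVec_nonneg v
  simpa using this

lemma sdpVal_completeW (m : Fin n → ℝ) (X0 : Matrix (Fin n) (Fin n) ℝ) (h0 : X0.PosSemidef)
    (h0d : ∀ i, X0 i i = 1) (h0m : X0 *ᵥ m = 0) :
    sdpVal (completeW m) = (∑ i, m i)^2 / 4 := by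
  apply IsGreatest.csSup_eq
  constructor
  · exact ⟨X0, h0, h0d, by rw [trace_lapW_mul_s11 m X0 h0d, h0m]; simp; ring⟩
  · rintro c ⟨X, hX, hXd, rfl⟩
    have h := trace_lapW_mul_s11 m X hXd
    have hq : 0 ≤ m ⬝ᵥ X *ᵥ m := psd_quad_nonneg hX m
    rw [h]; nlinarith [hq]

lemma isOptSol_of_kernel (m : Fin n → ℝ) (X : Matrix (Fin n) (Fin n) ℝ) (hX : X.PosSemidef)
    (hd : ∀ i, X i i = 1) (hm : X *ᵥ m = 0) : IsOptSol (completeW m) X :=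
  ⟨hX, hd, by rw [sdpVal_completeW m X hX hd hm, trace_lapW_mul_s11 m X hd, hm]; simp; ring⟩

lemma optSol_kernel (m : Fin n → ℝ) (X0 : Matrix (Fin n) (Fin n) ℝ) (h0 : X0.PosSemidef)
    (h0d : ∀ i, X0 i i = 1) (h0m : X0 *ᵥ m = 0) (Y : Matrix (Fin n) (Fin n) ℝ)
    (hY : IsOptSol (completeW m) Y) : Y *ᵥ m = 0 := by
  have hs := sdpVal_completeW m X0 h0 h0d h0m
  have h2 := hY.2.2
  rw [hs, trace_lapW_mul_s11 m Y hY.2.1] at h2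
  have hq : m ⬝ᵥ Y *ᵥ m = 0 := by linarith
  exact (hY.1.dotProduct_mulVec_zero_iff m).mp (by simpa using hq)

end AuxLemmas

lemma exists_balanced_split {α : Type*} [DecidableEq α] (K : ℝ) (hK : 0 ≤ K) (f : α → ℝ)
    (s : Finset α) (hf : ∀ i ∈ s, 0 ≤ f i ∧ f i ≤ K) :
    ∃ B ⊆ s, |∑ i ∈ B, f i - ∑ i ∈ s \ B, f i| ≤ K := by
  classical
  induction s using Finset.induction_on with
  | empty => exact ⟨∅, by simp [hK]⟩
  | @insert a s ha ih =>
    obtain ⟨B, hBs, hB⟩ := ih (fun i hi => hf i (Finset.mem_insert_of_mem hi))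
    have hfa := hf a (Finset.mem_insert_self a s)
    rcases le_or_gt (∑ i ∈ B, f i) (∑ i ∈ s \ B, f i) with h | h
    · refine ⟨insert a B, Finset.insert_subset_insert a hBs, ?_⟩
      have haB : a ∉ B := fun h => ha (hBs h)
      have hset : (insert a s) \ (insert a B) = s \ B := by
        ext x
        simp only [Finset.mem_sdiff, Finset.mem_insert, not_or]
        constructor
        · rintro ⟨hx1, hx2, hx3⟩; exact ⟨hx1.resolve_left hx2, hx3⟩
        · rintro ⟨hx1, hx2⟩; exact ⟨Or.inr hx1, fun he => ha (he ▸ hx1), hx2⟩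
      rw [hset, Finset.sum_insert haB]
      rw [abs_le] at hB ⊢
      constructor <;> [linarith [hfa.1]; linarith [hfa.2]]
    · refine ⟨B, hBs.trans (Finset.subset_insert a s), ?_⟩
      have haB : a ∉ s \ B := fun h => ha (Finset.mem_sdiff.mp h).1
      have hset : (insert a s) \ B = insert a (s \ B) := by
        rw [Finset.insert_sdiff_of_notMem]
        intro h; exact (fun hc => ha (hBs hc)) h
      rw [hset, Finset.sum_insert haB]
      rw [abs_le] at hB ⊢
      constructor <;> [linarith [hfa.2]; linarith [hfa.1]]


lemma exists_polygon {n : ℕ} (hn : 3 ≤ n) (m : Fin n → ℝ) (hpos : ∀ i, 0 < m i)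
    (hnd : ∀ j, m j < ∑ k ∈ Finset.univ.erase j, m k) :
    ∃ X : Matrix (Fin n) (Fin n) ℝ, X.PosSemidef ∧ (∀ i, X i i = 1) ∧ X *ᵥ m = 0 := by
  classical
  obtain ⟨j0, -, hj0⟩ := Finset.exists_max_image Finset.univ m ⟨⟨0, by omega⟩, Finset.mem_univ _⟩
  set s : Finset (Fin n) := Finset.univ.erase j0 with hs
  have ha : 0 < m j0 := hpos j0
  obtain ⟨B, hBs, hB⟩ := exists_balanced_split (m j0) ha.le m s
    (fun i _ => ⟨(hpos i).le, hj0 i (Finset.mem_univ i)⟩)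
  set C : Finset (Fin n) := s \ B with hC
  set a : ℝ := m j0 with hadef
  set b : ℝ := ∑ i ∈ B, m i with hbdef
  set c : ℝ := ∑ i ∈ C, m i with hcdef
  obtain ⟨h1, h2⟩ := abs_le.mp hB
  have hbc : c + b = ∑ i ∈ s, m i := Finset.sum_sdiff hBs
  have hlt : a < b + c := by rw [hadef]; have := hnd j0; rw [← hs] at this; linarith
  have hb : 0 < b := by linarith
  have hc : 0 < c := by linarith
  set xb : ℝ := (c^2 - a^2 - b^2) / (2*a*b) with hxbdef
  set xc : ℝ := (b^2 - a^2 - c^2) / (2*a*c) with hxcdef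
  have f1 : 0 ≤ a + b - c := by linarith
  have f2 : 0 ≤ a - b + c := by linarith
  have hxb2 : xb^2 ≤ 1 := by
    have key : (c^2 - a^2 - b^2)^2 ≤ (2*a*b)^2 := by
      nlinarith [mul_nonneg (mul_nonneg (mul_nonneg (by linarith : (0:ℝ) ≤ a + b + c) f1) f2)
        (by linarith : (0:ℝ) ≤ b + c - a)]
    rw [hxbdef, div_pow, div_le_one (by positivity)]
    exact key
  have hxc2 : xc^2 ≤ 1 := by
    have key : (b^2 - a^2 - c^2)^2 ≤ (2*a*c)^2 := by
      nlinarith [mul_nonneg (mul_nonneg (mul_nonneg (by linarith : (0:ℝ) ≤ a + b + c) f1) f2)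
        (by linarith : (0:ℝ) ≤ b + c - a)]
    rw [hxcdef, div_pow, div_le_one (by positivity)]
    exact key
  set yb : ℝ := Real.sqrt (1 - xb^2) with hybdef
  set yc : ℝ := Real.sqrt (1 - xc^2) with hycdef
  have hyb : yb^2 = 1 - xb^2 := Real.sq_sqrt (by linarith)
  have hyc : yc^2 = 1 - xc^2 := Real.sq_sqrt (by linarith)
  have hsum0 : a + b * xb + c * xc = 0 := by
    rw [hxbdef, hxcdef]
    field_simp
    ring
  have hy : b * yb = c * yc := by
    have e1 : b * yb = Real.sqrt (b^2 * (1 - xb^2)) := by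
      rw [Real.sqrt_mul (sq_nonneg b), Real.sqrt_sq hb.le]
    have e2 : c * yc = Real.sqrt (c^2 * (1 - xc^2)) := by
      rw [Real.sqrt_mul (sq_nonneg c), Real.sqrt_sq hc.le]
    rw [e1, e2]
    congr 1
    rw [hxbdef, hxcdef]
    field_simp
    ring
  obtain ⟨u, hu⟩ : ∃ u : Fin n → Fin 2 → ℝ,
      u = fun i => if i = j0 then ![1, 0] else if i ∈ B then ![xb, yb] else ![xc, -yc] :=
    ⟨_, rfl⟩
  have huj0 : u j0 = ![1, 0] := by rw [hu]; simp
  have huB : ∀ j ∈ B, u j = ![xb, yb] := by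
    intro j hj
    have hj' : j ≠ j0 := (Finset.mem_erase.mp (hBs hj)).1
    rw [hu]; simp [hj', hj]
  have huC : ∀ j ∈ C, u j = ![xc, -yc] := by
    intro j hj
    obtain ⟨hj1, hj2⟩ := Finset.mem_sdiff.mp hj
    have hj' : j ≠ j0 := (Finset.mem_erase.mp hj1).1
    rw [hu]; simp [hj', hj2]
  have hsplit : ∀ g : Fin n → ℝ, ∑ j, g j = g j0 + (∑ j ∈ B, g j + ∑ j ∈ C, g j) := by
    intro g
    rw [← Finset.add_sum_erase _ g (Finset.mem_univ j0)]
    congr 1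
    rw [← Finset.sum_sdiff hBs, add_comm]
  have key0 : ∑ j, u j 0 * m j = 0 := by
    rw [hsplit (fun j => u j 0 * m j)]
    have e1 : ∑ j ∈ B, u j 0 * m j = xb * b := by
      rw [hbdef, Finset.mul_sum]
      exact Finset.sum_congr rfl (fun j hj => by rw [huB j hj]; simp)
    have e2 : ∑ j ∈ C, u j 0 * m j = xc * c := by
      rw [hcdef, Finset.mul_sum]
      exact Finset.sum_congr rfl (fun j hj => by rw [huC j hj]; simp)
    rw [e1, e2, huj0]
    simp only [Matrix.cons_val_zero]
    linarith [hsum0]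
  have key1 : ∑ j, u j 1 * m j = 0 := by
    rw [hsplit (fun j => u j 1 * m j)]
    have e1 : ∑ j ∈ B, u j 1 * m j = yb * b := by
      rw [hbdef, Finset.mul_sum]
      exact Finset.sum_congr rfl (fun j hj => by rw [huB j hj]; simp)
    have e2 : ∑ j ∈ C, u j 1 * m j = -yc * c := by
      rw [hcdef, Finset.mul_sum]
      exact Finset.sum_congr rfl (fun j hj => by rw [huC j hj]; simp)
    rw [e1, e2, huj0]
    simp only [Matrix.cons_val_one, Matrix.head_cons, Matrix.cons_val_zero]
    linarith [hy]
  obtain ⟨U, hU⟩ : ∃ U : Matrix (Fin 2) (Fin n) ℝ, U = Matrix.of (fun k i => u i k) := ⟨_, rfl⟩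
  obtain ⟨X, hX⟩ : ∃ X : Matrix (Fin n) (Fin n) ℝ, X = Uᴴ * U := ⟨_, rfl⟩
  have hentry : ∀ i j, X i j = u i 0 * u j 0 + u i 1 * u j 1 := by
    intro i j
    rw [hX, Matrix.mul_apply, Fin.sum_univ_two]
    simp [hU, Matrix.conjTranspose_apply]
  refine ⟨X, hX ▸ Matrix.posSemidef_conjTranspose_mul_self U, ?_, ?_⟩
  · intro i
    rw [hentry i i]
    by_cases hij : i = j0
    · subst hij; rw [huj0]; norm_num
    · by_cases hiB : i ∈ B
      · rw [huB i hiB]; simp only [Matrix.cons_val_zero, Matrix.cons_val_one, Matrix.head_cons]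
        have : xb * xb + yb * yb = xb^2 + yb^2 := by ring
        rw [this, hyb]; ring
      · have hiC : i ∈ C := by
          rw [hC, Finset.mem_sdiff]
          exact ⟨Finset.mem_erase.mpr ⟨hij, Finset.mem_univ i⟩, hiB⟩
        rw [huC i hiC]; simp only [Matrix.cons_val_zero, Matrix.cons_val_one, Matrix.head_cons]
        have : xc * xc + -yc * -yc = xc^2 + yc^2 := by ring
        rw [this, hyc]; ring
  · funext i
    have hterm : ∀ j, X i j * m j = u i 0 * (u j 0 * m j) + u i 1 * (u j 1 * m j) := by
      intro j; rw [hentry]; ring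
    show (X *ᵥ m) i = 0
    simp only [Matrix.mulVec, dotProduct]
    rw [Finset.sum_congr rfl (fun j _ => hterm j), Finset.sum_add_distrib,
      ← Finset.mul_sum, ← Finset.mul_sum, key0, key1]
    simp


lemma exists_maxrank {n : ℕ} (hn : 3 ≤ n) (m : Fin n → ℝ) (hpos : ∀ i, 0 < m i)
    (hnd : ∀ j, m j < ∑ k ∈ Finset.univ.erase j, m k) :
    ∃ X : Matrix (Fin n) (Fin n) ℝ, X.PosSemidef ∧ (∀ i, X i i = 1) ∧ X *ᵥ m = 0 ∧
      ∀ v, X *ᵥ v = 0 → ∃ t : ℝ, v = t • m := by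
  classical
  have hne : (Finset.univ : Finset (Fin n)).Nonempty := ⟨⟨0, by omega⟩, Finset.mem_univ _⟩
  set M2 : ℝ := ∑ i, m i * m i with hM2def
  have hM2 : 0 < M2 := Finset.sum_pos (fun i _ => mul_pos (hpos i) (hpos i)) hne
  have hσ : ∀ j, 0 < ∑ k ∈ Finset.univ.erase j, m k := by
    intro j
    apply Finset.sum_pos (fun i _ => hpos i)
    rw [← Finset.card_pos, Finset.card_erase_of_mem (Finset.mem_univ j), Finset.card_univ,
      Fintype.card_fin]
    omega
  set t0 : ℝ := Finset.univ.sup' hne (fun j => m j / (∑ k ∈ Finset.univ.erase j, m k)) with ht0def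
  have ht0lt : t0 < 1 := by
    rw [ht0def, Finset.sup'_lt_iff]
    exact fun j _ => (div_lt_one (hσ j)).mpr (hnd j)
  have ht0le : ∀ j, m j / (∑ k ∈ Finset.univ.erase j, m k) ≤ t0 := by
    intro j
    rw [ht0def]
    exact Finset.le_sup' (fun j => m j / (∑ k ∈ Finset.univ.erase j, m k)) (Finset.mem_univ j)
  have ht0pos : 0 < t0 := by
    have j : Fin n := ⟨0, by omega⟩
    exact lt_of_lt_of_le (div_pos (hpos j) (hσ j)) (ht0le j)
  set t' : ℝ := (1 + t0) / 2 with ht'def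
  have ht'0 : 0 < t' := by rw [ht'def]; linarith
  have ht'1 : t' < 1 := by rw [ht'def]; linarith
  have ht0t' : t0 < t' := by rw [ht'def]; linarith
  set c : ℝ := 1 - t' ^ 2 with hcdef
  have hc0 : 0 < c := by rw [hcdef]; nlinarith
  set d : Fin n → ℝ := fun i => 1 - c * (1 - m i * m i / M2) with hddef
  have hp1 : ∀ i, m i * m i / M2 ≤ 1 := by
    intro i
    rw [div_le_one hM2]
    exact Finset.single_le_sum (f := fun i => m i * m i)
      (fun i _ => mul_nonneg (hpos i).le (hpos i).le) (Finset.mem_univ i)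
  have hp0 : ∀ i, 0 ≤ m i * m i / M2 := fun i => div_nonneg (mul_self_nonneg _) hM2.le
  have hd_low : ∀ i, t' ^ 2 ≤ d i := by
    intro i
    rw [hddef]
    simp only
    nlinarith [hp0 i, hp1 i, hc0]
  have hd1 : ∀ i, d i ≤ 1 := by
    intro i
    rw [hddef]
    simp only
    nlinarith [hp0 i, hp1 i, hc0]
  have hdpos : ∀ i, 0 < d i := fun i => lt_of_lt_of_le (pow_pos ht'0 2) (hd_low i)
  set m' : Fin n → ℝ := fun i => Real.sqrt (d i) * m i with hm'def
  have hm'pos : ∀ i, 0 < m' i := fun i => mul_pos (Real.sqrt_pos.mpr (hdpos i)) (hpos i)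
  have hsqrt_le : ∀ i, t' ≤ Real.sqrt (d i) := by
    intro i
    have : t' = Real.sqrt (t' ^ 2) := (Real.sqrt_sq ht'0.le).symm
    rw [this]
    exact Real.sqrt_le_sqrt (hd_low i)
  have hm'nd : ∀ j, m' j < ∑ k ∈ Finset.univ.erase j, m' k := by
    intro j
    have e1 : m' j ≤ m j := by
      rw [hm'def]
      simp only
      exact mul_le_of_le_one_left (hpos j).le (Real.sqrt_le_one.mpr (hd1 j))
    have e2 : m j ≤ t0 * (∑ k ∈ Finset.univ.erase j, m k) := by
      rw [← div_le_iff₀ (hσ j)] at *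
      exact ht0le j
    have e3 : t' * (∑ k ∈ Finset.univ.erase j, m k) ≤ ∑ k ∈ Finset.univ.erase j, m' k := by
      rw [Finset.mul_sum]
      apply Finset.sum_le_sum
      intro k _
      rw [hm'def]
      exact mul_le_mul_of_nonneg_right (hsqrt_le k) (hpos k).le
    have e4 : t0 * (∑ k ∈ Finset.univ.erase j, m k) < t' * (∑ k ∈ Finset.univ.erase j, m k) :=
      mul_lt_mul_of_pos_right ht0t' (hσ j)
    linarith
  obtain ⟨Z, hZpsd, hZdiag, hZm⟩ := exists_polygon hn m' hm'pos hm'nd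
  -- the projection-like matrix A
  obtain ⟨A, hA⟩ : ∃ A : Matrix (Fin n) (Fin n) ℝ,
      A = Matrix.of (fun i j => (if i = j then (1:ℝ) else 0) - m i * m j / M2) := ⟨_, rfl⟩
  have hAapp : ∀ i j, A i j = (if i = j then (1:ℝ) else 0) - m i * m j / M2 := by
    intro i j; rw [hA]; rfl
  have hAmv : ∀ x : Fin n → ℝ, ∀ i, (A *ᵥ x) i = x i - m i / M2 * (m ⬝ᵥ x) := by
    intro x i
    simp only [Matrix.mulVec, dotProduct]
    have hterm : ∀ j, A i j * x j = (if i = j then x j else 0) - m i / M2 * (m j * x j) := by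
      intro j
      rw [hAapp]
      split <;> ring
    rw [Finset.sum_congr rfl (fun j _ => hterm j), Finset.sum_sub_distrib,
      Finset.sum_ite_eq, ← Finset.mul_sum]
    simp
  have hAher : A.IsHermitian := by
    rw [Matrix.IsHermitian]
    ext i j
    rw [Matrix.conjTranspose_apply, hAapp, hAapp, star_trivial]
    by_cases h : i = j
    · subst h; ring
    · rw [if_neg h, if_neg (Ne.symm h)]; ring
  have hAquad : ∀ x : Fin n → ℝ, x ⬝ᵥ A *ᵥ x = (∑ i, x i * x i) - (m ⬝ᵥ x) / M2 * (m ⬝ᵥ x) := by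
    intro x
    simp only [dotProduct]
    have hterm : ∀ i, x i * (A *ᵥ x) i = x i * x i - (m ⬝ᵥ x) / M2 * (m i * x i) := by
      intro i; rw [hAmv x i]; ring
    rw [Finset.sum_congr rfl (fun i _ => hterm i), Finset.sum_sub_distrib, ← Finset.mul_sum]
    rfl
  have hApsd : A.PosSemidef := by
    refine .of_dotProduct_mulVec_nonneg hAher (fun x => ?_)
    have hsx : star x = x := by funext i; exact star_trivial _
    rw [hsx, hAquad]
    have hcs : (m ⬝ᵥ x) ^ 2 ≤ M2 * (∑ i, x i * x i) := by
      have := Finset.sum_mul_sq_le_sq_mul_sq Finset.univ m x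
      calc (m ⬝ᵥ x) ^ 2 = (∑ i, m i * x i) ^ 2 := rfl
        _ ≤ (∑ i, m i ^ 2) * (∑ i, x i ^ 2) := this
        _ = M2 * (∑ i, x i * x i) := by
            rw [hM2def]
            congr 1 <;> exact Finset.sum_congr rfl (fun i _ => by ring)
    have h2 : (m ⬝ᵥ x) / M2 * (m ⬝ᵥ x) = (m ⬝ᵥ x) ^ 2 / M2 := by ring
    rw [h2, sub_nonneg, div_le_iff₀ hM2]
    nlinarith [hcs]
  have hAm : A *ᵥ m = 0 := by
    funext i
    rw [hAmv m i, show m ⬝ᵥ m = M2 from rfl, Pi.zero_apply,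
      div_mul_cancel₀ _ (ne_of_gt hM2), sub_self]
  -- the combined matrix
  obtain ⟨D, hD⟩ : ∃ D : Matrix (Fin n) (Fin n) ℝ,
      D = Matrix.diagonal (fun i => Real.sqrt (d i)) := ⟨_, rfl⟩
  have hDher : Dᴴ = D := by
    rw [hD, Matrix.diagonal_conjTranspose]
    exact congrArg _ (funext fun i => star_trivial _)
  have hZD : (D * Z * D).PosSemidef := by
    have := hZpsd.mul_mul_conjTranspose_same D
    rwa [hDher] at this
  have hcA : (c • A).PosSemidef := by
    refine .of_dotProduct_mulVec_nonneg ?_ ?_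
    · rw [Matrix.IsHermitian, Matrix.conjTranspose_smul, hAher.eq, star_trivial]
    · intro x
      rw [Matrix.smul_mulVec, dotProduct_smul]
      exact mul_nonneg hc0.le (hApsd.dotProduct_mulVec_nonneg x)
  obtain ⟨X, hX⟩ : ∃ X : Matrix (Fin n) (Fin n) ℝ,
      X = Matrix.of (fun i j => c * A i j + Real.sqrt (d i) * Real.sqrt (d j) * Z i j) :=
    ⟨_, rfl⟩
  have hXapp : ∀ i j, X i j = c * A i j + Real.sqrt (d i) * Real.sqrt (d j) * Z i j := by
    intro i j; rw [hX]; rfl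
  have hXeq : X = c • A + D * Z * D := by
    ext i j
    rw [hXapp, Matrix.add_apply, Matrix.smul_apply, smul_eq_mul, hD,
      Matrix.mul_apply]
    have : ∀ k, (Matrix.diagonal (fun i => Real.sqrt (d i)) * Z) i k *
        Matrix.diagonal (fun i => Real.sqrt (d i)) k j
        = (Real.sqrt (d i) * Z i k) * Matrix.diagonal (fun i => Real.sqrt (d i)) k j := by
      intro k
      rw [Matrix.diagonal_mul]
    rw [Finset.sum_congr rfl (fun k _ => this k)]
    rw [Finset.sum_eq_single j]
    · rw [Matrix.diagonal_apply_eq]; ring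
    · intro k _ hk
      rw [Matrix.diagonal_apply_ne _ hk, mul_zero]
    · intro h; exact absurd (Finset.mem_univ j) h
  have hXpsd : X.PosSemidef := by rw [hXeq]; exact hcA.add hZD
  have hXdiag : ∀ i, X i i = 1 := by
    intro i
    rw [hXapp, hAapp, if_pos rfl, hZdiag i, Real.mul_self_sqrt (hdpos i).le, hddef]
    simp only
    ring
  have hXm : X *ᵥ m = 0 := by
    funext i
    simp only [Matrix.mulVec, dotProduct, Pi.zero_apply]
    have hterm : ∀ j, X i j * m j = c * (A i j * m j) + Real.sqrt (d i) * (Z i j * m' j) := by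
      intro j
      rw [hXapp, hm'def]
      simp only
      ring
    rw [Finset.sum_congr rfl (fun j _ => hterm j), Finset.sum_add_distrib, ← Finset.mul_sum,
      ← Finset.mul_sum]
    have e1 : ∑ j, A i j * m j = 0 := congrFun hAm i
    have e2 : ∑ j, Z i j * m' j = 0 := congrFun hZm i
    rw [e1, e2]
    ring
  refine ⟨X, hXpsd, hXdiag, hXm, ?_⟩
  intro v hv
  have hq : v ⬝ᵥ X *ᵥ v = 0 := by rw [hv, dotProduct_zero]
  rw [hXeq, Matrix.add_mulVec, dotProduct_add] at hq
  have hq1 : 0 ≤ v ⬝ᵥ (c • A) *ᵥ v := by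
    have := hcA.dotProduct_mulVec_nonneg v
    simpa using this
  have hq2 : 0 ≤ v ⬝ᵥ (D * Z * D) *ᵥ v := by
    have := hZD.dotProduct_mulVec_nonneg v
    simpa using this
  have hz1 : v ⬝ᵥ (c • A) *ᵥ v = 0 := by linarith
  have hsv : star v = v := by funext i; exact star_trivial _
  have hker : (c • A) *ᵥ v = 0 := by
    rw [← hcA.dotProduct_mulVec_zero_iff v, hsv]
    exact hz1
  have hAv : A *ᵥ v = 0 := by
    rw [Matrix.smul_mulVec] at hker
    have := smul_eq_zero.mp hker
    rcases this with h | h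
    · exact absurd h (ne_of_gt hc0)
    · exact h
  refine ⟨(m ⬝ᵥ v) / M2, ?_⟩
  funext i
  have := congrFun hAv i
  rw [hAmv v i] at this
  simp only [Pi.zero_apply] at this
  simp only [Pi.smul_apply, smul_eq_mul]
  have e : m i / M2 * (m ⬝ᵥ v) = m ⬝ᵥ v / M2 * m i := by ring
  linarith [this, e]


lemma matrix_rank_add_le (A B : Matrix (Fin n) (Fin n) ℝ) : (A + B).rank ≤ A.rank + B.rank := by
  rw [Matrix.rank, Matrix.rank, Matrix.rank, Matrix.mulVecLin_add]
  have hsub : LinearMap.range (A.mulVecLin + B.mulVecLin) ≤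
      LinearMap.range A.mulVecLin ⊔ LinearMap.range B.mulVecLin := by
    rintro x ⟨v, rfl⟩
    exact Submodule.add_mem_sup ⟨v, rfl⟩ ⟨v, rfl⟩
  exact (Submodule.finrank_mono hsub).trans
    (Submodule.finrank_add_le_finrank_add_finrank _ _)

lemma matrix_rank_smul_le (c : ℝ) (A : Matrix (Fin n) (Fin n) ℝ) : (c • A).rank ≤ A.rank := by
  rw [Matrix.rank, Matrix.rank]
  apply Submodule.finrank_mono
  rintro x ⟨v, rfl⟩
  refine ⟨c • v, ?_⟩
  simp only [Matrix.mulVecLin_apply, Matrix.mulVec_smul, Matrix.smul_mulVec]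

lemma matrix_rank_sum_le {ι : Type*} (t : Finset ι) (f : ι → Matrix (Fin n) (Fin n) ℝ) :
    (∑ i ∈ t, f i).rank ≤ ∑ i ∈ t, (f i).rank := by
  classical
  induction t using Finset.induction_on with
  | empty => simp [Matrix.rank_zero]
  | @insert a s ha ih =>
    rw [Finset.sum_insert ha, Finset.sum_insert ha]
    exact (matrix_rank_add_le _ _).trans (add_le_add le_rfl ih)

lemma matrix_rank_ge_of_ker (X : Matrix (Fin n) (Fin n) ℝ) (m : Fin n → ℝ) (hm : m ≠ 0)
    (hker : ∀ v, X *ᵥ v = 0 → ∃ t : ℝ, v = t • m) : n - 1 ≤ X.rank := by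
  have h1 : LinearMap.ker X.mulVecLin ≤ Submodule.span ℝ {m} := by
    intro v hv
    rw [LinearMap.mem_ker, Matrix.mulVecLin_apply] at hv
    obtain ⟨t, rfl⟩ := hker v hv
    exact Submodule.smul_mem _ t (Submodule.mem_span_singleton_self m)
  have h2 : Module.finrank ℝ (LinearMap.ker X.mulVecLin) ≤ 1 := by
    have := Submodule.finrank_mono h1
    rwa [finrank_span_singleton hm] at this
  have h3 := LinearMap.finrank_range_add_finrank_ker X.mulVecLin
  rw [Module.finrank_pi, Fintype.card_fin] at h3
  rw [Matrix.rank]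
  omega

lemma rank_one_entries (z : Fin n) (Y : Matrix (Fin n) (Fin n) ℝ)
    (hsym : ∀ i j, Y i j = Y j i) (hdiag : ∀ i, Y i i = 1) (hr : Y.rank = 1) :
    ∀ i j, Y i j = Y i z * Y j z := by
  have hle : Module.finrank ℝ (LinearMap.range Y.mulVecLin) ≤ 1 := le_of_eq hr
  obtain ⟨v, hv⟩ := finrank_le_one_iff.mp hle
  have hcol : ∀ j : Fin n, ∃ cc : ℝ, ∀ i, cc * (v : Fin n → ℝ) i = Y i j := by
    intro j
    have hmem : (fun i => Y i j) ∈ LinearMap.range Y.mulVecLin := by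
      refine ⟨Pi.single j 1, ?_⟩
      rw [Matrix.mulVecLin_apply, Matrix.mulVec_single]
      funext i
      simp
    obtain ⟨cc, hcc⟩ := hv ⟨_, hmem⟩
    refine ⟨cc, fun i => ?_⟩
    have := congrFun (congrArg Subtype.val hcc) i
    simpa using this
  choose col hcolspec using hcol
  have hYij : ∀ i j, Y i j = col j * (v : Fin n → ℝ) i := fun i j => (hcolspec j i).symm
  set w : Fin n → ℝ := fun i => (v : Fin n → ℝ) i with hw
  have hdiag' : ∀ i, col i * w i = 1 := fun i => by rw [← hYij]; exact hdiag i
  have hsymm : ∀ i j, col j * w i = col i * w j := fun i j => by rw [← hYij, ← hYij]; exact hsym i j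
  intro i j
  have hz : col z * w z = 1 := hdiag' z
  have h1 : col z * w j = col j * w z := hsymm j z
  rw [hYij i j, hYij i z, hYij j z]
  calc col j * w i = col j * w i * (col z * w z) := by rw [hz, mul_one]
    _ = (col z * w i) * (col j * w z) := by ring
    _ = (col z * w i) * (col z * w j) := by rw [h1]


/-- **Optimal solutions outside the convex hull of rank-1 optima.**
Let `n ≥ 3`, let `m ∈ ℝⁿ` be positive and non-dominating, and let `G` be the complete
graph with weights `w_{ij} = mᵢ mⱼ`. If there are at most `n - 2` distinct unordered
balanced partitions (i.e. at most `2(n - 2)` subsets `S` with `∑_{i ∈ S} mᵢ = ∑_{i ∉ S} mᵢ`,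
since the subsets `S` and `Sᶜ` determine the same unordered partition), then the Max-Cut
SDP for `G` admits an optimal solution lying outside the convex hull of the set of
rank-1 optimal SDP solutions. -/

theorem completeW_exists_optSol_not_mem_convexHull {n : ℕ} (hn : 3 ≤ n) (m : Fin n → ℝ)
    (hpos : ∀ i, 0 < m i)
    (hnd : ∀ j, m j < ∑ k ∈ Finset.univ.erase j, m k)
    (hpart : Set.ncard {S : Finset (Fin n) | ∑ i ∈ S, m i = ∑ i ∈ Sᶜ, m i}
      ≤ 2 * (n - 2)) :
    ∃ X : Matrix (Fin n) (Fin n) ℝ,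
      IsOptSol (completeW m) X ∧
      X ∉ convexHull ℝ
        {Y : Matrix (Fin n) (Fin n) ℝ | IsOptSol (completeW m) Y ∧ Y.rank = 1} := by
  classical
  obtain ⟨X, hXpsd, hXdiag, hXm, hXker⟩ := exists_maxrank hn m hpos hnd
  refine ⟨X, isOptSol_of_kernel m X hXpsd hXdiag hXm, ?_⟩
  intro hmem
  set OPT : Set (Matrix (Fin n) (Fin n) ℝ) :=
    {Y | IsOptSol (completeW m) Y ∧ Y.rank = 1} with hOPT
  have hz3 : 0 < n := by omega
  set z : Fin n := ⟨0, hz3⟩ with hzdef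
  have hstruct : ∀ Y ∈ OPT, ∀ i j, Y i j = Y i z * Y j z := by
    intro Y hY
    have hsym : ∀ i j, Y i j = Y j i := by
      intro i j
      have h := hY.1.1.1.apply j i
      rwa [star_trivial] at h
    exact rank_one_entries z Y hsym hY.1.2.1 hY.2
  have hpm : ∀ Y ∈ OPT, ∀ i, Y i z = 1 ∨ Y i z = -1 := by
    intro Y hY i
    have h1 : Y i z * Y i z = 1 := by rw [← hstruct Y hY i i]; exact hY.1.2.1 i
    exact mul_self_eq_one_iff.mp h1
  have hbal : ∀ Y ∈ OPT, Y *ᵥ m = 0 := fun Y hY => optSol_kernel m X hXpsd hXdiag hXm Y hY.1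
  set f : Matrix (Fin n) (Fin n) ℝ → Finset (Fin n) :=
    fun Y => Finset.univ.filter (fun i => Y i z = 1) with hf
  set T : Set (Finset (Fin n)) := {S : Finset (Fin n) | ∑ i ∈ S, m i = ∑ i ∈ Sᶜ, m i} with hT
  have hfT : ∀ Y ∈ OPT, f Y ∈ T ∧ z ∈ f Y := by
    intro Y hY
    constructor
    · have h0 : (Y *ᵥ m) z = 0 := congrFun (hbal Y hY) z
      have hsum : ∑ j, Y j z * m j = 0 := by
        have hterm : ∀ j, Y z j * m j = Y j z * m j := by
          intro j
          rw [hstruct Y hY z j, hY.1.2.1 z, one_mul]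
        rw [← Finset.sum_congr rfl (fun j _ => hterm j)]
        exact h0
      have hsplit := Finset.sum_filter_add_sum_filter_not Finset.univ
        (fun i => Y i z = 1) (fun j => Y j z * m j)
      have e1 : ∑ j ∈ Finset.univ.filter (fun i => Y i z = 1), Y j z * m j
          = ∑ j ∈ f Y, m j :=
        Finset.sum_congr rfl (fun j hj => by rw [(Finset.mem_filter.mp hj).2, one_mul])
      have e2 : ∑ j ∈ Finset.univ.filter (fun i => ¬ Y i z = 1), Y j z * m j
          = -∑ j ∈ (f Y)ᶜ, m j := by
        rw [hf]
        rw [Finset.compl_filter, ← Finset.sum_neg_distrib]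
        apply Finset.sum_congr rfl
        intro j hj
        have hj1 : ¬ Y j z = 1 := (Finset.mem_filter.mp hj).2
        have hj2 : Y j z = -1 := (hpm Y hY j).resolve_left hj1
        rw [hj2]; ring
      show (∑ i ∈ f Y, m i) = ∑ i ∈ (f Y)ᶜ, m i
      rw [e1, e2] at hsplit
      rw [hsum] at hsplit
      linarith
    · rw [hf]
      simp only [Finset.mem_filter, Finset.mem_univ, true_and]
      exact hY.1.2.1 z
  set T0 : Set (Finset (Fin n)) := {S | S ∈ T ∧ z ∈ S} with hT0
  have hdisj : Disjoint T0 ((fun S => Sᶜ) '' T0) := by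
    rw [Set.disjoint_left]
    rintro S hS ⟨S', hS', rfl⟩
    exact (Finset.mem_compl.mp hS.2) hS'.2
  have hsub : T0 ∪ ((fun S => Sᶜ) '' T0) ⊆ T := by
    rintro S (hS | ⟨S', hS', rfl⟩)
    · exact hS.1
    · have h := hS'.1
      rw [hT] at h ⊢
      simp only [Set.mem_setOf_eq] at h ⊢
      rw [compl_compl]
      exact h.symm
  have hcard2 : T0.ncard + T0.ncard ≤ 2 * (n - 2) := by
    have himg : ((fun S : Finset (Fin n) => Sᶜ) '' T0).ncard = T0.ncard :=
      Set.ncard_image_of_injective T0 compl_injective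
    have hun := Set.ncard_union_eq hdisj (Set.toFinite _) (Set.toFinite _)
    have hle := Set.ncard_le_ncard hsub (Set.toFinite _)
    rw [hun, himg] at hle
    calc T0.ncard + T0.ncard ≤ T.ncard := hle
      _ ≤ 2 * (n - 2) := hpart
  have hT0card : T0.ncard ≤ n - 2 := by omega
  have hmapsTo : ∀ Y ∈ OPT, f Y ∈ T0 := fun Y hY => ⟨(hfT Y hY).1, (hfT Y hY).2⟩
  have hinj : Set.InjOn f OPT := by
    intro Y1 h1 Y2 h2 hf12
    have hcol : ∀ i, Y1 i z = Y2 i z := by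
      intro i
      have hiff : (Y1 i z = 1) ↔ (Y2 i z = 1) := by
        constructor <;> intro h
        · have : i ∈ f Y1 := by rw [hf]; simp [h]
          rw [hf12] at this
          rw [hf] at this
          simpa using this
        · have : i ∈ f Y2 := by rw [hf]; simp [h]
          rw [← hf12] at this
          rw [hf] at this
          simpa using this
      rcases hpm Y1 h1 i with e | e
      · rw [e, (hiff.mp e).symm]
      · have h2' : ¬ Y2 i z = 1 := by
          intro hc
          have := hiff.mpr hc
          rw [e] at this
          norm_num at this
        rw [e, ((hpm Y2 h2 i).resolve_left h2').symm]
    apply Matrix.ext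
    intro i j
    rw [hstruct Y1 h1 i j, hstruct Y2 h2 i j, hcol i, hcol j]
  have hOPTimg_fin : (f '' OPT).Finite :=
    (Set.toFinite T0).subset (by rintro _ ⟨Y, hY, rfl⟩; exact hmapsTo Y hY)
  have hOPTfin : OPT.Finite := Set.Finite.of_finite_image hOPTimg_fin hinj
  have hOPTcard : OPT.ncard ≤ n - 2 := by
    have h1 : (f '' OPT).ncard = OPT.ncard := Set.ncard_image_of_injOn hinj
    have h2 : (f '' OPT).ncard ≤ T0.ncard :=
      Set.ncard_le_ncard (by rintro _ ⟨Y, hY, rfl⟩; exact hmapsTo Y hY) (Set.toFinite _)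
    omega
  have hFc : ↑hOPTfin.toFinset = OPT := hOPTfin.coe_toFinset
  rw [← hFc, Finset.convexHull_eq] at hmem
  obtain ⟨wgt, hw0, hw1, hcm⟩ := hmem
  rw [Finset.centerMass_eq_of_sum_1 _ _ hw1] at hcm
  have hrank_le : X.rank ≤ n - 2 := by
    rw [← hcm]
    refine le_trans (matrix_rank_sum_le hOPTfin.toFinset _) ?_
    have hone : ∀ Y ∈ hOPTfin.toFinset, (wgt Y • id Y).rank ≤ 1 := by
      intro Y hY
      have hY' : Y ∈ OPT := hOPTfin.mem_toFinset.mp hY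
      simpa using (matrix_rank_smul_le (wgt Y) Y).trans (le_of_eq hY'.2)
    calc ∑ Y ∈ hOPTfin.toFinset, (wgt Y • id Y).rank
        ≤ ∑ _Y ∈ hOPTfin.toFinset, 1 := Finset.sum_le_sum hone
      _ = hOPTfin.toFinset.card := by simp
      _ ≤ n - 2 := by
          rw [← Set.ncard_eq_toFinset_card OPT hOPTfin]
          exact hOPTcard
  have hm0 : m ≠ 0 := by
    intro h
    have := hpos z
    rw [h] at this
    simp at this
  have hrank_ge : n - 1 ≤ X.rank := matrix_rank_ge_of_ker X m hm0 hXker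
  omega
end

section
/- Let G be a weighted graph and suppose the Max-Cut SDP for G admits an optimal solution of rank r. Then for every split graph G̃ of G, the Max-Cut SDP for G̃ admits an optimal solution of rank r. -/
open Matrix Finset

/- ### auxiliary lemmas -/

lemma MCaux.trace_lap {V : Type*} [Fintype V] [DecidableEq V] (w : V → V → ℝ)
    (hd : ∀ i, w i i = 0) (X : Matrix V V ℝ) :
    (lapW w * X).trace = ∑ i, ∑ j, w i j * (X i i - X j i) := by
  unfold Matrix.trace
  simp only [diag_apply, mul_apply, lapW, of_apply]
  refine Finset.sum_congr rfl fun i _ => ?_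
  have key : ∀ j : V, (if i = j then ∑ k, w i k else -w i j) * X j i
      = (if i = j then (∑ k, w i k) * X i i else 0) - w i j * X j i := by
    intro j
    by_cases h : i = j
    · subst h; simp [hd i]
    · simp [h]
  rw [Finset.sum_congr rfl fun j _ => key j, Finset.sum_sub_distrib,
    Finset.sum_ite_eq univ i (fun _ => (∑ k, w i k) * X i i)]
  simp [Finset.sum_mul, mul_sub]

lemma MCaux.psd_entry_le_one {V : Type*} [Fintype V] [DecidableEq V] {Y : Matrix V V ℝ}
    (hY : Y.PosSemidef) (hdiag : ∀ a, Y a a = 1) (a b : V) : Y a b ≤ 1 := by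
  by_cases h : a = b
  · subst h; rw [hdiag]
  · have h2 := hY.dotProduct_mulVec_nonneg (Pi.single a 1 - Pi.single b 1)
    have hsym : Y b a = Y a b := by
      have := congrFun (congrFun hY.1 a) b
      simpa [Matrix.conjTranspose_apply] using this
    simp only [star_trivial, dotProduct, mulVec, Pi.sub_apply, Pi.single_apply,
      sub_mul, mul_sub, mul_ite, ite_mul, mul_one, one_mul, mul_zero, zero_mul,
      Finset.sum_sub_distrib, Finset.sum_ite_eq, Finset.sum_ite_eq', Finset.mem_univ,
      if_true] at h2
    rw [hdiag, hdiag, hsym] at h2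
    linarith

lemma MCaux.psd_neg_one_le_entry {V : Type*} [Fintype V] [DecidableEq V] {Y : Matrix V V ℝ}
    (hY : Y.PosSemidef) (hdiag : ∀ a, Y a a = 1) (a b : V) : -1 ≤ Y a b := by
  by_cases h : a = b
  · subst h; rw [hdiag]; norm_num
  · have h2 := hY.dotProduct_mulVec_nonneg (Pi.single a 1 + Pi.single b 1)
    have hsym : Y b a = Y a b := by
      have := congrFun (congrFun hY.1 a) b
      simpa [Matrix.conjTranspose_apply] using this
    simp only [star_trivial, dotProduct, mulVec, Pi.add_apply, Pi.single_apply,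
      add_mul, mul_add, mul_ite, ite_mul, mul_one, one_mul, mul_zero, zero_mul,
      Finset.sum_add_distrib, Finset.sum_ite_eq, Finset.sum_ite_eq', Finset.mem_univ,
      if_true] at h2
    rw [hdiag, hdiag, hsym] at h2
    linarith

/-- The feasible-value set of the SDP. -/
def MCaux.sdpSet {V : Type*} [Fintype V] [DecidableEq V] (w : V → V → ℝ) : Set ℝ :=
  {c | ∃ X : Matrix V V ℝ, X.PosSemidef ∧ (∀ i, X i i = 1) ∧
    c = (1 / 4) * (lapW w * X).trace}

lemma MCaux.sdpVal_eq {V : Type*} [Fintype V] [DecidableEq V] (w : V → V → ℝ) :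
    sdpVal w = sSup (MCaux.sdpSet w) := rfl

lemma MCaux.sdpSet_nonempty {V : Type*} [Fintype V] [DecidableEq V] (w : V → V → ℝ) :
    (MCaux.sdpSet w).Nonempty :=
  ⟨_, 1, Matrix.PosSemidef.one, fun i => Matrix.one_apply_eq i, rfl⟩

lemma MCaux.sdpSet_bddAbove {V : Type*} [Fintype V] [DecidableEq V] {w : V → V → ℝ}
    (hw : IsWeight w) : BddAbove (MCaux.sdpSet w) := by
  refine ⟨(1 / 4) * ∑ i, ∑ j, w i j * 2, fun c hc => ?_⟩
  obtain ⟨X, hpsd, hdiag, rfl⟩ := hc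
  rw [MCaux.trace_lap w hw.2.1]
  have : (∑ i, ∑ j, w i j * (X i i - X j i)) ≤ ∑ i, ∑ j, w i j * 2 := by
    refine Finset.sum_le_sum fun i _ => Finset.sum_le_sum fun j _ => ?_
    have h1 : X i i - X j i ≤ 2 := by
      have := MCaux.psd_neg_one_le_entry hpsd hdiag j i
      rw [hdiag i]; linarith
    exact mul_le_mul_of_nonneg_left h1 (hw.2.2 i j)
  linarith

lemma MCaux.split_trace {n : ℕ} (w : Fin n → Fin n → ℝ) (p : Fin n → ℕ)
    (Y : Matrix (Σ i : Fin n, Fin (p i)) (Σ i : Fin n, Fin (p i)) ℝ) :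
    (lapW (splitW w p) * Y).trace
      = ∑ i, ∑ j, (if i = j then 0 else w i j / ((p i : ℝ) * (p j : ℝ)))
          * ∑ x, ∑ y, (Y ⟨i, x⟩ ⟨i, x⟩ - Y ⟨j, y⟩ ⟨i, x⟩) := by
  have hL : (lapW (splitW w p) * Y).trace
      = ∑ i, ∑ x : Fin (p i), ∑ j, ∑ y : Fin (p j),
          (if i = j then 0 else w i j / ((p i : ℝ) * (p j : ℝ)))
            * (Y ⟨i, x⟩ ⟨i, x⟩ - Y ⟨j, y⟩ ⟨i, x⟩) := by
    rw [MCaux.trace_lap _ (fun a => by simp [splitW])]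
    rw [← Finset.univ_sigma_univ, Finset.sum_sigma]
    refine Finset.sum_congr rfl fun i _ => Finset.sum_congr rfl fun x _ => ?_
    rw [Finset.sum_sigma]
    exact Finset.sum_congr rfl fun j _ => Finset.sum_congr rfl fun y _ => by simp [splitW]
  rw [hL]
  refine Finset.sum_congr rfl fun i _ => ?_
  rw [show (∑ j, (if i = j then 0 else w i j / ((p i : ℝ) * (p j : ℝ)))
          * ∑ x, ∑ y, (Y ⟨i, x⟩ ⟨i, x⟩ - Y ⟨j, y⟩ ⟨i, x⟩))
      = ∑ j, ∑ x : Fin (p i), ∑ y : Fin (p j),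
          (if i = j then 0 else w i j / ((p i : ℝ) * (p j : ℝ)))
            * (Y ⟨i, x⟩ ⟨i, x⟩ - Y ⟨j, y⟩ ⟨i, x⟩) from
    Finset.sum_congr rfl fun j _ => by
      rw [Finset.mul_sum]; exact Finset.sum_congr rfl fun x _ => Finset.mul_sum _ _ _]
  exact Finset.sum_comm

lemma MCaux.rank_submatrix_le' {m l : Type*} [Fintype m] [DecidableEq m] [Fintype l]
    (f : l → m) (A : Matrix m m ℝ) : (A.submatrix f f).rank ≤ A.rank := by
  have hA : A.submatrix f f
      = (1 : Matrix m m ℝ).submatrix f id * A * (1 : Matrix m m ℝ).submatrix id f := by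
    ext a b
    simp [mul_apply, one_apply, Finset.sum_ite_eq, Finset.sum_ite_eq']
  rw [hA, Matrix.mul_assoc]
  exact le_trans (Matrix.rank_mul_le_right _ _) (Matrix.rank_mul_le_left _ _)

noncomputable def MCaux.avgF {n : ℕ} (p : Fin n → ℕ) :
    Matrix (Σ i : Fin n, Fin (p i)) (Fin n) ℝ :=
  Matrix.of fun a j => if a.1 = j then ((p j : ℝ))⁻¹ else 0

lemma MCaux.avg_apply {n : ℕ} (p : Fin n → ℕ)
    (Y : Matrix (Σ i : Fin n, Fin (p i)) (Σ i : Fin n, Fin (p i)) ℝ) (i j : Fin n) :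
    ((MCaux.avgF p)ᴴ * Y * MCaux.avgF p) i j
      = ((p i : ℝ))⁻¹ * ((p j : ℝ))⁻¹ * ∑ x, ∑ y, Y ⟨i, x⟩ ⟨j, y⟩ := by
  simp only [mul_apply, conjTranspose_apply, MCaux.avgF, of_apply, star_trivial]
  have inner : ∀ b : Σ i : Fin n, Fin (p i),
      (∑ a : Σ i : Fin n, Fin (p i), (if a.1 = i then ((p i : ℝ))⁻¹ else 0) * Y a b)
        = ((p i : ℝ))⁻¹ * ∑ x, Y ⟨i, x⟩ b := by
    intro b
    rw [← Finset.univ_sigma_univ, Finset.sum_sigma]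
    rw [Finset.sum_eq_single i]
    · simp [Finset.mul_sum]
    · intro k _ hk; simp [hk]
    · simp
  rw [Finset.sum_congr rfl fun b _ => by rw [inner b]]
  rw [← Finset.univ_sigma_univ, Finset.sum_sigma]
  rw [Finset.sum_eq_single j]
  · rw [show ∑ x, ∑ y, Y ⟨i, x⟩ ⟨j, y⟩ = ∑ y, ∑ x, Y ⟨i, x⟩ ⟨j, y⟩ from Finset.sum_comm]
    simp only [Finset.mul_sum, Finset.sum_mul, mul_comm, mul_left_comm]
    exact Finset.sum_congr rfl fun y _ => Finset.sum_congr rfl fun x _ =>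
      (mul_assoc _ _ _).symm
  · intro k _ hk; simp [hk]
  · simp

/-- Lifting a feasible solution preserves the objective value. -/
lemma MCaux.lift_trace {n : ℕ} {w : Fin n → Fin n → ℝ} (hw : IsWeight w) (p : Fin n → ℕ)
    (hp : ∀ i, 0 < p i) (X : Matrix (Fin n) (Fin n) ℝ) :
    (lapW (splitW w p) * (X.submatrix (Sigma.fst) (Sigma.fst))).trace
      = (lapW w * X).trace := by
  rw [MCaux.split_trace, MCaux.trace_lap w hw.2.1]
  refine Finset.sum_congr rfl fun i _ => Finset.sum_congr rfl fun j _ => ?_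
  by_cases h : i = j
  · subst h; simp [hw.2.1 i]
  · have hpi : ((p i : ℝ)) ≠ 0 := Nat.cast_ne_zero.mpr (hp i).ne'
    have hpj : ((p j : ℝ)) ≠ 0 := Nat.cast_ne_zero.mpr (hp j).ne'
    simp only [if_neg h, submatrix_apply, Finset.sum_const, Finset.card_univ,
      Fintype.card_fin, nsmul_eq_mul]
    field_simp

lemma MCaux.isWeight_splitW {n : ℕ} {w : Fin n → Fin n → ℝ} (hw : IsWeight w)
    (p : Fin n → ℕ) : IsWeight (splitW w p) := by
  refine ⟨fun a b => ?_, fun a => by simp [splitW], fun a b => ?_⟩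
  · unfold splitW
    by_cases h : a.1 = b.1
    · rw [if_pos h, if_pos h.symm]
    · rw [if_neg h, if_neg (Ne.symm h), hw.1 a.1 b.1, mul_comm]
  · unfold splitW
    by_cases h : a.1 = b.1
    · simp [h]
    · rw [if_neg h]
      exact div_nonneg (hw.2.2 _ _) (by positivity)

lemma MCaux.sdpVal_split {n : ℕ} (w : Fin n → Fin n → ℝ) (hw : IsWeight w)
    (p : Fin n → ℕ) (hp : ∀ i, 0 < p i) : sdpVal (splitW w p) = sdpVal w := by
  have hw2 := MCaux.isWeight_splitW hw p
  rw [MCaux.sdpVal_eq, MCaux.sdpVal_eq]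
  apply le_antisymm
  · refine csSup_le (MCaux.sdpSet_nonempty _) fun c hc => ?_
    obtain ⟨Y, hpsd, hdiag, rfl⟩ := hc
    set Z := (MCaux.avgF p)ᴴ * Y * MCaux.avgF p with hZdef
    have hZpsd : Z.PosSemidef := hpsd.conjTranspose_mul_mul_same _
    have hZle : ∀ i, Z i i ≤ 1 := by
      intro i
      rw [hZdef, MCaux.avg_apply]
      have h0 : (0 : ℝ) < (p i : ℝ) := by exact_mod_cast hp i
      have hsum : (∑ x, ∑ y, Y ⟨i, x⟩ ⟨i, y⟩) ≤ (p i : ℝ) * (p i : ℝ) := by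
        calc (∑ x, ∑ y, Y ⟨i, x⟩ ⟨i, y⟩)
            ≤ ∑ _x : Fin (p i), ∑ _y : Fin (p i), (1 : ℝ) :=
              Finset.sum_le_sum fun x _ => Finset.sum_le_sum fun y _ =>
                MCaux.psd_entry_le_one hpsd hdiag _ _
          _ = (p i : ℝ) * (p i : ℝ) := by simp [Finset.sum_const, mul_comm]
      calc ((p i : ℝ))⁻¹ * ((p i : ℝ))⁻¹ * ∑ x, ∑ y, Y ⟨i, x⟩ ⟨i, y⟩
          ≤ ((p i : ℝ))⁻¹ * ((p i : ℝ))⁻¹ * ((p i : ℝ) * (p i : ℝ)) := by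
            exact mul_le_mul_of_nonneg_left hsum (by positivity)
        _ = 1 := by field_simp
    set X' := Z + Matrix.diagonal (fun i => 1 - Z i i) with hX'def
    have hDpsd : (Matrix.diagonal (fun i => 1 - Z i i)).PosSemidef :=
      Matrix.posSemidef_diagonal_iff.mpr fun i => sub_nonneg.mpr (hZle i)
    have hX'psd : X'.PosSemidef := hZpsd.add hDpsd
    have hX'diag : ∀ i, X' i i = 1 := fun i => by
      simp [hX'def, Matrix.add_apply, Matrix.diagonal_apply_eq]
    have htr : (lapW w * X').trace = (lapW (splitW w p) * Y).trace := by
      rw [MCaux.trace_lap w hw.2.1, MCaux.split_trace]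
      refine Finset.sum_congr rfl fun i _ => Finset.sum_congr rfl fun j _ => ?_
      by_cases h : i = j
      · subst h; simp [hw.2.1 i]
      · have hpi : ((p i : ℝ)) ≠ 0 := Nat.cast_ne_zero.mpr (hp i).ne'
        have hpj : ((p j : ℝ)) ≠ 0 := Nat.cast_ne_zero.mpr (hp j).ne'
        have hin : (∑ x : Fin (p i), ∑ y : Fin (p j), (Y ⟨i, x⟩ ⟨i, x⟩ - Y ⟨j, y⟩ ⟨i, x⟩))
            = (p i : ℝ) * (p j : ℝ) - ∑ x : Fin (p i), ∑ y : Fin (p j), Y ⟨j, y⟩ ⟨i, x⟩ := by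
          rw [Finset.sum_congr rfl fun x _ => Finset.sum_sub_distrib _ _, Finset.sum_sub_distrib]
          congr 1
          simp [hdiag, Finset.sum_const, mul_comm]
        have hoff : X' j i = Z j i := by
          simp [hX'def, Matrix.add_apply, Matrix.diagonal_apply_ne _ (Ne.symm h)]
        have hZji : Z j i = ((p j : ℝ))⁻¹ * ((p i : ℝ))⁻¹
            * ∑ x : Fin (p i), ∑ y : Fin (p j), Y ⟨j, y⟩ ⟨i, x⟩ := by
          rw [hZdef, MCaux.avg_apply]
          congr 1
          exact Finset.sum_comm
        rw [if_neg h, hin, hX'diag i, hoff, hZji]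
        field_simp
    refine le_csSup (MCaux.sdpSet_bddAbove hw) ⟨X', hX'psd, hX'diag, by rw [htr]⟩
  · refine csSup_le (MCaux.sdpSet_nonempty _) fun c hc => ?_
    obtain ⟨X, hpsd, hdiag, rfl⟩ := hc
    exact le_csSup (MCaux.sdpSet_bddAbove hw2)
      ⟨X.submatrix Sigma.fst Sigma.fst, hpsd.submatrix _, fun a => hdiag a.1,
        by rw [MCaux.lift_trace hw p hp]⟩

/-- **Splitting preserves the rank of optimal SDP solutions.**
If the Max-Cut SDP for a weighted graph `G` admits an optimal solution of rank `r`, then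
for every split graph `G̃` of `G` the Max-Cut SDP for `G̃` admits an optimal solution of
rank `r`. -/
theorem splitW_exists_optSol_rank {n : ℕ} (w : Fin n → Fin n → ℝ) (hw : IsWeight w)
    (p : Fin n → ℕ) (hp : ∀ i, 0 < p i) (r : ℕ)
    (h : ∃ X : Matrix (Fin n) (Fin n) ℝ, IsOptSol w X ∧ X.rank = r) :
    ∃ Y : Matrix (Σ i : Fin n, Fin (p i)) (Σ i : Fin n, Fin (p i)) ℝ,
      IsOptSol (splitW w p) Y ∧ Y.rank = r := by
  obtain ⟨X, ⟨hXpsd, hXdiag, hXopt⟩, hXrank⟩ := h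
  refine ⟨X.submatrix Sigma.fst Sigma.fst, ⟨?_, ?_, ?_⟩, ?_⟩
  · exact hXpsd.submatrix Sigma.fst
  · exact fun a => hXdiag a.1
  · rw [MCaux.sdpVal_split w hw p hp, MCaux.lift_trace hw p hp, hXopt]
  · set f : (Σ i : Fin n, Fin (p i)) → Fin n := Sigma.fst with hf
    have h1 : (X.submatrix f f).rank ≤ X.rank := MCaux.rank_submatrix_le' f X
    have h2 : X.rank ≤ (X.submatrix f f).rank := by
      have hX : X = (X.submatrix f f).submatrix
          (fun i : Fin n => (⟨i, ⟨0, hp i⟩⟩ : Σ i : Fin n, Fin (p i)))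
          (fun i : Fin n => (⟨i, ⟨0, hp i⟩⟩ : Σ i : Fin n, Fin (p i))) := by
        ext i j; rfl
      conv_lhs => rw [hX]
      exact MCaux.rank_submatrix_le' _ _
    omega
end

section
/- Let G₁ and G₂ be unweighted simple graphs on m and n vertices respectively. Then the Laplacian of the lexicographic product satisfies L_{G₁•G₂} = I_m ⊗ D_{G₂} + D_{G₁} ⊗ (n·I_n) + I_m ⊗ (L_{G₂} − D_{G₂}) + (L_{G₁} − D_{G₁}) ⊗ J_n, where D_G denotes the diagonal degree matrix of G, I_k the k×k identity matrix, J_n the n×n all-ones matrix, and ⊗ the Kronecker product. -/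
open Matrix Finset

open Kronecker

/-- The weight function of an unweighted simple graph. -/
def gW {V : Type*} (G : SimpleGraph V) [DecidableRel G.Adj] : V → V → ℝ :=
  fun i j => if G.Adj i j then 1 else 0

/-- The weight function of the (unweighted) lexicographic product `G₁ • G₂`. -/
def lexW {V₁ V₂ : Type*} [DecidableEq V₁] (G₁ : SimpleGraph V₁) (G₂ : SimpleGraph V₂)
    [DecidableRel G₁.Adj] [DecidableRel G₂.Adj] : (V₁ × V₂) → (V₁ × V₂) → ℝ :=
  fun a b => if G₁.Adj a.1 b.1 ∨ (a.1 = b.1 ∧ G₂.Adj a.2 b.2) then 1 else 0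

/-- The diagonal degree matrix of a simple graph. -/
noncomputable def degMat {V : Type*} [Fintype V] [DecidableEq V] (G : SimpleGraph V)
    [DecidableRel G.Adj] : Matrix V V ℝ :=
  Matrix.diagonal fun v => (G.degree v : ℝ)

lemma sum_gW {V : Type*} [Fintype V] [DecidableEq V] (G : SimpleGraph V)
    [DecidableRel G.Adj] (i : V) : ∑ k, gW G i k = (G.degree i : ℝ) := by
  simp [gW, Finset.sum_boole, SimpleGraph.degree, SimpleGraph.neighborFinset_eq_filter]

/-- **Laplacian of the lexicographic product.**
For simple graphs `G₁` (on `m` vertices) and `G₂` (on `n` vertices),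
`L_{G₁•G₂} = I_m ⊗ D_{G₂} + D_{G₁} ⊗ (n I_n) + I_m ⊗ (L_{G₂} − D_{G₂})
+ (L_{G₁} − D_{G₁}) ⊗ J_n`. -/
theorem lapW_lexW {V₁ V₂ : Type*} [Fintype V₁] [DecidableEq V₁]
    [Fintype V₂] [DecidableEq V₂]
    (G₁ : SimpleGraph V₁) (G₂ : SimpleGraph V₂)
    [DecidableRel G₁.Adj] [DecidableRel G₂.Adj] :
    lapW (lexW G₁ G₂) =
      (1 : Matrix V₁ V₁ ℝ) ⊗ₖ degMat G₂
      + degMat G₁ ⊗ₖ ((Fintype.card V₂ : ℝ) • (1 : Matrix V₂ V₂ ℝ))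
      + (1 : Matrix V₁ V₁ ℝ) ⊗ₖ (lapW (gW G₂) - degMat G₂)
      + (lapW (gW G₁) - degMat G₁) ⊗ₖ Matrix.of (fun _ _ => (1 : ℝ)) := by
  have key : ∀ (i : V₁) (j : V₂),
      ∑ pq : V₁ × V₂, lexW G₁ G₂ (i, j) pq
        = (G₂.degree j : ℝ) + (G₁.degree i : ℝ) * (Fintype.card V₂ : ℝ) := by
    intro i j
    rw [Fintype.sum_prod_type]
    have h : ∀ p q, lexW G₁ G₂ (i, j) (p, q)
        = gW G₁ i p + (if i = p then gW G₂ j q else 0) := by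
      intro p q
      by_cases hadj : G₁.Adj i p
      · have hne : i ≠ p := fun h => G₁.irrefl (h ▸ hadj)
        simp [lexW, gW, hadj, hne]
      · by_cases hip : i = p
        · subst hip; simp [lexW, gW, hadj]
        · simp [lexW, gW, hadj, hip]
    simp only [h, Finset.sum_add_distrib, Finset.sum_const, Finset.sum_ite_eq,
      Finset.mem_univ, if_true, sum_gW, nsmul_eq_mul, ← Finset.sum_mul,
      ← Finset.mul_sum]
    have h2 : ∀ x : V₁, (∑ q : V₂, if i = x then gW G₂ j q else 0)
        = if i = x then (G₂.degree j : ℝ) else 0 := by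
      intro x; split <;> simp [sum_gW]
    rw [Finset.sum_congr rfl fun x _ => h2 x, Finset.sum_ite_eq]
    simp [Finset.card_univ]
    ring
  ext ⟨i, j⟩ ⟨k, l⟩
  simp only [lapW, Matrix.of_apply, Matrix.add_apply, Matrix.kroneckerMap_apply,
    Matrix.sub_apply, Matrix.smul_apply, smul_eq_mul, degMat]
  by_cases hik : i = k
  · subst hik
    by_cases hjl : j = l
    · subst hjl
      rw [if_pos rfl, key]
      simp [Matrix.one_apply, Matrix.diagonal_apply, sum_gW]
    · have hne : (i, j) ≠ (i, l) := by simp [hjl]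
      rw [if_neg hne]
      have hadj : ¬ G₁.Adj i i := G₁.irrefl
      simp [lexW, gW, Matrix.one_apply, Matrix.diagonal_apply, hjl, hadj, SimpleGraph.degree, SimpleGraph.neighborFinset_eq_filter, Finset.sum_boole]
  · have hne : (i, j) ≠ (k, l) := by simp [hik]
    rw [if_neg hne]
    simp [lexW, gW, Matrix.one_apply, Matrix.diagonal_apply, hik, SimpleGraph.degree, SimpleGraph.neighborFinset_eq_filter, Finset.sum_boole]
end

section
/- Let G = (V,E) be an unweighted simple graph on n vertices, let x ∈ {−1,1}ⁿ be a vector attaining the maximum cut of G, let Y be a diagonal n×n matrix such that S̄ := Y − (1/4)L_G is positive semidefinite and xᵀS̄x = 0 (i.e. (x xᵀ, S̄) is an optimal primal–dual pair for the Max-Cut SDP). Then for every vertex i, Y_{ii} = δᵢ/2, where δᵢ = |{ j : ij ∈ E and xᵢ ≠ xⱼ }| is the number of edges incident to i crossing the cut induced by x; moreover δᵢ ≥ deg_G(i)/2. -/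
open Matrix Finset

/-- The number of edges incident to `i` crossing the cut induced by `x`. -/
noncomputable def crossDeg {V : Type*} [Fintype V] (G : SimpleGraph V)
    [DecidableRel G.Adj] (x : V → ℝ) (i : V) : ℕ :=
  ((G.neighborFinset i).filter fun j => x i ≠ x j).card

section Aux
variable {V : Type*} [Fintype V] [DecidableEq V] (G : SimpleGraph V) [DecidableRel G.Adj]

lemma lap_diag (i : V) : lapW (gW G) i i = (G.degree i : ℝ) := by
  simp only [lapW, of_apply, if_pos rfl, gW]
  rw [← SimpleGraph.card_neighborFinset_eq_degree, Finset.sum_boole]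
  simp [SimpleGraph.neighborFinset, SimpleGraph.neighborSet, Set.toFinset_setOf]
  exact congrArg Finset.card (by ext j; simp; exact (SimpleGraph.mem_neighborFinset G i j).symm)

lemma lap_mulVec (x : V → ℝ) (i : V) :
    ((lapW (gW G)) *ᵥ x) i = ∑ j ∈ G.neighborFinset i, (x i - x j) := by
  classical
  rw [mulVec, dotProduct]
  have key : ∀ j, lapW (gW G) i j * x j =
      (if i = j then (G.degree i : ℝ) * x i else 0)
      - (if G.Adj i j then x j else 0) := by
    intro j
    by_cases h : i = j
    · subst h
      simp [← lap_diag G i, G.irrefl]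
    · simp only [lapW, of_apply, if_neg h, gW]
      split <;> simp
  rw [Finset.sum_congr rfl fun j _ => key j, Finset.sum_sub_distrib,
    Finset.sum_ite_eq, if_pos (Finset.mem_univ i)]
  have h2 : (∑ j : V, if G.Adj i j then x j else 0) = ∑ j ∈ G.neighborFinset i, x j := by
    rw [← Finset.sum_filter]
    congr 1
    ext j; simp [SimpleGraph.mem_neighborFinset]
  rw [h2, Finset.sum_sub_distrib, Finset.sum_const,
    SimpleGraph.card_neighborFinset_eq_degree, nsmul_eq_mul]

end Aux

/-- **Diagonal dual certificates of max cuts.**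
Let `G` be an unweighted simple graph, `x` a `±1` vector attaining the maximum cut of `G`,
and `Y = diagonal d` a diagonal matrix such that `S̄ = Y − (1/4) L_G` is positive
semidefinite and `xᵀ S̄ x = 0` (so `(x xᵀ, S̄)` is an optimal primal–dual pair for the
Max-Cut SDP). Then `Y_{ii} = δᵢ / 2`, where `δᵢ` is the number of edges incident to `i`
crossing the cut, and moreover `δᵢ ≥ deg_G(i) / 2`. -/
theorem diagonal_dual_certificate {V : Type*} [Fintype V] [DecidableEq V]
    (G : SimpleGraph V) [DecidableRel G.Adj]
    (x : V → ℝ) (hx : ∀ v, x v = 1 ∨ x v = -1)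
    (hmax : (1 / 4) * (x ⬝ᵥ (lapW (gW G)).mulVec x) = maxCutVal (gW G))
    (d : V → ℝ)
    (hpsd : (Matrix.diagonal d - (1 / 4 : ℝ) • lapW (gW G)).PosSemidef)
    (hcs : x ⬝ᵥ (Matrix.diagonal d - (1 / 4 : ℝ) • lapW (gW G)).mulVec x = 0) :
    ∀ i, d i = (crossDeg G x i : ℝ) / 2 ∧
      (G.degree i : ℝ) / 2 ≤ (crossDeg G x i : ℝ) := by
    classical
  have hsq : ∀ v, x v * x v = 1 := by
    intro v; rcases hx v with h | h <;> rw [h] <;> ring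
  have hSx : (Matrix.diagonal d - (1 / 4 : ℝ) • lapW (gW G)) *ᵥ x = 0 := by
    rw [← hpsd.dotProduct_mulVec_zero_iff]
    simpa using hcs
  intro i
  have h0 := congrFun hSx i
  rw [sub_mulVec, smul_mulVec] at h0
  simp only [Pi.sub_apply, Pi.smul_apply, mulVec_diagonal, smul_eq_mul,
    Pi.zero_apply] at h0
  rw [lap_mulVec] at h0
  have hcross : x i * ∑ j ∈ G.neighborFinset i, (x i - x j) = 2 * (crossDeg G x i : ℝ) := by
    rw [Finset.mul_sum]
    have step : ∀ j ∈ G.neighborFinset i,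
        x i * (x i - x j) = if x i ≠ x j then (2 : ℝ) else 0 := by
      intro j _
      by_cases h : x i = x j
      · simp [h]
      · have hxj : x j = -x i := by
          rcases hx i with h1 | h1 <;> rcases hx j with h2 | h2 <;>
            simp_all <;> linarith
        rw [if_pos h, hxj]
        nlinarith [hsq i]
    rw [Finset.sum_congr rfl step, Finset.sum_ite, Finset.sum_const,
      Finset.sum_const_zero, add_zero, nsmul_eq_mul, crossDeg]
    ring
  have h1 : d i = (crossDeg G x i : ℝ) / 2 := by
    have e : d i * (x i * x i) = (crossDeg G x i : ℝ) / 2 := by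
      linear_combination x i * h0 + (1 / 4) * hcross
    rwa [hsq i, mul_one] at e
  refine ⟨h1, ?_⟩
  have hd := hpsd.dotProduct_mulVec_nonneg (Pi.single i 1)
  simp only [star_trivial] at hd
  have hdiag : (Matrix.diagonal d - (1 / 4 : ℝ) • lapW (gW G)) i i
      = d i - (1 / 4) * (G.degree i : ℝ) := by
    simp [lap_diag, Matrix.diagonal_apply_eq]
  have hnn : (0 : ℝ) ≤ d i - (1 / 4) * (G.degree i : ℝ) := by
    rw [← hdiag]
    simpa [mulVec, dotProduct, Pi.single_apply] using hd
  rw [h1] at hnn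
  linarith
end

section
/- Let n ≥ 3 and let m ∈ ℝⁿ with all entries positive be non-dominating, i.e. mⱼ < Σ_{k≠j} m_k for every j, and set M = Σᵢ mᵢ. For each i define uⁱ ∈ ℝⁿ by uⁱⱼ = 1 for j ≠ i and uⁱᵢ = −(M − mᵢ)/mᵢ. Then there exist real numbers d′₁,…,d′ₙ > 0 such that Σᵢ d′ᵢ · (uⁱ ∘ uⁱ) equals the all-ones vector, where uⁱ ∘ uⁱ denotes the entrywise square of uⁱ. -/
open Finset

/-- For a positive weight vector `m` with total mass `M = ∑ m k`, the vector `uⁱ` has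
`j`-th entry `1` for `j ≠ i`, and `i`-th entry `−(M − mᵢ)/mᵢ`. -/
noncomputable def uvec {n : ℕ} (m : Fin n → ℝ) (i : Fin n) : Fin n → ℝ :=
  fun j => if j = i then -(((∑ k, m k) - m i) / m i) else 1

/-- **Positive combination of the squared vectors `uⁱ` giving the all-ones vector.**
Let `n ≥ 3` and let `m ∈ ℝⁿ` be positive and non-dominating
(`mⱼ < ∑_{k ≠ j} m_k` for every `j`). Then there are positive reals `d′₁, …, d′ₙ`
with `∑ᵢ d′ᵢ (uⁱ ∘ uⁱ) = 1` entrywise, where `uⁱ ∘ uⁱ` is the entrywise square. -/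
theorem exists_pos_combination_uvec_sq {n : ℕ} (hn : 3 ≤ n) (m : Fin n → ℝ)
    (hpos : ∀ i, 0 < m i)
    (hnd : ∀ j, m j < ∑ k ∈ Finset.univ.erase j, m k) :
    ∃ d : Fin n → ℝ, (∀ i, 0 < d i) ∧
      ∀ j, ∑ i, d i * (uvec m i j) ^ 2 = 1 := by
  have hne : Nonempty (Fin n) := ⟨⟨0, by omega⟩⟩
  set M : ℝ := ∑ k, m k with hM
  have hc : ∀ j, 1 < (M - m j) / m j := by
    intro j
    rw [lt_div_iff₀ (hpos j), one_mul]
    have hsum : m j + ∑ k ∈ Finset.univ.erase j, m k = M := by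
      rw [hM, Finset.add_sum_erase _ _ (Finset.mem_univ j)]
    have := hnd j
    linarith
  set e : Fin n → ℝ := fun j => ((M - m j) / m j) ^ 2 - 1 with he
  have hepos : ∀ j, 0 < e j := by
    intro j
    have := hc j
    simp only [he]
    nlinarith
  set T : ℝ := ∑ j, 1 / e j with hT
  have hTpos : 0 < T :=
    Finset.sum_pos (fun j _ => one_div_pos.mpr (hepos j)) Finset.univ_nonempty
  refine ⟨fun j => 1 / ((1 + T) * e j), fun j => ?_, ?_⟩
  · have := hepos j
    positivity
  · intro j
    have hsq : ∀ i, (uvec m i j) ^ 2 = if j = i then ((M - m i) / m i) ^ 2 else 1 := by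
      intro i
      by_cases h : j = i <;> simp [uvec, h, ← hM] <;> ring
    have hsplit :
        ∑ i, (1 / ((1 + T) * e i)) * (uvec m i j) ^ 2
          = (1 / ((1 + T) * e j)) * ((M - m j) / m j) ^ 2
            + ∑ i ∈ Finset.univ.erase j, (1 / ((1 + T) * e i)) := by
      rw [← Finset.add_sum_erase _ _ (Finset.mem_univ j)]
      congr 1
      · rw [hsq j, if_pos rfl]
      · refine Finset.sum_congr rfl fun i hi => ?_
        have hij : j ≠ i := Ne.symm (Finset.ne_of_mem_erase hi)
        rw [hsq i, if_neg hij, mul_one]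
    rw [hsplit]
    have hsum_erase :
        ∑ i ∈ Finset.univ.erase j, (1 / ((1 + T) * e i))
          = (∑ i, 1 / ((1 + T) * e i)) - 1 / ((1 + T) * e j) := by
      rw [eq_sub_iff_add_eq, Finset.sum_erase_add _ _ (Finset.mem_univ j)]
    rw [hsum_erase]
    have hS : ∑ i, 1 / ((1 + T) * e i) = T / (1 + T) := by
      rw [hT, Finset.sum_div]
      refine Finset.sum_congr rfl fun i _ => ?_
      have h1 : e i ≠ 0 := ne_of_gt (hepos i)
      have h2 : (1 + T) ≠ 0 := by positivity
      field_simp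
    rw [hS]
    have h1 : e j ≠ 0 := ne_of_gt (hepos j)
    have h2 : (1 + T) ≠ 0 := by positivity
    have hcj : ((M - m j) / m j) ^ 2 = e j + 1 := by simp [he]
    rw [hcj]
    field_simp
    ring
end
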